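/- arXiv:1906.04126 — 9 statements merged into one kernel-verified Lean document; each statement's English description precedes it below -/
import Mathlib

section
/- For any sequence of unit vectors v_1,...,v_n in a real inner product space H, there exists a unit vector v in H such that |⟨v_k, v⟩| ≥ sin(π/(2n)) for all k = 1,...,n. -/
open Real RealInnerProductSpace Polynomial

noncomputable section

set_option maxHeartbeats 1000000

namespace ZoneAux

/-- The product of `n` factors `c i * cos t + b i * sin t`. -/
def tp {n : ℕ} (c b : Fin n → ℝ) (t : ℝ) : ℝ :=
  ∏ i, (c i * Real.cos t + b i * Real.sin t)

lemma tp_continuous {n : ℕ} (c b : Fin n → ℝ) : Continuous (tp c b) := by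
  unfold tp
  exact continuous_finset_prod _ fun i _ => by fun_prop

lemma tp_zero {n : ℕ} (c b : Fin n → ℝ) : tp c b 0 = ∏ i, c i := by
  simp [tp]

lemma tp_neg {n : ℕ} (c b : Fin n → ℝ) (t : ℝ) :
    tp c (fun i => -(b i)) t = tp c b (-t) := by
  unfold tp
  refine Finset.prod_congr rfl fun i _ => ?_
  rw [Real.cos_neg, Real.sin_neg]
  ring

lemma tp_add_two_pi {n : ℕ} (c b : Fin n → ℝ) (t : ℝ) :
    tp c b (t + 2*π) = tp c b t := by
  unfold tp
  refine Finset.prod_congr rfl fun i _ => ?_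
  rw [Real.cos_add_two_pi, Real.sin_add_two_pi]

/-- single factor polynomial -/
def fpoly (c b : ℝ) : Polynomial ℂ :=
  Polynomial.C (((c : ℂ) - b*Complex.I)/2) * X^2 + Polynomial.C (((c : ℂ) + b*Complex.I)/2)

lemma fpoly_natDegree_le (c b : ℝ) : (fpoly c b).natDegree ≤ 2 := by
  unfold fpoly
  refine le_trans (natDegree_add_le _ _) (max_le ?_ ?_)
  · exact le_trans (natDegree_C_mul_le _ _) (by simp)
  · simp

lemma fpoly_eval (c b t : ℝ) :
    Complex.exp (-(t*Complex.I)) * (fpoly c b).eval (Complex.exp (t*Complex.I))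
      = ((c * Real.cos t + b * Real.sin t : ℝ) : ℂ) := by
  have h2 : Complex.exp (-(t*Complex.I)) * Complex.exp (t*Complex.I)^2
      = Complex.exp (t*Complex.I) := by
    rw [sq, ← Complex.exp_add, ← Complex.exp_add]
    ring_nf
  have he : Complex.exp ((t:ℂ)*Complex.I)
      = Complex.cos (t:ℂ) + Complex.sin (t:ℂ) * Complex.I := by rw [Complex.exp_mul_I]
  have hen : Complex.exp (-((t:ℂ)*Complex.I))
      = Complex.cos (t:ℂ) - Complex.sin (t:ℂ) * Complex.I := by
    have harg : -((t:ℂ)*Complex.I) = ((-t : ℝ) : ℂ) * Complex.I := by push_cast; ring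
    rw [harg, Complex.exp_mul_I, Complex.ofReal_neg, Complex.cos_neg, Complex.sin_neg]
    ring
  unfold fpoly
  simp only [eval_add, eval_mul, eval_C, eval_pow, eval_X]
  push_cast
  linear_combination (((c : ℂ) - b*Complex.I)/2) * h2
    + (((c : ℂ) - b*Complex.I)/2) * he + (((c : ℂ) + b*Complex.I)/2) * hen
    + (-(b:ℂ) * Complex.sin (t:ℂ)) * Complex.I_sq

/-- product polynomial -/
def ppoly {n : ℕ} (c b : Fin n → ℝ) : Polynomial ℂ := ∏ i, fpoly (c i) (b i)

lemma ppoly_natDegree_le {n : ℕ} (c b : Fin n → ℝ) : (ppoly c b).natDegree ≤ 2*n := by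
  unfold ppoly
  refine le_trans (natDegree_prod_le _ _) ?_
  calc ∑ i : Fin n, (fpoly (c i) (b i)).natDegree ≤ ∑ _i : Fin n, 2 :=
        Finset.sum_le_sum fun i _ => fpoly_natDegree_le _ _
    _ = 2*n := by simp [mul_comm]

lemma ppoly_eval {n : ℕ} (c b : Fin n → ℝ) (t : ℝ) :
    Complex.exp (-((n:ℂ)*(t*Complex.I))) * (ppoly c b).eval (Complex.exp (t*Complex.I))
      = ((tp c b t : ℝ) : ℂ) := by
  have h1 : Complex.exp (-((n:ℂ)*(t*Complex.I))) = (Complex.exp (-(t*Complex.I)))^n := by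
    rw [← Complex.exp_nat_mul]
    ring_nf
  rw [h1]
  unfold ppoly
  rw [eval_prod]
  have hpow : (Complex.exp (-((t:ℂ)*Complex.I)))^n
      = ∏ _i : Fin n, Complex.exp (-((t:ℂ)*Complex.I)) := by
    rw [Finset.prod_const, Finset.card_univ, Fintype.card_fin]
  rw [hpow, ← Finset.prod_mul_distrib]
  unfold tp
  rw [Complex.ofReal_prod]
  exact Finset.prod_congr rfl fun i _ => fpoly_eval (c i) (b i) t

/-- Counting: distinct reals in a window of length 2π mapping to roots of a nonzero polynomial. -/
lemma card_le_natDegree {G : Polynomial ℂ} (hG : G ≠ 0) (T : Finset ℝ) (a : ℝ)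
    (hwin : ∀ t ∈ T, a < t ∧ t ≤ a + 2*π)
    (hroot : ∀ t ∈ T, G.eval (Complex.exp ((t:ℂ)*Complex.I)) = 0) :
    T.card ≤ G.natDegree := by
  have hinj : Set.InjOn (fun t : ℝ => Complex.exp ((t:ℂ)*Complex.I)) (T : Set ℝ) := by
    intro s hs t ht h
    rcases Complex.exp_eq_exp_iff_exists_int.mp h with ⟨m, hm⟩
    have hm' : (s:ℂ) = (t:ℂ) + (m:ℂ) * (2*(π:ℂ)) := by
      have hI := Complex.I_ne_zero
      have : ((s:ℂ) - (t:ℂ) - (m:ℂ)*(2*(π:ℂ))) * Complex.I = 0 := by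
        linear_combination hm
      rcases mul_eq_zero.mp this with h' | h'
      · linear_combination h'
      · exact absurd h' hI
    have hr : s = t + (m:ℝ) * (2*π) := by
      exact_mod_cast hm'
    have hTs := hwin s hs
    have hTt := hwin t ht
    have hb : |s - t| < 2*π := by
      rw [abs_lt]
      constructor <;> nlinarith [Real.pi_pos]
    have hm0 : m = 0 := by
      by_contra hm0
      have h1 : (1:ℝ) ≤ |(m:ℝ)| := by
        have : (1:ℤ) ≤ |m| := Int.one_le_abs hm0
        exact_mod_cast this
      have hst : s - t = (m:ℝ) * (2*π) := by linarith [hr]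
      have : |s - t| = |(m:ℝ)| * (2*π) := by
        rw [hst, abs_mul, abs_of_pos Real.two_pi_pos]
      nlinarith [Real.pi_pos]
    rw [hm0] at hr; simpa using hr
  calc T.card = (T.image (fun t : ℝ => Complex.exp ((t:ℂ)*Complex.I))).card :=
        (Finset.card_image_of_injOn hinj).symm
    _ ≤ G.roots.toFinset.card := by
        apply Finset.card_le_card
        intro z hz
        rcases Finset.mem_image.mp hz with ⟨t, ht, rfl⟩
        rw [Multiset.mem_toFinset, Polynomial.mem_roots hG]
        exact hroot t ht
    _ ≤ Multiset.card G.roots := G.roots.toFinset_card_le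
    _ ≤ G.natDegree := Polynomial.card_roots' G

lemma complex_sin_def (z : ℂ) :
    Complex.sin z = (Complex.exp (-z * Complex.I) - Complex.exp (z * Complex.I)) * Complex.I / 2 :=
  rfl

lemma exists_root_Ioo {f : ℝ → ℝ} (hf : Continuous f) {a b : ℝ} (hab : a < b)
    (hs : f a * f b < 0) : ∃ x ∈ Set.Ioo a b, f x = 0 := by
  rcases mul_neg_iff.mp hs with ⟨ha, hb⟩ | ⟨ha, hb⟩
  · obtain ⟨x, hx, hfx⟩ := intermediate_value_Ioo' hab.le hf.continuousOn
      (Set.mem_Ioo.mpr ⟨hb, ha⟩)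
    exact ⟨x, hx, hfx⟩
  · obtain ⟨x, hx, hfx⟩ := intermediate_value_Ioo hab.le hf.continuousOn
      (Set.mem_Ioo.mpr ⟨ha, hb⟩)
    exact ⟨x, hx, hfx⟩

lemma sin_pi_div_two_add_nat (j : ℕ) : Real.sin (π/2 + (j:ℝ)*π) = (-1)^j := by
  induction j with
  | zero => simp
  | succ k ih =>
    have harg : π/2 + ((k+1:ℕ):ℝ)*π = (π/2 + (k:ℝ)*π) + π := by push_cast; ring
    rw [harg, Real.sin_add_pi, ih, pow_succ]
    ring

/-- The core lemma: if `|tp c b|` is maximized at `0` and some factor combination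
vanishes at `t₀` with `0 < t₀ < π/(2n)`, then `tp c b 0 = 0`. -/
lemma core {n : ℕ} (hn : 1 ≤ n) (c b : Fin n → ℝ) (t₀ : ℝ)
    (ht0 : 0 < t₀) (ht1 : t₀ < π/(2*(n:ℝ)))
    (hmax : ∀ t, |tp c b t| ≤ |tp c b 0|)
    (hroot : tp c b t₀ = 0) : tp c b 0 = 0 := by
  by_contra hne
  have hπ := Real.pi_pos
  have hn0 : (0:ℝ) < (n:ℝ) := by exact_mod_cast Nat.lt_of_lt_of_le Nat.zero_lt_one hn
  have hM0 : 0 < |tp c b 0| := abs_pos.mpr hne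
  have hnt0 : 0 < (n:ℝ) * t₀ := by positivity
  have hnt1 : (n:ℝ) * t₀ < π/2 := by
    rw [lt_div_iff₀ (by positivity : (0:ℝ) < 2*(n:ℝ))] at ht1
    nlinarith
  have hs0 : 0 < Real.sin ((n:ℝ)*t₀) :=
    Real.sin_pos_of_pos_of_lt_pi hnt0 (by nlinarith)
  have hs1 : Real.sin ((n:ℝ)*t₀) < 1 := by
    have h := Real.strictMonoOn_sin (a := (n:ℝ)*t₀) (b := π/2)
      ⟨by nlinarith, hnt1.le⟩ ⟨by nlinarith, le_refl _⟩ hnt1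
    rwa [Real.sin_pi_div_two] at h
  set μ : ℝ := -(tp c b 0) / Real.sin ((n:ℝ)*t₀) with hμdef
  have hμeq : μ * Real.sin ((n:ℝ)*t₀) = -(tp c b 0) := by
    rw [hμdef]; field_simp
  have hμabs : ∀ t : ℝ, |tp c b t| < |μ| := by
    intro t
    have h1 : |μ| = |tp c b 0| / Real.sin ((n:ℝ)*t₀) := by
      rw [hμdef, abs_div, abs_neg, abs_of_pos hs0]
    have h2 : |tp c b 0| < |μ| := by
      rw [h1, lt_div_iff₀ hs0]; nlinarith
    exact lt_of_le_of_lt (hmax t) h2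
  set g : ℝ → ℝ := fun t => μ * Real.sin ((n:ℝ)*(t - t₀)) - tp c b t with hgdef
  have hgcont : Continuous g := by
    have h := tp_continuous c b
    fun_prop
  set q : ℕ → ℝ := fun j => t₀ + π/(2*(n:ℝ)) + (j:ℝ)*(π/(n:ℝ)) with hqdef
  have hpn : 0 < π/(n:ℝ) := by positivity
  have hqlt : ∀ {i j : ℕ}, i < j → q i < q j := by
    intro i j hij
    simp only [hqdef]
    have h : (i:ℝ) < (j:ℝ) := by exact_mod_cast hij
    nlinarith
  have hqle : ∀ {i j : ℕ}, i ≤ j → q i ≤ q j := by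
    intro i j hij
    rcases eq_or_lt_of_le hij with rfl | h
    · exact le_refl _
    · exact (hqlt h).le
  have hqlt2pi : ∀ m : ℕ, m < 2*n → q m < 2*π := by
    intro m hm
    have hm' : (m:ℝ) + 1 ≤ 2*(n:ℝ) := by exact_mod_cast hm
    simp only [hqdef]
    have e1 : ((m:ℝ))*(π/(n:ℝ)) ≤ (2*(n:ℝ) - 1)*(π/(n:ℝ)) := by nlinarith
    have e2 : (2*(n:ℝ) - 1)*(π/(n:ℝ)) = 2*π - π/(n:ℝ) := by field_simp
    have e3 : 2*(π/(2*(n:ℝ))) = π/(n:ℝ) := by field_simp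
    nlinarith
  have hgq : ∀ j : ℕ, g (q j) = μ * (-1)^j - tp c b (q j) := by
    intro j
    have harg : (n:ℝ) * (q j - t₀) = π/2 + (j:ℝ)*π := by
      simp only [hqdef]; field_simp; ring
    simp only [hgdef]
    rw [harg, sin_pi_div_two_add_nat j]
  have halt : ∀ j : ℕ, g (q j) * g (q (j+1)) < 0 := by
    intro j
    rw [hgq j, hgq (j+1)]
    have h1 := hμabs (q j)
    have h2 := hμabs (q (j+1))
    set a1 := tp c b (q j)
    set a2 := tp c b (q (j+1))
    set s := μ * (-1)^j with hsdef
    have hsabs : |s| = |μ| := by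
      rw [hsdef, abs_mul, abs_pow, abs_neg, abs_one, one_pow, mul_one]
    rw [← hsabs] at h1 h2
    have hg2 : μ * (-1)^(j+1) - a2 = -s - a2 := by rw [hsdef, pow_succ]; ring
    rw [hg2]
    rcases abs_lt.mp h1 with ⟨h1a, h1b⟩
    rcases abs_lt.mp h2 with ⟨h2a, h2b⟩
    rcases abs_cases s with ⟨he, hsgn⟩ | ⟨he, hsgn⟩
    · rw [he] at h1a h1b h2a h2b
      have hp := mul_pos (show (0:ℝ) < s - a1 by linarith) (show (0:ℝ) < s + a2 by linarith)
      nlinarith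
    · rw [he] at h1a h1b h2a h2b
      have hp := mul_pos (show (0:ℝ) < a1 - s by linarith) (show (0:ℝ) < -s - a2 by linarith)
      nlinarith
  have hIVT : ∀ j : ℕ, ∃ x, x ∈ Set.Ioo (q j) (q (j+1)) ∧ g x = 0 := by
    intro j
    obtain ⟨x, hx, hgx⟩ := exists_root_Ioo hgcont (hqlt (Nat.lt_succ_self j)) (halt j)
    exact ⟨x, hx, hgx⟩
  choose r hrmem hrzero using hIVT
  have h2pi : g (2*π) = 0 := by
    simp only [hgdef]
    have harg : (n:ℝ)*(2*π - t₀) = -((n:ℝ)*t₀) + (n:ℕ)*(2*π) := by push_cast; ring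
    rw [harg, Real.sin_add_nat_mul_two_pi, Real.sin_neg]
    have hp : tp c b (2*π) = tp c b 0 := by
      have h := tp_add_two_pi c b 0
      simpa using h
    rw [hp]
    linear_combination (-1 : ℝ) * hμeq
  have ht2pi : g (t₀ + 2*π) = 0 := by
    simp only [hgdef]
    have harg : (n:ℝ)*((t₀+2*π) - t₀) = 0 + (n:ℕ)*(2*π) := by push_cast; ring
    rw [harg, Real.sin_add_nat_mul_two_pi, Real.sin_zero, mul_zero]
    rw [tp_add_two_pi, hroot]
    ring
  -- the comparison polynomial
  set A : ℂ := -((μ:ℂ) * Complex.I)/2 with hAdef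
  set w : ℝ → ℂ := fun t => Complex.exp (-((n:ℂ)*((t:ℂ)*Complex.I))) with hwdef
  set z : ℝ → ℂ := fun t => Complex.exp ((t:ℂ)*Complex.I) with hzdef
  set G : Polynomial ℂ := Polynomial.C (A * Complex.exp (-((n:ℂ)*((t₀:ℂ)*Complex.I)))) * X^(2*n)
      - Polynomial.C (A * Complex.exp ((n:ℂ)*((t₀:ℂ)*Complex.I))) - ppoly c b with hGdef
  have hGeval : ∀ t : ℝ, G.eval (z t)
      = A * Complex.exp (-((n:ℂ)*((t₀:ℂ)*Complex.I))) * (z t)^(2*n)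
        - A * Complex.exp ((n:ℂ)*((t₀:ℂ)*Complex.I)) - (ppoly c b).eval (z t) := by
    intro t
    simp only [hGdef, eval_sub, eval_mul, eval_C, eval_pow, eval_X]
  have hGid : ∀ t : ℝ, ((g t : ℝ) : ℂ) = w t * G.eval (z t) := by
    intro t
    have hp : w t * (ppoly c b).eval (z t) = ((tp c b t : ℝ) : ℂ) := ppoly_eval c b t
    have e1 : w t * (z t)^(2*n) * Complex.exp (-((n:ℂ)*((t₀:ℂ)*Complex.I)))
        = Complex.exp ((n:ℂ)*((t:ℂ)-(t₀:ℂ))*Complex.I) := by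
      simp only [hwdef, hzdef]
      rw [← Complex.exp_nat_mul, ← Complex.exp_add, ← Complex.exp_add]
      congr 1
      push_cast
      ring
    have e2 : w t * Complex.exp ((n:ℂ)*((t₀:ℂ)*Complex.I))
        = Complex.exp (-((n:ℂ)*((t:ℂ)-(t₀:ℂ))*Complex.I)) := by
      simp only [hwdef]
      rw [← Complex.exp_add]
      congr 1
      ring
    have hsin : ((Real.sin ((n:ℝ)*(t - t₀)) : ℝ) : ℂ)
        = (Complex.exp (-((n:ℂ)*((t:ℂ)-(t₀:ℂ))*Complex.I))
            - Complex.exp ((n:ℂ)*((t:ℂ)-(t₀:ℂ))*Complex.I)) * Complex.I / 2 := by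
      rw [Complex.ofReal_sin, complex_sin_def]
      congr 3
      · push_cast; ring
      · push_cast; ring
    have hgt : ((g t : ℝ) : ℂ) = (μ:ℂ) * ((Real.sin ((n:ℝ)*(t - t₀)) : ℝ) : ℂ)
        - ((tp c b t : ℝ) : ℂ) := by
      simp only [hgdef]
      push_cast
      ring
    rw [hgt, hGeval t, hsin]
    linear_combination hp + (-A) * e1 + A * e2
  have hzero : ∀ t : ℝ, g t = 0 → G.eval (z t) = 0 := by
    intro t hgt
    have h := hGid t
    rw [hgt] at h
    simp only [Complex.ofReal_zero] at h
    rcases mul_eq_zero.mp h.symm with h' | h'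
    · exact absurd h' (Complex.exp_ne_zero _)
    · exact h'
  have hq0ne : g (q 0) ≠ 0 := by
    rw [hgq 0]
    intro h0
    have h1 : μ = tp c b (q 0) := by
      have : μ * (-1:ℝ)^(0:ℕ) = μ := by norm_num
      nlinarith [h0]
    have h2 := hμabs (q 0)
    rw [← h1] at h2
    exact absurd h2 (lt_irrefl _)
  have hGne : G ≠ 0 := by
    intro hG0
    apply hq0ne
    have h := hGid (q 0)
    rw [hG0] at h
    simp only [eval_zero, mul_zero] at h
    exact_mod_cast h
  have hdeg : G.natDegree ≤ 2*n := by
    simp only [hGdef]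
    refine le_trans (natDegree_sub_le _ _) (max_le (le_trans (natDegree_sub_le _ _)
      (max_le ?_ ?_)) ?_)
    · exact le_trans (natDegree_C_mul_le _ _) (by simp)
    · exact le_trans (le_of_eq (Polynomial.natDegree_C _)) (Nat.zero_le _)
    · exact ppoly_natDegree_le c b
  -- the (2n+1) roots
  set f : ℕ → ℝ := fun j => if j + 1 < 2*n then r j else if j + 1 = 2*n then 2*π else t₀ + 2*π
    with hfdef
  have hfroot : ∀ j : ℕ, g (f j) = 0 := by
    intro j
    by_cases h1 : j + 1 < 2*n
    · simp only [hfdef, if_pos h1]; exact hrzero j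
    · by_cases h2 : j + 1 = 2*n
      · simp only [hfdef, if_neg h1, if_pos h2]; exact h2pi
      · simp only [hfdef, if_neg h1, if_neg h2]; exact ht2pi
  have hrlow : ∀ j : ℕ, q 0 < r j := fun j => lt_of_le_of_lt (hqle (Nat.zero_le j)) (hrmem j).1
  have hrup : ∀ j : ℕ, j + 1 < 2*n → r j < 2*π :=
    fun j hj => lt_trans (hrmem j).2 (hqlt2pi (j+1) hj)
  have hq0val : q 0 = t₀ + π/(2*(n:ℝ)) := by simp [hqdef]
  have hq0pos : 0 < q 0 := by
    rw [hq0val]; positivity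
  have hq0lt : q 0 < 2*π := hqlt2pi 0 (by omega)
  have hwin : ∀ j : ℕ, q 0 < f j ∧ f j ≤ q 0 + 2*π := by
    intro j
    by_cases h1 : j + 1 < 2*n
    · simp only [hfdef, if_pos h1]
      exact ⟨hrlow j, by nlinarith [hrup j h1]⟩
    · by_cases h2 : j + 1 = 2*n
      · simp only [hfdef, if_neg h1, if_pos h2]
        exact ⟨hq0lt, by nlinarith⟩
      · simp only [hfdef, if_neg h1, if_neg h2]
        have h1n : (1:ℝ) ≤ (n:ℝ) := by exact_mod_cast hn
        have hfrac : π/(2*(n:ℝ)) ≤ π/2 := by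
          rw [div_le_div_iff₀ (by positivity) (by positivity)]
          nlinarith
        constructor
        · rw [hq0val]; nlinarith
        · rw [hq0val]; nlinarith
  have hfmono : ∀ i j : ℕ, i < j → j < 2*n+1 → f i < f j := by
    intro i j hij hjb
    by_cases hj1 : j + 1 < 2*n
    · have hi1 : i + 1 < 2*n := by omega
      simp only [hfdef, if_pos hj1, if_pos hi1]
      calc r i < q (i+1) := (hrmem i).2
        _ ≤ q j := hqle (by omega)
        _ < r j := (hrmem j).1
    · by_cases hj2 : j + 1 = 2*n
      · have hi1 : i + 1 < 2*n := by omega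
        simp only [hfdef, if_pos hi1, if_neg hj1, if_pos hj2]
        exact hrup i hi1
      · simp only [hfdef, if_neg hj1, if_neg hj2]
        by_cases hi1 : i + 1 < 2*n
        · simp only [if_pos hi1]
          have := hrup i hi1
          linarith
        · by_cases hi2 : i + 1 = 2*n
          · simp only [if_neg hi1, if_pos hi2]
            linarith
          · omega
  set T : Finset ℝ := (Finset.range (2*n+1)).image f with hTdef
  have hTcard : T.card = 2*n+1 := by
    rw [hTdef, Finset.card_image_of_injOn, Finset.card_range]
    intro i hi j hj hij
    have hi' : i < 2*n+1 := Finset.mem_range.mp (Finset.mem_coe.mp hi)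
    have hj' : j < 2*n+1 := Finset.mem_range.mp (Finset.mem_coe.mp hj)
    by_contra hne'
    rcases lt_or_gt_of_ne hne' with h | h
    · exact absurd hij (ne_of_lt (hfmono i j h hj'))
    · exact absurd hij.symm (ne_of_lt (hfmono j i h hi'))
  have hcount : T.card ≤ G.natDegree := by
    apply card_le_natDegree hGne T (q 0)
    · intro t ht
      rcases Finset.mem_image.mp ht with ⟨j, _, rfl⟩
      exact hwin j
    · intro t ht
      rcases Finset.mem_image.mp ht with ⟨j, _, rfl⟩
      exact hzero (f j) (hfroot j)
  rw [hTcard] at hcount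
  omega

lemma core_abs {n : ℕ} (hn : 1 ≤ n) (c b : Fin n → ℝ) (t₀ : ℝ)
    (ht0 : t₀ ≠ 0) (ht1 : |t₀| < π/(2*(n:ℝ)))
    (hmax : ∀ t, |tp c b t| ≤ |tp c b 0|)
    (hroot : tp c b t₀ = 0) : tp c b 0 = 0 := by
  rcases ht0.lt_or_gt with h | h
  · have h1 : tp c (fun i => -(b i)) (-t₀) = 0 := by
      rw [tp_neg]; simpa using hroot
    have h2 : ∀ t, |tp c (fun i => -(b i)) t| ≤ |tp c (fun i => -(b i)) 0| := by
      intro t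
      rw [tp_neg, tp_neg]
      simpa using hmax (-t)
    have h3 := core hn c (fun i => -(b i)) (-t₀) (by linarith)
      (by rwa [abs_of_neg h] at ht1) h2 h1
    rw [tp_neg] at h3
    simpa using h3
  · exact core hn c b t₀ h (by rwa [abs_of_pos h] at ht1) hmax hroot

end ZoneAux

open ZoneAux

theorem zone_conjecture {H : Type*} [NormedAddCommGroup H] [InnerProductSpace ℝ H]
    (n : ℕ) (hn : 1 ≤ n) (v : Fin n → H) (hv : ∀ k, ‖v k‖ = 1) :
    ∃ u : H, ‖u‖ = 1 ∧ ∀ k, |(inner ℝ (v k) u : ℝ)| ≥ Real.sin (π / (2 * n)) := by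
  classical
  have hπ := Real.pi_pos
  have h1n : (1:ℝ) ≤ (n:ℝ) := by exact_mod_cast hn
  set E := Submodule.span ℝ (Set.range v) with hE
  haveI : FiniteDimensional ℝ E := FiniteDimensional.span_of_finite ℝ (Set.finite_range v)
  have hvE : ∀ k, v k ∈ E := fun k => Submodule.subset_span (Set.mem_range_self k)
  set k0 : Fin n := ⟨0, hn⟩ with hk0
  -- the sphere in E is nonempty and compact; F is continuous
  set F : E → ℝ := fun x => ∏ i, (inner ℝ (v i) ((x : H)) : ℝ)^2 with hF
  have hFc : Continuous F := by
    apply continuous_finset_prod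
    intro i _
    exact (Continuous.inner continuous_const continuous_subtype_val).pow 2
  have hsph : (Metric.sphere (0:E) 1).Nonempty := by
    refine ⟨⟨v k0, hvE k0⟩, ?_⟩
    rw [mem_sphere_zero_iff_norm]
    exact hv k0
  obtain ⟨xs, hxs, hxmax'⟩ :=
    (isCompact_sphere (0:E) 1).exists_isMaxOn hsph hFc.continuousOn
  have hxmax : ∀ y ∈ Metric.sphere (0:E) 1, F y ≤ F xs := hxmax'
  have hxnorm : ‖(xs : H)‖ = 1 := mem_sphere_zero_iff_norm.mp hxs
  -- a point where no inner product vanishes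
  have hstep : ∀ S : Finset (Fin n), ∃ y : H, y ∈ E ∧ ∀ k ∈ S, (inner ℝ (v k) y : ℝ) ≠ 0 := by
    intro S
    induction S using Finset.induction_on with
    | empty => exact ⟨0, E.zero_mem, by simp⟩
    | @insert j S hjS ih =>
      obtain ⟨y, hyE, hyS⟩ := ih
      obtain ⟨ε, hε⟩ := Infinite.exists_notMem_finset
        ((insert j S).image (fun k => -(inner ℝ (v k) y : ℝ)/(inner ℝ (v k) (v j) : ℝ)))
      refine ⟨y + ε • v j, E.add_mem hyE (E.smul_mem _ (hvE j)), ?_⟩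
      intro k hk
      rw [inner_add_right, real_inner_smul_right]
      intro hzero
      by_cases hkj : (inner ℝ (v k) (v j) : ℝ) = 0
      · rw [hkj, mul_zero, add_zero] at hzero
        rcases Finset.mem_insert.mp hk with rfl | hkS
        · rw [real_inner_self_eq_norm_sq, hv k] at hkj
          norm_num at hkj
        · exact hyS k hkS hzero
      · apply hε
        rw [Finset.mem_image]
        refine ⟨k, hk, ?_⟩
        rw [div_eq_iff hkj]
        linarith
  obtain ⟨y, hyE, hyall⟩ := hstep Finset.univ
  have hyall' : ∀ k, (inner ℝ (v k) y : ℝ) ≠ 0 := fun k => hyall k (Finset.mem_univ k)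
  have hy0 : y ≠ 0 := by
    intro h0
    apply hyall' k0
    rw [h0, inner_zero_right]
  -- positivity of the maximum
  have hFpos : 0 < F xs := by
    have hu0 : (‖y‖⁻¹ • y) ∈ E := E.smul_mem _ hyE
    have hu0n : ‖(⟨‖y‖⁻¹ • y, hu0⟩ : E)‖ = 1 := norm_smul_inv_norm hy0
    have hmem : (⟨‖y‖⁻¹ • y, hu0⟩ : E) ∈ Metric.sphere (0:E) 1 :=
      mem_sphere_zero_iff_norm.mpr hu0n
    refine lt_of_lt_of_le ?_ (hxmax _ hmem)
    rw [hF]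
    apply Finset.prod_pos
    intro i _
    have : (inner ℝ (v i) (‖y‖⁻¹ • y) : ℝ) ≠ 0 := by
      rw [real_inner_smul_right]
      exact mul_ne_zero (inv_ne_zero (norm_ne_zero_iff.mpr hy0)) (hyall' i)
    exact lt_of_le_of_ne (sq_nonneg _) (Ne.symm (pow_ne_zero 2 this))
  have hcne : ∀ i, (inner ℝ (v i) ((xs : H)) : ℝ) ≠ 0 := by
    intro i hi
    have hsq0 : (inner ℝ (v i) ((xs : H)) : ℝ)^2 = 0 := by rw [hi]; norm_num
    have hz : F xs = 0 := Finset.prod_eq_zero (Finset.mem_univ i) hsq0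
    rw [hz] at hFpos
    exact lt_irrefl _ hFpos
  refine ⟨(xs : H), hxnorm, ?_⟩
  intro k
  by_contra hcon
  push_neg at hcon
  -- notation
  set ck : ℝ := (inner ℝ (v k) ((xs : H)) : ℝ) with hck
  have hsin1 : Real.sin (π / (2*(n:ℝ))) ≤ 1 := Real.sin_le_one _
  have hckabs : |ck| < 1 := lt_of_lt_of_le hcon hsin1
  have hck1 : ck^2 < 1 := by nlinarith [sq_abs ck, abs_nonneg ck]
  set r : ℝ := Real.sqrt (1 - ck^2) with hrdef
  have hr0 : 0 < r := Real.sqrt_pos.mpr (by nlinarith)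
  have hr2 : r^2 = 1 - ck^2 := Real.sq_sqrt (by nlinarith)
  have hvkvk : (inner ℝ (v k) (v k) : ℝ) = 1 := by
    rw [real_inner_self_eq_norm_sq, hv k]; norm_num
  have hxx : (inner ℝ ((xs:H)) ((xs:H)) : ℝ) = 1 := by
    rw [real_inner_self_eq_norm_sq, hxnorm]; norm_num
  set wH : H := r⁻¹ • (v k - ck • (xs : H)) with hwHdef
  have hwE : wH ∈ E := E.smul_mem _ (E.sub_mem (hvE k) (E.smul_mem _ xs.2))
  have hbk : (inner ℝ (v k) wH : ℝ) = r := by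
    rw [hwHdef, real_inner_smul_right, inner_sub_right, real_inner_smul_right]
    rw [hvkvk, ← hck]
    have : 1 - ck * ck = r^2 := by nlinarith
    rw [this]
    field_simp
  have hxw : (inner ℝ ((xs:H)) wH : ℝ) = 0 := by
    rw [hwHdef, real_inner_smul_right, inner_sub_right, real_inner_smul_right]
    rw [hxx, real_inner_comm, ← hck]
    ring
  have hwnorm : ‖wH‖ = 1 := by
    have h1 : ‖v k - ck • (xs:H)‖^2 = r^2 := by
      rw [norm_sub_sq_real, real_inner_smul_right, norm_smul]
      rw [hv k, hxnorm, ← hck, Real.norm_eq_abs]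
      nlinarith [sq_abs ck, hr2]
    have h2 : ‖v k - ck • (xs:H)‖ = r := by
      nlinarith [norm_nonneg (v k - ck • (xs:H))]
    rw [hwHdef, norm_smul, h2, Real.norm_eq_abs]
    rw [abs_of_pos (inv_pos.mpr hr0)]
    field_simp
  set cf : Fin n → ℝ := fun i => (inner ℝ (v i) ((xs : H)) : ℝ) with hcf
  set bf : Fin n → ℝ := fun i => (inner ℝ (v i) wH : ℝ) with hbf
  -- the circle through xs and w
  have hγ : ∀ t : ℝ, ∃ γ : E, ((γ : H) = Real.cos t • (xs:H) + Real.sin t • wH)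
      ∧ γ ∈ Metric.sphere (0:E) 1 := by
    intro t
    have hmem : Real.cos t • (xs:H) + Real.sin t • wH ∈ E :=
      E.add_mem (E.smul_mem _ xs.2) (E.smul_mem _ hwE)
    refine ⟨⟨_, hmem⟩, rfl, ?_⟩
    rw [mem_sphere_zero_iff_norm]
    show ‖Real.cos t • (xs:H) + Real.sin t • wH‖ = 1
    have hsq : ‖Real.cos t • (xs:H) + Real.sin t • wH‖^2 = 1 := by
      rw [norm_add_sq_real, norm_smul, norm_smul, real_inner_smul_left, real_inner_smul_right]
      rw [hxnorm, hwnorm, hxw]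
      simp only [mul_one, mul_zero, Real.norm_eq_abs, sq_abs]
      nlinarith [Real.sin_sq_add_cos_sq t]
    have hfac : (‖Real.cos t • (xs:H) + Real.sin t • wH‖ - 1)
        * (‖Real.cos t • (xs:H) + Real.sin t • wH‖ + 1) = 0 := by nlinarith [hsq]
    rcases mul_eq_zero.mp hfac with h | h
    · linarith
    · nlinarith [norm_nonneg (Real.cos t • (xs:H) + Real.sin t • wH)]
  have hmaxtp : ∀ t, |tp cf bf t| ≤ |tp cf bf 0| := by
    intro t
    obtain ⟨γ, hγcoe, hγmem⟩ := hγ t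
    have hFγ : F γ = (tp cf bf t)^2 := by
      rw [hF, tp, ← Finset.prod_pow]
      refine Finset.prod_congr rfl fun i _ => ?_
      rw [hγcoe, inner_add_right, real_inner_smul_right, real_inner_smul_right]
      simp only [hcf, hbf]
      ring
    have hFx : F xs = (tp cf bf 0)^2 := by
      rw [hF, tp, ← Finset.prod_pow]
      refine Finset.prod_congr rfl fun i _ => ?_
      simp [hcf]
    have hle := hxmax γ hγmem
    rw [hFγ, hFx] at hle
    nlinarith [abs_nonneg (tp cf bf t), abs_nonneg (tp cf bf 0),
      sq_abs (tp cf bf t), sq_abs (tp cf bf 0)]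
  -- the root of factor k
  set t₀ : ℝ := -Real.arcsin ck with ht₀def
  have hckle : -1 ≤ ck ∧ ck ≤ 1 := ⟨by nlinarith [abs_nonneg ck, abs_le.mp hckabs.le],
    by nlinarith [abs_le.mp hckabs.le]⟩
  have ht0ne : t₀ ≠ 0 := by
    rw [ht₀def, neg_ne_zero]
    intro h0
    apply hcne k
    rw [← hck]
    rw [← Real.sin_arcsin hckle.1 hckle.2, h0, Real.sin_zero]
  have harcabs : |Real.arcsin ck| = Real.arcsin |ck| := by
    rcases le_or_gt 0 ck with h | h
    · rw [abs_of_nonneg h, abs_of_nonneg (Real.arcsin_nonneg.mpr h)]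
    · rw [abs_of_neg h, abs_of_neg (Real.arcsin_lt_zero.mpr h), ← Real.arcsin_neg]
  have ht1 : |t₀| < π/(2*(n:ℝ)) := by
    rw [ht₀def, abs_neg, harcabs]
    by_contra hge
    push_neg at hge
    have hmem1 : π/(2*(n:ℝ)) ∈ Set.Icc (-(π/2)) (π/2) := by
      have hnn : (0:ℝ) ≤ π/(2*(n:ℝ)) := by positivity
      constructor
      · nlinarith
      · rw [div_le_div_iff₀ (by positivity) (by norm_num)]
        nlinarith
    have hmem2 : Real.arcsin |ck| ∈ Set.Icc (-(π/2)) (π/2) := Real.arcsin_mem_Icc _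
    have hmono := Real.strictMonoOn_sin.monotoneOn hmem1 hmem2 hge
    rw [Real.sin_arcsin (by nlinarith [abs_nonneg ck]) hckabs.le] at hmono
    exact absurd hcon (not_lt.mpr hmono)
  have hroottp : tp cf bf t₀ = 0 := by
    apply Finset.prod_eq_zero (Finset.mem_univ k)
    have hcos : Real.cos t₀ = r := by
      rw [ht₀def, Real.cos_neg, Real.cos_arcsin]
    have hsin : Real.sin t₀ = -ck := by
      rw [ht₀def, Real.sin_neg, Real.sin_arcsin hckle.1 hckle.2]
    rw [hcos, hsin]
    have hcfk : cf k = ck := by simp only [hcf]; exact hck.symm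
    have hbfk : bf k = r := by simp only [hbf]; exact hbk
    rw [hcfk, hbfk]
    ring
  have hfinal := core_abs hn cf bf t₀ ht0ne ht1 hmaxtp hroottp
  rw [tp_zero] at hfinal
  rcases Finset.prod_eq_zero_iff.mp hfinal with ⟨i, _, hi⟩
  exact hcne i hi
end
end

section
/- For any sequence of unit vectors v_1,...,v_n in a real inner product space H, there exists a vector v in H of norm √n such that |⟨v_k, v⟩| ≥ √n · sin(π/(2n)) for all k. -/
open Real RealInnerProductSpace Polynomial

noncomputable section
namespace ZoneConj

def E (θ : ℝ) : ℂ := Complex.exp (θ * Complex.I)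

lemma E_ne_zero (θ : ℝ) : E θ ≠ 0 := Complex.exp_ne_zero _

lemma E_eq (θ : ℝ) : E θ = Complex.cos θ + Complex.sin θ * Complex.I := by
  rw [E, Complex.exp_mul_I]

lemma E_pow (θ : ℝ) (n : ℕ) :
    E θ ^ n = Complex.cos ((n : ℝ) * θ) + Complex.sin ((n : ℝ) * θ) * Complex.I := by
  rw [E, ← Complex.exp_nat_mul, ← Complex.exp_mul_I]
  congr 1
  push_cast
  ring

lemma pythC (x : ℂ) : Complex.cos x ^ 2 + Complex.sin x ^ 2 = 1 :=
  Complex.cos_sq_add_sin_sq x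

def TP (n : ℕ) (f : ℝ → ℝ) : Prop :=
  ∃ P : Polynomial ℂ, P.degree ≤ (2 * n : ℕ) ∧
    ∀ θ : ℝ, (f θ : ℂ) * E θ ^ n = P.eval (E θ)

lemma tp_linear (a b : ℝ) : TP 1 (fun θ => a * Real.cos θ + b * Real.sin θ) := by
  refine ⟨C ((a - b * Complex.I) / 2) * X ^ 2 + C ((a + b * Complex.I) / 2), ?_, ?_⟩
  · apply le_trans (degree_add_le _ _)
    apply max_le
    · exact le_trans (degree_mul_le _ _)
        (by simpa [degree_X_pow] using add_le_add degree_C_le (le_refl ((2 : WithBot ℕ))))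
    · exact le_trans degree_C_le (by norm_num)
  · intro θ
    simp only [eval_add, eval_mul, eval_C, eval_pow, eval_X, E_eq, pow_one]
    push_cast
    linear_combination ((a + b * Complex.I) / 2) * pythC (θ : ℂ) +
      (b * Complex.cos θ * Complex.sin θ + b * Complex.sin θ ^ 2 * Complex.I / 2
        - a * Complex.sin θ ^ 2 / 2) * Complex.I_sq

lemma tp_mul {m n : ℕ} {f g : ℝ → ℝ} (hf : TP m f) (hg : TP n g) :
    TP (m + n) (fun θ => f θ * g θ) := by
  obtain ⟨P, hP, hPe⟩ := hf
  obtain ⟨Q, hQ, hQe⟩ := hg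
  refine ⟨P * Q, ?_, ?_⟩
  · refine le_trans (degree_mul_le _ _) ?_
    have h2 : 2 * (m + n) = 2 * m + 2 * n := by ring
    rw [h2, Nat.cast_add]
    exact add_le_add hP hQ
  · intro θ
    rw [eval_mul, ← hPe, ← hQe]
    push_cast
    ring

lemma tp_smul {n : ℕ} {f : ℝ → ℝ} (c : ℝ) (hf : TP n f) : TP n (fun θ => c * f θ) := by
  obtain ⟨P, hP, hPe⟩ := hf
  refine ⟨C (c : ℂ) * P, le_trans (degree_mul_le _ _) ?_, fun θ => ?_⟩
  · simpa using add_le_add degree_C_le hP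
  · rw [eval_mul, eval_C, ← hPe]; push_cast; ring

lemma tp_sub {n : ℕ} {f g : ℝ → ℝ} (hf : TP n f) (hg : TP n g) :
    TP n (fun θ => f θ - g θ) := by
  obtain ⟨P, hP, hPe⟩ := hf
  obtain ⟨Q, hQ, hQe⟩ := hg
  refine ⟨P - Q, le_trans (degree_sub_le _ _) (max_le hP hQ), fun θ => ?_⟩
  rw [eval_sub, ← hPe, ← hQe]
  push_cast
  ring

lemma tp_const (c : ℝ) : TP 0 (fun _ => c) :=
  ⟨C (c : ℂ), by simpa using degree_C_le, fun θ => by simp⟩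

lemma tp_cos_n (c : ℝ) (n : ℕ) : TP n (fun θ => c * Real.cos ((n : ℝ) * θ)) := by
  refine ⟨C ((c : ℂ) / 2) * X ^ (2 * n) + C ((c : ℂ) / 2), ?_, fun θ => ?_⟩
  · apply le_trans (degree_add_le _ _)
    apply max_le
    · exact le_trans (degree_mul_le _ _)
        (by simpa [degree_X_pow] using add_le_add degree_C_le (le_refl ((2 * n : ℕ) : WithBot ℕ)))
    · exact le_trans degree_C_le (by simp)
  · simp only [eval_add, eval_mul, eval_C, eval_pow, eval_X]
    rw [mul_comm 2 n, pow_mul, E_pow]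
    push_cast
    linear_combination ((c : ℂ) / 2) * pythC ((n : ℂ) * θ) +
      (-(c : ℂ) / 2 * Complex.sin ((n : ℂ) * θ) ^ 2) * Complex.I_sq

lemma tp_sin_n (c : ℝ) (n : ℕ) : TP n (fun θ => c * Real.sin ((n : ℝ) * θ)) := by
  refine ⟨C ((c : ℂ) * Complex.I / 2) - C ((c : ℂ) * Complex.I / 2) * X ^ (2 * n), ?_, fun θ => ?_⟩
  · apply le_trans (degree_sub_le _ _)
    apply max_le
    · exact le_trans degree_C_le (by simp)
    · exact le_trans (degree_mul_le _ _)
        (by simpa [degree_X_pow] using add_le_add degree_C_le (le_refl ((2 * n : ℕ) : WithBot ℕ)))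
  · simp only [eval_sub, eval_mul, eval_C, eval_pow, eval_X]
    rw [mul_comm 2 n, pow_mul, E_pow]
    push_cast
    linear_combination ((c : ℂ) * Complex.I / 2) * pythC ((n : ℂ) * θ) +
      ((c : ℂ) * Complex.cos ((n : ℂ) * θ) * Complex.sin ((n : ℂ) * θ)
        + (c : ℂ) * Complex.sin ((n : ℂ) * θ) ^ 2 * Complex.I / 2) * Complex.I_sq

end ZoneConj

namespace ZoneConj
open Complex in
lemma hasDerivAt_E (θ : ℝ) : HasDerivAt E (Complex.I * E θ) θ := by
  have h1 : HasDerivAt (fun t : ℝ => (t : ℂ) * Complex.I) ((1 : ℝ) • Complex.I) θ := by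
    simpa using ((hasDerivAt_id θ).ofReal_comp.mul_const Complex.I)
  have h2 := h1.cexp
  have hE : E = fun t : ℝ => Complex.exp ((t : ℂ) * Complex.I) := rfl
  rw [hE]
  simpa [mul_comm] using h2

open Complex in
lemma hasDerivAt_exp_lin (c : ℂ) (θ : ℝ) :
    HasDerivAt (fun t : ℝ => Complex.exp ((t : ℂ) * c)) (c * Complex.exp ((θ : ℂ) * c)) θ := by
  have h1 : HasDerivAt (fun t : ℝ => (t : ℂ) * c) ((1 : ℝ) • c) θ := by
    simpa using ((hasDerivAt_id θ).ofReal_comp.mul_const c)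
  have := h1.cexp
  simpa [mul_comm] using this

lemma tp_deriv {n : ℕ} {f : ℝ → ℝ} (h : TP n f) :
    ∃ f' : ℝ → ℝ, (∀ θ, HasDerivAt f (f' θ) θ) ∧ TP n f' := by
  obtain ⟨P, hdeg, hid⟩ := h
  set c : ℂ := -((n : ℂ) * Complex.I) with hc
  set Q : Polynomial ℂ :=
    C Complex.I * (X * derivative P - C (n : ℂ) * P) with hQ
  set F : ℝ → ℂ := fun θ => P.eval (E θ) * Complex.exp ((θ : ℂ) * c) with hF
  set G : ℝ → ℂ := fun θ => Q.eval (E θ) * Complex.exp ((θ : ℂ) * c) with hG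
  have hEc : ∀ θ : ℝ, E θ ^ n * Complex.exp ((θ : ℂ) * c) = 1 := by
    intro θ
    rw [E, ← Complex.exp_nat_mul, ← Complex.exp_add]
    rw [show (n : ℂ) * ((θ : ℂ) * Complex.I) + (θ : ℂ) * c = 0 by rw [hc]; ring]
    exact Complex.exp_zero
  have hFeq : ∀ θ, F θ = ((f θ : ℝ) : ℂ) := by
    intro θ
    rw [hF]
    simp only
    rw [← hid θ, mul_assoc, hEc θ, mul_one]
  have hFd : ∀ θ, HasDerivAt F (G θ) θ := by
    intro θ
    have h1 : HasDerivAt (fun t : ℝ => P.eval (E t))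
        ((derivative P).eval (E θ) * (Complex.I * E θ)) θ := by
      have := (P.hasDerivAt (E θ)).scomp θ (hasDerivAt_E θ)
      rw [smul_eq_mul, mul_comm] at this
      exact this
    have h2 := (h1.mul (hasDerivAt_exp_lin c θ))
    refine h2.congr_deriv ?_
    rw [hG, hQ, hc]
    simp only [eval_mul, eval_C, eval_sub, eval_X, eval_smul]
    ring
  have hGim : ∀ θ, (G θ).im = 0 := by
    intro θ
    have him : (fun t : ℝ => (F t).im) = fun _ => (0 : ℝ) := by
      funext t; rw [hFeq t]; simp
    have hd : HasDerivAt (fun t : ℝ => (F t).im) ((G θ).im) θ :=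
      (Complex.imCLM.hasFDerivAt.comp_hasDerivAt θ (hFd θ))
    rw [him] at hd
    exact ((hasDerivAt_const θ (0 : ℝ)).unique hd).symm
  have hGreal : ∀ θ, ((G θ).re : ℂ) = G θ := by
    intro θ
    exact Complex.ext (by simp) (by simp [hGim θ])
  refine ⟨fun θ => (G θ).re, ?_, ?_⟩
  · intro θ
    have hd : HasDerivAt (fun t : ℝ => (F t).re) ((G θ).re) θ :=
      (Complex.reCLM.hasFDerivAt.comp_hasDerivAt θ (hFd θ))
    have : (fun t : ℝ => (F t).re) = f := by
      funext t; rw [hFeq t]; simp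
    rwa [this] at hd
  · refine ⟨Q, ?_, ?_⟩
    · -- degree bound
      have hPn : P.natDegree ≤ 2 * n := natDegree_le_iff_degree_le.mpr hdeg
      have h1 : (X * derivative P).natDegree ≤ 2 * n := by
        rcases Nat.eq_zero_or_pos P.natDegree with h0 | h0
        · have : derivative P = 0 := by
            rw [Polynomial.eq_C_of_natDegree_eq_zero h0]; simp
          simp [this]
        · refine le_trans natDegree_mul_le ?_
          have hd : (derivative P).natDegree ≤ P.natDegree - 1 := P.natDegree_derivative_le
          have hX : (X : Polynomial ℂ).natDegree = 1 := natDegree_X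
          omega
      have h2 : (C (n : ℂ) * P).natDegree ≤ 2 * n := by
        refine le_trans natDegree_mul_le ?_
        simpa [natDegree_C] using hPn
      have h3 : Q.natDegree ≤ 2 * n := by
        rw [hQ]
        refine le_trans natDegree_mul_le ?_
        simp only [natDegree_C, zero_add]
        exact le_trans (natDegree_sub_le _ _) (max_le h1 h2)
      exact le_trans degree_le_natDegree (by exact_mod_cast h3)
    · intro θ
      rw [hGreal θ, hG]
      simp only
      rw [mul_assoc, mul_comm (Complex.exp _) (E θ ^ n), hEc θ, mul_one]

end ZoneConj

namespace ZoneConj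

lemma E_injOn : ∀ x ∈ Set.Ioc (0 : ℝ) (2 * π), ∀ y ∈ Set.Ioc (0 : ℝ) (2 * π),
    E x = E y → x = y := by
  intro x hx y hy hxy
  rw [E, E, Complex.exp_eq_exp_iff_exists_int] at hxy
  obtain ⟨k, hk⟩ := hxy
  have hxyk : x = y + (k : ℝ) * (2 * π) := by
    have h := congrArg Complex.im hk
    simpa using h
  have hπ : 0 < π := Real.pi_pos
  have h1 : |x - y| < 2 * π := by
    rw [abs_sub_lt_iff]
    constructor <;> nlinarith [hx.1, hx.2, hy.1, hy.2]
  have hk0 : k = 0 := by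
    by_contra hk0
    have hk1 : (1 : ℝ) ≤ |(k : ℝ)| := by
      exact_mod_cast Int.one_le_abs (by exact_mod_cast hk0)
    have h2 : 2 * π ≤ |(k : ℝ) * (2 * π)| := by
      rw [abs_mul, abs_of_pos (by positivity : (0:ℝ) < 2 * π)]
      nlinarith
    have h3 : 2 * π ≤ |x - y| := by
      rw [show x - y = (k : ℝ) * (2 * π) by linarith [hxyk]]
      exact h2
    linarith
  rw [hk0] at hxyk
  push_cast at hxyk
  linarith

/-- A nonzero trig polynomial of degree ≤ n has at most 2n zeros in (0, 2π]. -/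
lemma tp_zeros {n : ℕ} {f : ℝ → ℝ} (h : TP n f) (Z : Finset ℝ)
    (hZ0 : ∀ x ∈ Z, f x = 0) (hZmem : ∀ x ∈ Z, x ∈ Set.Ioc (0 : ℝ) (2 * π))
    (hcard : 2 * n < Z.card) : ∀ θ, f θ = 0 := by
  obtain ⟨P, hdeg, hid⟩ := h
  rcases eq_or_ne P 0 with hP | hP
  · intro θ
    have := hid θ
    rw [hP] at this
    simp only [eval_zero] at this
    have hEn : E θ ^ n ≠ 0 := pow_ne_zero _ (E_ne_zero θ)
    have : (f θ : ℂ) = 0 := by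
      rcases mul_eq_zero.mp this with h | h
      · exact h
      · exact absurd h hEn
    exact_mod_cast this
  · exfalso
    have hroot : ∀ x ∈ Z, P.eval (E x) = 0 := by
      intro x hx
      rw [← hid x, hZ0 x hx]
      simp
    have hinj : Set.InjOn E Z := by
      intro x hx y hy hxy
      exact E_injOn x (hZmem x hx) y (hZmem y hy) hxy
    have himg : (Z.image E).card = Z.card := Finset.card_image_of_injOn hinj
    have hsub : Z.image E ⊆ P.roots.toFinset := by
      intro w hw
      obtain ⟨x, hx, rfl⟩ := Finset.mem_image.mp hw
      rw [Multiset.mem_toFinset, Polynomial.mem_roots']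
      exact ⟨hP, hroot x hx⟩
    have h1 : Z.card ≤ P.roots.toFinset.card := himg ▸ Finset.card_le_card hsub
    have h2 : P.roots.toFinset.card ≤ P.natDegree :=
      le_trans (Multiset.toFinset_card_le _) (P.card_roots')
    have h3 : P.natDegree ≤ 2 * n := natDegree_le_iff_degree_le.mpr hdeg
    omega

end ZoneConj

namespace ZoneConj

lemma core {n : ℕ} (hn : 1 ≤ n) (T : ℝ → ℝ)
    (hTP : TP n T) (hper : ∀ θ, T (θ + 2 * π) = T θ)
    (hpos : 0 < T 0) (hmax : ∀ θ, |T θ| ≤ T 0)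
    {z : ℝ} (hz0 : 0 < z) (hzs : z < π / (2 * n)) : 0 < T z := by
  by_contra hTzc
  push_neg at hTzc
  have hπ : 0 < π := Real.pi_pos
  have hn0 : (0:ℝ) < (n:ℝ) := by exact_mod_cast hn
  set M : ℝ := T 0 with hM
  obtain ⟨dT, hdT, hdTP⟩ := tp_deriv hTP
  set S : ℝ → ℝ := fun θ => M * Real.cos ((n:ℝ) * θ) - T θ with hSdef
  set S' : ℝ → ℝ := fun θ => (-(M * (n:ℝ))) * Real.sin ((n:ℝ) * θ) - dT θ with hS'def
  have hSd : ∀ θ, HasDerivAt S (S' θ) θ := by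
    intro θ
    have hl : HasDerivAt (fun u : ℝ => (n:ℝ) * u) ((n:ℝ) * 1) θ :=
      (hasDerivAt_id θ).const_mul _
    have h1 : HasDerivAt (fun u : ℝ => M * Real.cos ((n:ℝ) * u))
        (M * (-Real.sin ((n:ℝ)*θ) * ((n:ℝ)*1))) θ := by
      simpa [Function.comp] using
        (((Real.hasDerivAt_cos ((n:ℝ)*θ)).comp θ hl).const_mul M)
    have := h1.sub (hdT θ)
    refine this.congr_deriv ?_
    simp [hS'def]
    ring
  have hS'TP : TP n S' := tp_sub (tp_sin_n (-(M * (n:ℝ))) n) hdTP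
  have hScont : Continuous S :=
    continuous_iff_continuousAt.mpr (fun θ => (hSd θ).differentiableAt.continuousAt)
  -- the grid
  set t : ℕ → ℝ := fun k => (k : ℝ) * (π / (n:ℝ)) with htdef
  have htmono : ∀ a b : ℕ, a < b → t a < t b := by
    intro a b hab
    have : (a:ℝ) < (b:ℝ) := by exact_mod_cast hab
    have hq : 0 < π / (n:ℝ) := by positivity
    simp only [htdef]
    nlinarith
  have ht0 : t 0 = 0 := by simp [htdef]
  have ht2n : t (2*n) = 2*π := by
    simp only [htdef]
    push_cast
    field_simp
  have harg : ∀ k : ℕ, (n:ℝ) * t k = (k:ℝ) * π := by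
    intro k
    simp only [htdef]
    field_simp
  have hcosk : ∀ k : ℕ, Real.cos ((n:ℝ) * t k) = (-1:ℝ)^k := by
    intro k
    rw [harg k, show (k:ℝ) * π = (k:ℝ) * π - 0 by ring, Real.cos_nat_mul_pi_sub]
    simp
  have hsink : ∀ k : ℕ, Real.sin ((n:ℝ) * t k) = 0 := by
    intro k
    rw [harg k]
    exact Real.sin_nat_mul_pi k
  have hSt : ∀ k : ℕ, S (t k) = M * (-1:ℝ)^k - T (t k) := by
    intro k
    simp only [hSdef]
    rw [hcosk k]
  have hSeven : ∀ k : ℕ, Even k → 0 ≤ S (t k) := by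
    intro k hk
    rw [hSt k, hk.neg_one_pow]
    have := le_trans (le_abs_self (T (t k))) (hmax (t k))
    linarith
  have hSodd : ∀ k : ℕ, Odd k → S (t k) ≤ 0 := by
    intro k hk
    rw [hSt k, hk.neg_one_pow]
    have h1 := hmax (t k)
    have h2 := neg_abs_le (T (t k))
    linarith
  have hS0 : S 0 = 0 := by simp [hSdef, hM]
  have hT2π : T (2*π) = M := by
    have := hper 0
    simpa using this
  have hS2π : S (2*π) = 0 := by
    simp only [hSdef]
    rw [show (n:ℝ) * (2*π) = (n:ℝ) * (2*π) by rfl]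
    rw [Real.cos_nat_mul_two_pi, hT2π]
    ring
  have hz_lt_t1 : z < t 1 := by
    have : π / (2*(n:ℝ)) < π / (n:ℝ) := by
      apply div_lt_div_of_pos_left hπ (by positivity)
      nlinarith
    simp only [htdef]
    push_cast
    nlinarith [hzs]
  have hSz : 0 < S z := by
    have hnz : (n:ℝ) * z < π/2 := by
      have h2 : z * (2*(n:ℝ)) < π := (lt_div_iff₀ (by positivity)).mp hzs
      nlinarith
    have hcos : 0 < Real.cos ((n:ℝ)*z) :=
      Real.cos_pos_of_mem_Ioo ⟨by nlinarith, hnz⟩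
    have : 0 < M * Real.cos ((n:ℝ)*z) := mul_pos hpos hcos
    simp only [hSdef]
    linarith
  have hdT_extr : ∀ x, |T x| = M → dT x = 0 := by
    intro x hx
    rcases (abs_eq (le_of_lt hpos)).mp hx with h | h
    · have hloc : IsLocalMax T x := Filter.Eventually.of_forall
        (fun θ => by rw [h]; exact le_trans (le_abs_self _) (hmax θ))
      exact hloc.hasDerivAt_eq_zero (hdT x)
    · have hloc : IsLocalMin T x := Filter.Eventually.of_forall
        (fun θ => by
          rw [h]
          have h1 := hmax θ
          have h2 := neg_abs_le (T θ)
          linarith)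
      exact hloc.hasDerivAt_eq_zero (hdT x)
  have hS'node : ∀ k : ℕ, S (t k) = 0 → S' (t k) = 0 := by
    intro k hk
    have hT : T (t k) = M * (-1:ℝ)^k := by
      have := hSt k
      linarith [this, hk]
    have habs : |T (t k)| = M := by
      rw [hT, abs_mul, abs_of_pos hpos]
      rcases Nat.even_or_odd k with h | h
      · rw [h.neg_one_pow]; simp
      · rw [h.neg_one_pow]; simp
    have hd0 := hdT_extr _ habs
    simp only [hS'def]
    rw [hsink k, hd0]
    ring
  -- IVT helpers
  have ivt_dec : ∀ a b : ℝ, a ≤ b → 0 ≤ S a → S b ≤ 0 →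
      ∃ x, S x = 0 ∧ a ≤ x ∧ x ≤ b := by
    intro a b hab ha hb
    have h0 : (0:ℝ) ∈ Set.Icc (S b) (S a) := ⟨hb, ha⟩
    obtain ⟨x, hx, hx0⟩ := intermediate_value_Icc' hab hScont.continuousOn h0
    exact ⟨x, hx0, hx.1, hx.2⟩
  have ivt_inc : ∀ a b : ℝ, a ≤ b → S a ≤ 0 → 0 ≤ S b →
      ∃ x, S x = 0 ∧ a ≤ x ∧ x ≤ b := by
    intro a b hab ha hb
    have h0 : (0:ℝ) ∈ Set.Icc (S a) (S b) := ⟨ha, hb⟩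
    obtain ⟨x, hx, hx0⟩ := intermediate_value_Icc hab hScont.continuousOn h0
    exact ⟨x, hx0, hx.1, hx.2⟩
  have hx_ex : ∀ k : ℕ, ∃ xx : ℝ, S xx = 0 ∧
      (k = 0 → xx = 0) ∧
      (k = 1 → z ≤ xx ∧ xx ≤ t 1) ∧
      (2 ≤ k → k ≤ 2*n → t (k-1) ≤ xx ∧ xx ≤ t k) ∧
      (2*n + 1 ≤ k → xx = 2*π) := by
    intro k
    match k with
    | 0 => exact ⟨0, hS0, fun _ => rfl, by omega, by omega, by omega⟩
    | 1 =>
      obtain ⟨x, hx0, hxl, hxr⟩ := ivt_dec z (t 1) (le_of_lt hz_lt_t1)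
        (le_of_lt hSz) (hSodd 1 (by decide))
      exact ⟨x, hx0, by omega, fun _ => ⟨hxl, hxr⟩, by omega, by omega⟩
    | (m+2) =>
      by_cases hm : m + 2 ≤ 2*n
      · have hab : t (m+1) ≤ t (m+2) := le_of_lt (htmono _ _ (by omega))
        have hm21 : m + 2 - 1 = m + 1 := by omega
        rcases Nat.even_or_odd (m+2) with he | ho
        · have ho' : Odd (m+1) := by
            rcases he with ⟨j, hj⟩
            exact ⟨j-1, by omega⟩
          obtain ⟨x, hx0, hxl, hxr⟩ := ivt_inc (t (m+1)) (t (m+2)) hab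
            (hSodd _ ho') (hSeven _ he)
          refine ⟨x, hx0, by omega, by omega, fun _ _ => ?_, by omega⟩
          rw [hm21]
          exact ⟨hxl, hxr⟩
        · have he' : Even (m+1) := by
            rcases ho with ⟨j, hj⟩
            exact ⟨j, by omega⟩
          obtain ⟨x, hx0, hxl, hxr⟩ := ivt_dec (t (m+1)) (t (m+2)) hab
            (hSeven _ he') (hSodd _ ho)
          refine ⟨x, hx0, by omega, by omega, fun _ _ => ?_, by omega⟩
          rw [hm21]
          exact ⟨hxl, hxr⟩
      · exact ⟨2*π, hS2π, by omega, by omega, by omega, fun _ => rfl⟩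
  choose x hxS hx0' hx1' hxmid' hxtop' using hx_ex
  have hx0 : x 0 = 0 := hx0' 0 rfl
  have hx1l : z ≤ x 1 := (hx1' 1 rfl).1
  have hxub : ∀ k, k ≤ 2*n → x k ≤ t k := by
    intro k hk
    match k with
    | 0 => rw [hx0, ht0]
    | 1 => exact (hx1' 1 rfl).2
    | (m+2) => exact (hxmid' (m+2) (by omega) hk).2
  have hxlb : ∀ k, 1 ≤ k → k ≤ 2*n+1 → t (k-1) ≤ x k := by
    intro k h1 h2
    match k with
    | 1 =>
      have h0 : t (1-1) = 0 := by
        rw [show (1:ℕ)-1 = 0 by omega, ht0]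
      rw [h0]
      exact le_trans (le_of_lt hz0) hx1l
    | (m+2) =>
      by_cases hm : m+2 ≤ 2*n
      · exact (hxmid' (m+2) (by omega) hm).1
      · have hx2π : x (m+2) = 2*π := hxtop' (m+2) (by omega)
        have heq : m+2-1 = 2*n := by omega
        rw [heq, ht2n, hx2π]
  have hxtop : ∀ k, 2*n+1 ≤ k → x k = 2*π := hxtop'
  have hxle2π : ∀ k, x k ≤ 2*π := by
    intro k
    by_cases hk : k ≤ 2*n
    · refine le_trans (hxub k hk) ?_
      rcases Nat.lt_or_ge k (2*n) with h | h
      · exact le_of_lt (by rw [← ht2n]; exact htmono _ _ h)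
      · have : k = 2*n := by omega
        rw [this, ht2n]
    · rw [hxtop k (by omega)]
  have hxmono : ∀ k, x k ≤ x (k+1) := by
    intro k
    match k with
    | 0 =>
      rw [hx0]
      exact le_trans (le_of_lt hz0) hx1l
    | (m+1) =>
      by_cases hm : m+1 ≤ 2*n
      · refine le_trans (hxub (m+1) hm) ?_
        have := hxlb (m+2) (by omega) (by omega)
        rwa [show m+2-1 = m+1 by omega] at this
      · rw [hxtop (m+1) (by omega), hxtop (m+2) (by omega)]
  have hsep : ∀ k, k + 2 ≤ 2*n+1 → x k < x (k+2) := by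
    intro k hk
    have h1 : x k ≤ t k := hxub k (by omega)
    have h2 : t k < t (k+1) := htmono _ _ (by omega)
    have h3 : t (k+1) ≤ x (k+2) := by
      have := hxlb (k+2) (by omega) (by omega)
      rwa [show k+2-1 = k+1 by omega] at this
    linarith
  -- Rolle points
  have hy_ex : ∀ k : ℕ, ∃ yy, S' yy = 0 ∧
      ((x k < yy ∧ yy < x (k+1)) ∨ (x k = x (k+1) ∧ yy = x k)) := by
    intro k
    rcases lt_or_eq_of_le (hxmono k) with hlt | heq
    · obtain ⟨c, hc, hc0⟩ := exists_hasDerivAt_eq_zero hlt hScont.continuousOn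
        (by rw [hxS k, hxS (k+1)]) (fun u _ => hSd u)
      exact ⟨c, hc0, Or.inl ⟨hc.1, hc.2⟩⟩
    · refine ⟨x k, ?_, Or.inr ⟨heq, rfl⟩⟩
      have hnode : ∃ j : ℕ, x k = t j := by
        rcases Nat.lt_or_ge k (2*n+1) with hk | hk
        · match k with
          | 0 =>
            exfalso
            have : (0:ℝ) < x 1 := lt_of_lt_of_le hz0 hx1l
            rw [← heq, hx0] at this
            exact lt_irrefl _ this
          | (m+1) =>
            have h1 : x (m+1) ≤ t (m+1) := hxub (m+1) (by omega)
            have h2 : t (m+1) ≤ x (m+2) := by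
              have := hxlb (m+2) (by omega) (by omega)
              rwa [show m+2-1 = m+1 by omega] at this
            exact ⟨m+1, le_antisymm h1 (by rw [heq]; exact h2)⟩
        · exact ⟨2*n, by rw [hxtop k (by omega), ht2n]⟩
      obtain ⟨j, hj⟩ := hnode
      rw [hj]
      refine hS'node j ?_
      rw [← hj]
      exact hxS k
  choose y hyS' hyloc using hy_ex
  have ymono1 : ∀ k, k + 2 ≤ 2*n + 1 → y k < y (k+1) := by
    intro k hk
    rcases hyloc k with ⟨h1, h2⟩ | ⟨h1, h2⟩ <;>
      rcases hyloc (k+1) with ⟨h3, h4⟩ | ⟨h3, h4⟩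
    · exact lt_trans h2 h3
    · rw [h4]; exact h2
    · rw [h2, h1]; exact h3
    · exfalso
      have := hsep k hk
      rw [h1, h3] at this
      exact lt_irrefl _ this
  have ystrict : ∀ k, k ≤ 2*n → ∀ j, j < k → y j < y k := by
    intro k
    induction k with
    | zero => intro _ j hj; omega
    | succ m ih =>
      intro hm j hj
      have hy1 : y m < y (m+1) := ymono1 m (by omega)
      rcases Nat.lt_or_ge j m with h | h
      · exact lt_trans (ih (by omega) j h) hy1
      · have : j = m := by omega
        subst this
        exact hy1
  have ypos : ∀ k, k ≤ 2*n → 0 < y k := by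
    intro k hk
    have hy0 : 0 < y 0 := by
      rcases hyloc 0 with ⟨h1, _⟩ | ⟨h1, _⟩
      · rw [hx0] at h1; exact h1
      · exfalso
        have : (0:ℝ) < x 1 := lt_of_lt_of_le hz0 hx1l
        rw [← h1, hx0] at this
        exact lt_irrefl _ this
    rcases Nat.eq_zero_or_pos k with rfl | hk1
    · exact hy0
    · exact lt_trans hy0 (ystrict k hk 0 (by omega))
  have yle : ∀ k, k ≤ 2*n → y k ≤ 2*π := by
    intro k hk
    rcases hyloc k with ⟨_, h2⟩ | ⟨h1, h2⟩
    · exact le_trans (le_of_lt h2) (hxle2π (k+1))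
    · rw [h2]; exact hxle2π k
  -- the finset of zeros of S'
  have hfin : ∀ θ, S' θ = 0 := by
    refine tp_zeros hS'TP ((Finset.range (2*n+1)).image y) ?_ ?_ ?_
    · intro w hw
      obtain ⟨k, _, rfl⟩ := Finset.mem_image.mp hw
      exact hyS' k
    · intro w hw
      obtain ⟨k, hk, rfl⟩ := Finset.mem_image.mp hw
      have hk' : k ≤ 2*n := by
        have := Finset.mem_range.mp hk
        omega
      exact ⟨ypos k hk', yle k hk'⟩
    · have hinj : Set.InjOn y ↑(Finset.range (2*n+1)) := by
        intro a ha b hb hab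
        have ha' : a ≤ 2*n := by
          have := Finset.mem_range.mp (Finset.mem_coe.mp ha); omega
        have hb' : b ≤ 2*n := by
          have := Finset.mem_range.mp (Finset.mem_coe.mp hb); omega
        by_contra hne
        rcases Nat.lt_or_ge a b with h | h
        · exact (ne_of_lt (ystrict b hb' a h)) hab
        · have : b < a := by omega
          exact (ne_of_lt (ystrict a ha' b this)) hab.symm
      rw [Finset.card_image_of_injOn hinj, Finset.card_range]
      omega
  have hdiff : Differentiable ℝ S := fun θ => (hSd θ).differentiableAt
  have hder0 : ∀ θ, deriv S θ = 0 := by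
    intro θ
    rw [(hSd θ).deriv]
    exact hfin θ
  have hconst := is_const_of_deriv_eq_zero hdiff hder0 z 0
  rw [hS0] at hconst
  linarith [hSz]

end ZoneConj


namespace ZoneConj

lemma tp_prod {ι : Type*} (s : Finset ι) (a b : ι → ℝ) :
    TP s.card (fun θ => ∏ j ∈ s, (a j * Real.cos θ + b j * Real.sin θ)) := by
  induction s using Finset.cons_induction with
  | empty => simpa using tp_const 1
  | cons i s hi ih =>
    have h := tp_mul (tp_linear (a i) (b i)) ih
    have hc : (Finset.cons i s hi).card = 1 + s.card := by
      rw [Finset.card_cons]; omega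
    rw [hc]
    convert h using 2 with θ
    rw [Finset.prod_cons]

section Geometry

variable {H : Type*} [NormedAddCommGroup H] [InnerProductSpace ℝ H]

lemma exists_nonvanishing (n : ℕ) (hn : 1 ≤ n) (v : Fin n → H) (hv : ∀ k, ‖v k‖ = 1) :
    ∃ w : H, w ∈ Submodule.span ℝ (Set.range v) ∧
      ∀ j : Fin n, (inner ℝ (v j) w : ℝ) ≠ 0 := by
  set W := Submodule.span ℝ (Set.range v) with hW
  have key : ∀ m : ℕ, m ≤ n → ∃ w : H, w ∈ W ∧
      ∀ j : Fin n, (j : ℕ) < m → (inner ℝ (v j) w : ℝ) ≠ 0 := by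
    intro m
    induction m with
    | zero => exact fun _ => ⟨0, Submodule.zero_mem _, fun j hj => by omega⟩
    | succ m ih =>
      intro hm
      obtain ⟨w, hwW, hw⟩ := ih (by omega)
      set jm : Fin n := ⟨m, by omega⟩ with hjm
      set bad : Set ℝ :=
        ⋃ j ∈ {j : Fin n | (j : ℕ) < m + 1},
          {s : ℝ | (inner ℝ (v j) (w + s • v jm) : ℝ) = 0} with hbad
      have hfin : bad.Finite := by
        apply Set.Finite.biUnion (Set.toFinite _)
        intro j hj
        have hexp : ∀ s : ℝ, (inner ℝ (v j) (w + s • v jm) : ℝ)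
            = (inner ℝ (v j) w : ℝ) + s * (inner ℝ (v j) (v jm) : ℝ) := by
          intro s
          rw [inner_add_right, real_inner_smul_right]
        by_cases hb : (inner ℝ (v j) (v jm) : ℝ) = 0
        · rcases Nat.lt_or_ge (j : ℕ) m with hjj | hjj
          · have : {s : ℝ | (inner ℝ (v j) (w + s • v jm) : ℝ) = 0} = ∅ := by
              ext s
              simp only [Set.mem_setOf_eq, Set.mem_empty_iff_false, iff_false]
              rw [hexp s, hb]
              simpa using hw j hjj
            rw [this]; exact Set.finite_empty
          · -- j = jm, so inner ℝ (v j) (v jm) = 1 ≠ 0, contradiction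
            exfalso
            have hjeq : j = jm := by
              apply Fin.ext
              simp only [hjm]
              have := Set.mem_setOf_eq ▸ hj
              omega
            rw [hjeq] at hb
            have : (inner ℝ (v jm) (v jm) : ℝ) = 1 := by
              rw [real_inner_self_eq_norm_mul_norm, hv jm]; norm_num
            rw [this] at hb; norm_num at hb
        · have hsub : {s : ℝ | (inner ℝ (v j) (w + s • v jm) : ℝ) = 0} ⊆
              {-(inner ℝ (v j) w : ℝ) / (inner ℝ (v j) (v jm) : ℝ)} := by
            intro s hs
            simp only [Set.mem_setOf_eq] at hs
            rw [hexp s] at hs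
            simp only [Set.mem_singleton_iff]
            field_simp
            linarith
          exact Set.Finite.subset (Set.finite_singleton _) hsub
      obtain ⟨s, hs⟩ := hfin.infinite_compl.nonempty
      refine ⟨w + s • v jm, ?_, ?_⟩
      · exact Submodule.add_mem _ hwW
          (Submodule.smul_mem _ _ (Submodule.subset_span (Set.mem_range_self jm)))
      · intro j hj
        intro h0
        apply hs
        rw [hbad]
        apply Set.mem_biUnion (show j ∈ {j : Fin n | (j:ℕ) < m+1} from hj)
        exact h0
  obtain ⟨w, hwW, hw⟩ := key n le_rfl
  exact ⟨w, hwW, fun j => hw j j.isLt⟩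

end Geometry

end ZoneConj

namespace ZoneConj
section Main

variable {H : Type*} [NormedAddCommGroup H] [InnerProductSpace ℝ H]

set_option maxHeartbeats 2000000 in
theorem key_unit (n : ℕ) (hn : 1 ≤ n) (v : Fin n → H) (hv : ∀ k, ‖v k‖ = 1) :
    ∃ u : H, ‖u‖ = 1 ∧ ∀ k, |(inner ℝ (v k) u : ℝ)| ≥ Real.sin (π / (2 * n)) := by
  classical
  have hπ : 0 < π := Real.pi_pos
  have hn0 : (0:ℝ) < (n:ℝ) := by exact_mod_cast hn
  have hhalf : π/(2*(n:ℝ)) ≤ π/2 := by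
    rw [div_le_div_iff₀ (by positivity) (by norm_num)]
    have h1 : (1:ℝ) ≤ (n:ℝ) := by exact_mod_cast hn
    nlinarith
  set W : Submodule ℝ H := Submodule.span ℝ (Set.range v) with hW
  have hWfin : FiniteDimensional ℝ W := FiniteDimensional.span_of_finite ℝ (Set.finite_range v)
  set K : Set H := Subtype.val '' (Metric.sphere (0 : W) 1) with hK
  have hKcomp : IsCompact K := (isCompact_sphere (0 : W) 1).image continuous_subtype_val
  have hKmem : ∀ u : H, u ∈ K ↔ u ∈ W ∧ ‖u‖ = 1 := by
    intro u
    constructor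
    · rintro ⟨p, hp, rfl⟩
      refine ⟨p.2, ?_⟩
      rw [Metric.mem_sphere, dist_zero_right] at hp
      exact hp
    · rintro ⟨h1, h2⟩
      refine ⟨⟨u, h1⟩, ?_, rfl⟩
      rw [Metric.mem_sphere, dist_zero_right]
      exact h2
  set G : H → ℝ := fun u => ∏ j, |(inner ℝ (v j) u : ℝ)| with hG
  have hGcont : Continuous G := by
    apply continuous_finset_prod
    intro j _
    exact (continuous_const.inner continuous_id).abs
  have hvW : ∀ j, v j ∈ W := fun j => Submodule.subset_span (Set.mem_range_self j)
  have hKne : K.Nonempty := by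
    refine ⟨v ⟨0, by omega⟩, ?_⟩
    rw [hKmem]
    exact ⟨hvW _, hv _⟩
  obtain ⟨us, husK, hmaxG⟩ := hKcomp.exists_isMaxOn hKne hGcont.continuousOn
  have husW : us ∈ W := ((hKmem us).mp husK).1
  have husn : ‖us‖ = 1 := ((hKmem us).mp husK).2
  -- positivity of the max
  have hMpos : 0 < G us := by
    obtain ⟨w, hwW, hw⟩ := exists_nonvanishing n hn v hv
    have hwne : w ≠ 0 := by
      intro h0
      apply hw ⟨0, by omega⟩
      rw [h0, inner_zero_right]
    have hwn : 0 < ‖w‖ := norm_pos_iff.mpr hwne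
    set w' : H := ‖w‖⁻¹ • w with hw'
    have hw'K : w' ∈ K := by
      rw [hKmem]
      constructor
      · exact Submodule.smul_mem _ _ hwW
      · rw [norm_smul, norm_inv, norm_norm]
        field_simp
    have hGw' : 0 < G w' := by
      apply Finset.prod_pos
      intro j _
      rw [hw', real_inner_smul_right, abs_mul]
      apply mul_pos
      · rw [abs_of_pos (by positivity)]
        positivity
      · exact abs_pos.mpr (hw j)
    exact lt_of_lt_of_le hGw' (hmaxG hw'K)
  refine ⟨us, husn, ?_⟩
  intro i
  set a : ℝ := (inner ℝ (v i) us : ℝ) with ha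
  set p : H := v i - a • us with hp
  by_cases hp0 : p = 0
  · -- v i = a • us
    have hvi : v i = a • us := by
      have : v i - a • us = 0 := hp0
      rw [sub_eq_zero] at this
      exact this
    have : (1:ℝ) = |a| := by
      rw [← hv i, hvi, norm_smul, husn, mul_one, Real.norm_eq_abs]
    rw [ge_iff_le, ← this]
    exact Real.sin_le_one _
  · have hpn : 0 < ‖p‖ := norm_pos_iff.mpr hp0
    set e : H := ‖p‖⁻¹ • p with he
    have hen : ‖e‖ = 1 := by
      rw [he, norm_smul, norm_inv, norm_norm]
      field_simp
    have heW : e ∈ W := by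
      apply Submodule.smul_mem
      rw [hp]
      exact Submodule.sub_mem _ (hvW i) (Submodule.smul_mem _ _ husW)
    have hcomm : (inner ℝ us (v i) : ℝ) = a := by
      rw [real_inner_comm]
    have hue : (inner ℝ us e : ℝ) = 0 := by
      rw [he, real_inner_smul_right, hp, inner_sub_right, real_inner_smul_right]
      rw [real_inner_self_eq_norm_mul_norm, husn, hcomm]
      ring
    -- key quantities
    have hpa : ‖p‖^2 = 1 - a^2 := by
      rw [← real_inner_self_eq_norm_sq]
      rw [hp, inner_sub_left, inner_sub_right, inner_sub_right]
      rw [real_inner_smul_left, real_inner_smul_left, real_inner_smul_right,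
        real_inner_smul_right]
      rw [real_inner_self_eq_norm_mul_norm, real_inner_self_eq_norm_mul_norm, hv i, husn, hcomm]
      ring
    have ha1 : a^2 ≤ 1 := by nlinarith [sq_nonneg ‖p‖]
    have ham : -1 ≤ a ∧ a ≤ 1 := by constructor <;> nlinarith
    have hBi : (inner ℝ (v i) e : ℝ) = ‖p‖ := by
      rw [he, real_inner_smul_right, hp, inner_sub_right, real_inner_smul_right]
      rw [real_inner_self_eq_norm_mul_norm, hv i, ← ha]
      have : (1 * 1 - a * a) = ‖p‖^2 := by rw [hpa]; ring
      rw [this]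
      rw [← hp]; field_simp
    set A : Fin n → ℝ := fun j => (inner ℝ (v j) us : ℝ) with hA
    set B : Fin n → ℝ := fun j => (inner ℝ (v j) e : ℝ) with hB
    set uc : ℝ → H := fun θ => Real.cos θ • us + Real.sin θ • e with huc
    have hucK : ∀ θ, uc θ ∈ K := by
      intro θ
      rw [hKmem]
      constructor
      · exact Submodule.add_mem _ (Submodule.smul_mem _ _ husW) (Submodule.smul_mem _ _ heW)
      · have hnorm2 : ‖uc θ‖^2 = 1 := by
          rw [huc]
          rw [norm_add_sq_real]
          rw [norm_smul, norm_smul, real_inner_smul_left, real_inner_smul_right, hue]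
          rw [husn, hen, Real.norm_eq_abs, Real.norm_eq_abs]
          have h1 : |Real.cos θ|^2 = Real.cos θ^2 := sq_abs _
          have h2 : |Real.sin θ|^2 = Real.sin θ^2 := sq_abs _
          rw [mul_one, mul_one, h1, h2]
          linarith [Real.cos_sq_add_sin_sq θ]
        have h0 : 0 ≤ ‖uc θ‖ := norm_nonneg _
        have hfact : (‖uc θ‖ - 1) * (‖uc θ‖ + 1) = 0 := by nlinarith
        rcases mul_eq_zero.mp hfact with h | h
        · linarith
        · linarith
    have hinner : ∀ j θ, (inner ℝ (v j) (uc θ) : ℝ) = A j * Real.cos θ + B j * Real.sin θ := by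
      intro j θ
      rw [huc]
      simp only
      rw [inner_add_right, real_inner_smul_right, real_inner_smul_right, hA, hB]
      ring
    set R : ℝ → ℝ := fun θ => ∏ j, (A j * Real.cos θ + B j * Real.sin θ) with hR
    have habsR : ∀ θ, |R θ| = G (uc θ) := by
      intro θ
      rw [hR, hG]
      simp only
      rw [Finset.abs_prod]
      congr 1
      funext j
      rw [hinner j θ]
    have huc0 : uc 0 = us := by
      rw [huc]; simp
    have hR0 : |R 0| = G us := by rw [habsR 0, huc0]
    set ε : ℝ := if 0 ≤ R 0 then (1:ℝ) else -1 with hε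
    set T : ℝ → ℝ := fun θ => ε * R θ with hT
    have hT0 : T 0 = G us := by
      rw [hT, hε]
      simp only
      split_ifs with h
      · rw [one_mul, ← hR0, abs_of_nonneg h]
      · rw [← hR0, abs_of_neg (by linarith), neg_one_mul]
    have hTmax : ∀ θ, |T θ| ≤ T 0 := by
      intro θ
      rw [hT0, hT]
      simp only
      rw [abs_mul]
      have hε1 : |ε| = 1 := by
        rw [hε]; split_ifs <;> simp
      rw [hε1, one_mul, habsR θ]
      exact hmaxG (hucK θ)
    have hTpos : 0 < T 0 := by rw [hT0]; exact hMpos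
    have hTper : ∀ θ, T (θ + 2*π) = T θ := by
      intro θ
      rw [hT, hR]
      simp only
      congr 1
      apply Finset.prod_congr rfl
      intro j _
      rw [Real.cos_add_two_pi, Real.sin_add_two_pi]
    have hTtp : TP n T := by
      have h1 := tp_prod (Finset.univ : Finset (Fin n)) A B
      rw [Finset.card_univ, Fintype.card_fin] at h1
      exact tp_smul ε h1
    -- T is positive on (-π/(2n), π/(2n))
    have hTposin : ∀ θ : ℝ, |θ| < π/(2*(n:ℝ)) → 0 < T θ := by
      intro θ hθ
      rcases lt_trichotomy θ 0 with hneg | rfl | hposθ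
      · -- reflect
        set T' : ℝ → ℝ := fun θ => ε * ∏ j, (A j * Real.cos θ + (-B j) * Real.sin θ) with hT'
        have hT'eq : ∀ ψ, T' ψ = T (-ψ) := by
          intro ψ
          rw [hT', hT, hR]
          simp only
          congr 1
          apply Finset.prod_congr rfl
          intro j _
          rw [Real.cos_neg, Real.sin_neg]
          ring
        have hT'tp : TP n T' := by
          have h1 := tp_prod (Finset.univ : Finset (Fin n)) A (fun j => -B j)
          rw [Finset.card_univ, Fintype.card_fin] at h1
          exact tp_smul ε h1
        have hT'per : ∀ ψ, T' (ψ + 2*π) = T' ψ := by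
          intro ψ
          rw [hT'eq, hT'eq]
          have := hTper (-ψ - 2*π)
          rw [show -ψ - 2*π + 2*π = -ψ by ring] at this
          rw [show -(ψ + 2*π) = -ψ - 2*π by ring, this]
        have hT'0 : T' 0 = T 0 := by rw [hT'eq]; norm_num
        have hT'max : ∀ ψ, |T' ψ| ≤ T' 0 := by
          intro ψ; rw [hT'eq, hT'0]; exact hTmax (-ψ)
        have := core hn T' hT'tp hT'per (hT'0 ▸ hTpos) hT'max
          (show 0 < -θ by linarith) (by rw [abs_of_neg hneg] at hθ; exact hθ)
        rwa [hT'eq, neg_neg] at this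
      · exact hTpos
      · exact core hn T hTtp hTper hTpos hTmax hposθ (by rwa [abs_of_pos hposθ] at hθ)
    -- the zero of factor i
    set θ₀ : ℝ := -Real.arcsin a with hθ₀
    have hcos₀ : Real.cos θ₀ = ‖p‖ := by
      rw [hθ₀, Real.cos_neg, Real.cos_arcsin]
      rw [show 1 - a^2 = ‖p‖^2 by rw [hpa]]
      exact Real.sqrt_sq (le_of_lt hpn)
    have hsin₀ : Real.sin θ₀ = -a := by
      rw [hθ₀, Real.sin_neg, Real.sin_arcsin ham.1 ham.2]
    have hfact0 : A i * Real.cos θ₀ + B i * Real.sin θ₀ = 0 := by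
      rw [hcos₀, hsin₀, hA, hB]
      simp only
      rw [hBi, ← ha]
      ring
    have hT₀ : T θ₀ = 0 := by
      rw [hT, hR]
      simp only
      rw [Finset.prod_eq_zero (Finset.mem_univ i) hfact0]
      ring
    have hθbig : π/(2*(n:ℝ)) ≤ |θ₀| := by
      by_contra hc
      push_neg at hc
      have := hTposin θ₀ hc
      rw [hT₀] at this
      exact lt_irrefl _ this
    have habs₀ : |θ₀| = Real.arcsin |a| := by
      rw [hθ₀, abs_neg]
      rcases le_or_gt 0 a with h | h
      · rw [abs_of_nonneg h, abs_of_nonneg (Real.arcsin_nonneg.mpr h)]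
      · have h3 : Real.arcsin a ≤ 0 := by
          rw [show a = -(-a) by ring, Real.arcsin_neg]
          simp only [neg_nonpos]
          exact Real.arcsin_nonneg.mpr (by linarith)
        rw [abs_of_nonpos h3, abs_of_neg h, Real.arcsin_neg]
    rw [habs₀] at hθbig
    clear_value W K G A B uc R ε T θ₀ a p e
    have hsin_mono : Real.sin (π/(2*(n:ℝ))) ≤ |a| := by
      have h0 : (0:ℝ) ≤ π/(2*(n:ℝ)) := by positivity
      have h1 : π/(2*(n:ℝ)) ∈ Set.Icc (-(π/2)) (π/2) := by
        constructor
        · linarith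
        · exact hhalf
      have h2 : |a| ∈ Set.Icc (-1:ℝ) 1 := by
        constructor
        · linarith [abs_nonneg a]
        · exact abs_le.mpr ham
      exact (Real.le_arcsin_iff_sin_le h1 h2).mp hθbig
    rw [ge_iff_le]
    exact hsin_mono

end Main
end ZoneConj

end

theorem zone_conjecture_rescaled {H : Type*} [NormedAddCommGroup H] [InnerProductSpace ℝ H]
    (n : ℕ) (hn : 1 ≤ n) (v : Fin n → H) (hv : ∀ k, ‖v k‖ = 1) :
    ∃ u : H, ‖u‖ = Real.sqrt n ∧
      ∀ k, |(inner ℝ (v k) u : ℝ)| ≥ Real.sqrt n * Real.sin (π / (2 * n)) := by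
  obtain ⟨u0, hu0n, hu0⟩ := ZoneConj.key_unit n hn v hv
  refine ⟨Real.sqrt n • u0, ?_, ?_⟩
  · rw [norm_smul, hu0n, mul_one, Real.norm_eq_abs, abs_of_nonneg (Real.sqrt_nonneg _)]
  · intro k
    rw [real_inner_smul_right, abs_mul, abs_of_nonneg (Real.sqrt_nonneg _)]
    exact mul_le_mul_of_nonneg_left (hu0 k) (Real.sqrt_nonneg _)
end

section
/- Let v_1,...,v_n be unit vectors in a real inner product space H and let v be a vector with ‖v‖ = √n that maximizes the product ∏_{k=1}^n |⟨v_k, v⟩| over all vectors of norm √n, and suppose this maximum is positive. Then v = Σ_{k=1}^n (1/⟨v_k, v⟩) · v_k. -/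
open Real

theorem maximizer_is_inverse_eigenvector {H : Type*} [NormedAddCommGroup H]
    [InnerProductSpace ℝ H] [FiniteDimensional ℝ H]
    (n : ℕ) (hn : 1 ≤ n) (v : Fin n → H) (hv : ∀ k, ‖v k‖ = 1)
    (u : H) (hu : ‖u‖ = Real.sqrt n)
    (hmax : ∀ w : H, ‖w‖ = Real.sqrt n →
      ∏ k, |(inner ℝ (v k) w : ℝ)| ≤ ∏ k, |(inner ℝ (v k) u : ℝ)|)
    (hpos : 0 < ∏ k, |(inner ℝ (v k) u : ℝ)|) :
    u = ∑ k, ((inner ℝ (v k) u : ℝ))⁻¹ • v k := by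
  have hn0 : (0:ℝ) < n := by exact_mod_cast hn
  set a : Fin n → ℝ := fun k => inner ℝ (v k) u with ha_def
  have ha : ∀ k, a k ≠ 0 := by
    intro k hk
    have h0 : ∏ k, |(inner ℝ (v k) u : ℝ)| = 0 :=
      Finset.prod_eq_zero (Finset.mem_univ k) (by simpa [ha_def] using congrArg abs hk)
    rw [h0] at hpos; exact lt_irrefl _ hpos
  set s : H := ∑ k, (a k)⁻¹ • v k with hs_def
  set d : H := s - u with hd_def
  set b : Fin n → ℝ := fun k => inner ℝ (v k) d with hb_def
  have huu : (inner ℝ u u : ℝ) = n := by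
    rw [real_inner_self_eq_norm_sq, hu, Real.sq_sqrt hn0.le]
  have hus : (inner ℝ u s : ℝ) = n := by
    rw [hs_def, inner_sum]
    have : ∀ k : Fin n, (inner ℝ u ((a k)⁻¹ • v k) : ℝ) = 1 := by
      intro k
      rw [real_inner_smul_right, real_inner_comm]
      exact inv_mul_cancel₀ (ha k)
    simp [this]
  have hud : (inner ℝ u d : ℝ) = 0 := by
    rw [hd_def, inner_sub_right, hus, huu, sub_self]
  -- the one-variable function
  set F : ℝ → ℝ := fun t =>
    ((n:ℝ) + t^2 * ‖d‖^2)^n * ∏ k, (a k)^2 - (n:ℝ)^n * ∏ k, (a k + t * b k)^2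
    with hF_def
  have hF0 : F 0 = 0 := by simp [hF_def]
  have hFnonneg : ∀ t, 0 ≤ F t := by
    intro t
    set N : ℝ := (n:ℝ) + t^2 * ‖d‖^2 with hN_def
    have hN : 0 < N := by positivity
    have hc2 : ‖u + t • d‖^2 = N := by
      rw [norm_add_sq_real, real_inner_smul_right, hud, norm_smul, hu,
        Real.sq_sqrt hn0.le, Real.norm_eq_abs, mul_pow, sq_abs, hN_def]
      ring
    have hcpos : 0 < ‖u + t • d‖ := by
      rcases (norm_nonneg (u + t • d)).lt_or_eq with h | h
      · exact h
      · exfalso; rw [← h] at hc2; simp at hc2; nlinarith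
    set c := ‖u + t • d‖ with hc_def
    set q : ℝ := Real.sqrt n / c with hq_def
    have hq : 0 < q := div_pos (Real.sqrt_pos.mpr hn0) hcpos
    have hq2 : q^2 = n / N := by
      rw [hq_def, div_pow, Real.sq_sqrt hn0.le, hc2]
    set w : H := q • (u + t • d) with hw_def
    have hwnorm : ‖w‖ = Real.sqrt n := by
      rw [hw_def, norm_smul, Real.norm_eq_abs, abs_of_pos hq, hq_def,
        div_mul_cancel₀ _ (ne_of_gt hcpos)]
    have hinner : ∀ k, (inner ℝ (v k) w : ℝ) = q * (a k + t * b k) := by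
      intro k
      rw [hw_def, real_inner_smul_right, inner_add_right, real_inner_smul_right]
    have hm := hmax w hwnorm
    have hm' : q^n * ∏ k, |a k + t * b k| ≤ ∏ k, |a k| := by
      calc q^n * ∏ k, |a k + t * b k| = ∏ k, |q * (a k + t * b k)| := by
            rw [Finset.prod_congr rfl (fun k _ => abs_mul q _),
              Finset.prod_mul_distrib, Finset.prod_const, Finset.card_univ,
              Fintype.card_fin, abs_of_pos hq]
        _ = ∏ k, |(inner ℝ (v k) w : ℝ)| := by
            exact Finset.prod_congr rfl (fun k _ => by rw [hinner k])
        _ ≤ ∏ k, |a k| := hm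
    have hsq : (q^n * ∏ k, |a k + t * b k|)^2 ≤ (∏ k, |a k|)^2 := by
      have h1 : 0 ≤ q^n * ∏ k, |a k + t * b k| := by positivity
      exact pow_le_pow_left₀ h1 hm' 2
    have e1 : (q^n * ∏ k, |a k + t * b k|)^2 = (n/N)^n * ∏ k, (a k + t * b k)^2 := by
      rw [mul_pow, ← pow_mul, mul_comm n 2, pow_mul, hq2, ← Finset.prod_pow]
      congr 1
      exact Finset.prod_congr rfl (fun k _ => sq_abs _)
    have e2 : (∏ k, |a k|)^2 = ∏ k, (a k)^2 := by
      rw [← Finset.prod_pow]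
      exact Finset.prod_congr rfl (fun k _ => sq_abs _)
    have key : (n/N)^n * ∏ k, (a k + t * b k)^2 ≤ ∏ k, (a k)^2 := by
      rw [← e1, ← e2]; exact hsq
    have key2 := mul_le_mul_of_nonneg_left key (le_of_lt (pow_pos hN n))
    have e3 : N^n * ((n/N)^n * ∏ k, (a k + t * b k)^2)
        = (n:ℝ)^n * ∏ k, (a k + t * b k)^2 := by
      rw [← mul_assoc, ← mul_pow, mul_div_cancel₀ _ (ne_of_gt hN)]
    rw [e3] at key2
    rw [hF_def]
    dsimp only
    linarith
  -- derivative of F at 0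
  have hbase : HasDerivAt (fun t : ℝ => (n:ℝ) + t^2 * ‖d‖^2) 0 0 := by
    simpa using ((hasDerivAt_pow 2 (0:ℝ)).mul_const (‖d‖^2)).const_add (n:ℝ)
  have G1 : HasDerivAt (fun t : ℝ => ((n:ℝ) + t^2 * ‖d‖^2)^n) 0 0 := by
    simpa using hbase.fun_pow n
  have G2 : ∀ k : Fin n, HasDerivAt (fun t : ℝ => (a k + t * b k)^2) (2 * a k * b k) 0 := by
    intro k
    have hlin : HasDerivAt (fun t : ℝ => a k + t * b k) (b k) 0 := by
      simpa using ((hasDerivAt_id (0:ℝ)).mul_const (b k)).const_add (a k)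
    simpa using hlin.fun_pow 2
  have Gprod : HasDerivAt (fun t : ℝ => ∏ k, (a k + t * b k)^2)
      (∑ k, (∏ j ∈ Finset.univ.erase k, (a j)^2) * (2 * a k * b k)) 0 := by
    have := HasDerivAt.fun_finsetProd (x := (0:ℝ)) (u := Finset.univ)
      (f := fun (k : Fin n) (t : ℝ) => (a k + t * b k)^2)
      (f' := fun k => 2 * a k * b k) (fun k _ => G2 k)
    simpa [smul_eq_mul] using this
  have hF : HasDerivAt F
      (0 * (∏ k, (a k)^2) - (n:ℝ)^n *
        ∑ k, (∏ j ∈ Finset.univ.erase k, (a j)^2) * (2 * a k * b k)) 0 :=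
    (G1.mul_const _).sub (Gprod.const_mul _)
  have hmin : IsLocalMin F 0 :=
    Filter.Eventually.of_forall (fun t => by rw [hF0]; exact hFnonneg t)
  have hD := hmin.hasDerivAt_eq_zero hF
  have hS : ∑ k, (∏ j ∈ Finset.univ.erase k, (a j)^2) * (2 * a k * b k) = 0 := by
    have hnn : ((n:ℝ))^n ≠ 0 := pow_ne_zero _ (ne_of_gt hn0)
    rw [zero_mul, zero_sub, neg_eq_zero] at hD
    exact (mul_eq_zero.mp hD).resolve_left hnn
  have hprodpos : 0 < ∏ k, (a k)^2 :=
    Finset.prod_pos (fun k _ => (sq_abs (a k)) ▸ pow_pos (abs_pos.mpr (ha k)) 2)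
  have hterm : ∀ k : Fin n, (∏ j ∈ Finset.univ.erase k, (a j)^2) * (2 * a k * b k)
      = 2 * (∏ j, (a j)^2) * ((a k)⁻¹ * b k) := by
    intro k
    have h1 : (∏ j ∈ Finset.univ.erase k, (a j)^2) * (a k)^2 = ∏ j, (a j)^2 :=
      Finset.prod_erase_mul _ _ (Finset.mem_univ k)
    rw [← h1]
    field_simp
  have hT : ∑ k, (a k)⁻¹ * b k = 0 := by
    rw [Finset.sum_congr rfl (fun k _ => hterm k), ← Finset.mul_sum] at hS
    have h2 : (2:ℝ) * (∏ j, (a j)^2) ≠ 0 := by positivity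
    exact (mul_eq_zero.mp hS).resolve_left h2
  have hsd : (inner ℝ s d : ℝ) = 0 := by
    rw [hs_def, sum_inner]
    rw [Finset.sum_congr rfl (fun k _ => real_inner_smul_left (v k) d ((a k)⁻¹))]
    exact hT
  have hdd : (inner ℝ d d : ℝ) = 0 := by
    rw [hd_def, inner_sub_left, hsd]
    rw [hd_def] at hud
    linarith
  have : d = 0 := inner_self_eq_zero.mp hdd
  have hse : s = u := by
    have := sub_eq_zero.mp (hd_def ▸ this)
    exact this
  exact hse.symm
end

section
/- Let H be an n×n real symmetric positive semidefinite matrix (a Gram matrix) and let Q be an open quadrant of ℝⁿ (a set of vectors with prescribed nonzero signs in each coordinate). Then there is at most one inverse eigenvector of H in Q, i.e., at most one w ∈ Q with (Hw)_j = 1/w_j for all j. -/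
theorem inverse_eigenvector_unique_in_quadrant (n : ℕ)
    (H : Matrix (Fin n) (Fin n) ℝ) (hH : H.PosSemidef)
    (ε : Fin n → ℝ) (hε : ∀ j, ε j = 1 ∨ ε j = -1)
    (w₁ w₂ : Fin n → ℝ)
    (hw₁Q : ∀ j, 0 < ε j * w₁ j) (hw₂Q : ∀ j, 0 < ε j * w₂ j)
    (hw₁ : ∀ j, H.mulVec w₁ j = (w₁ j)⁻¹)
    (hw₂ : ∀ j, H.mulVec w₂ j = (w₂ j)⁻¹) :
    w₁ = w₂ := by
  have hpos : ∀ j, 0 < w₁ j * w₂ j := by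
    intro j
    have h1 := mul_pos (hw₁Q j) (hw₂Q j)
    have hε2 : ε j * ε j = 1 := by rcases hε j with h | h <;> simp [h]
    nlinarith
  have hne₁ : ∀ j, w₁ j ≠ 0 := fun j h => by
    have := hpos j; rw [h] at this; simp at this
  have hne₂ : ∀ j, w₂ j ≠ 0 := fun j h => by
    have := hpos j; rw [h] at this; simp at this
  have hterm : ∀ j, (w₁ j - w₂ j) * ((w₁ j)⁻¹ - (w₂ j)⁻¹)
      = -((w₁ j - w₂ j)^2) / (w₁ j * w₂ j) := by
    intro j
    have ha := hne₁ j
    have hb := hne₂ j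
    field_simp
    ring
  have hterm_nonpos : ∀ j, (w₁ j - w₂ j) * ((w₁ j)⁻¹ - (w₂ j)⁻¹) ≤ 0 := by
    intro j
    rw [hterm j]
    apply div_nonpos_of_nonpos_of_nonneg
    · nlinarith [sq_nonneg (w₁ j - w₂ j)]
    · exact (hpos j).le
  have hsum : 0 ≤ ∑ j, (w₁ j - w₂ j) * ((w₁ j)⁻¹ - (w₂ j)⁻¹) := by
    have h := hH.dotProduct_mulVec_nonneg (w₁ - w₂)
    have heq : dotProduct (star (w₁ - w₂)) (H.mulVec (w₁ - w₂))
        = ∑ j, (w₁ j - w₂ j) * ((w₁ j)⁻¹ - (w₂ j)⁻¹) := by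
      simp only [star_trivial, dotProduct, Matrix.mulVec_sub,
        Pi.sub_apply, hw₁, hw₂]
    rw [heq] at h
    exact_mod_cast h
  have hsum_zero : ∑ j, (w₁ j - w₂ j) * ((w₁ j)⁻¹ - (w₂ j)⁻¹) = 0 :=
    le_antisymm (Finset.sum_nonpos fun j _ => hterm_nonpos j) hsum
  have heach : ∀ j, (w₁ j - w₂ j) * ((w₁ j)⁻¹ - (w₂ j)⁻¹) = 0 := by
    intro j
    have := (Finset.sum_eq_zero_iff_of_nonpos
      (fun j _ => hterm_nonpos j)).mp hsum_zero j (Finset.mem_univ j)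
    exact this
  funext j
  have h := heach j
  rw [hterm j] at h
  have hab := (hpos j).ne'
  have : (w₁ j - w₂ j)^2 = 0 := by
    field_simp at h
    exact (div_eq_zero_iff.mp (neg_eq_zero.mp h)).resolve_right hab
  have := pow_eq_zero_iff (n := 2) (by norm_num) |>.mp this
  linarith [this]
end

section
/- Let H be an n×n real symmetric positive semidefinite matrix and Q a closed quadrant of ℝⁿ. There exists an inverse eigenvector of H in the interior of Q if and only if Q ∩ Ker(H) = {0}. -/
open scoped Matrix
open Finset Filter

namespace InvEigAux

noncomputable def Fq {n : ℕ} (H : Matrix (Fin n) (Fin n) ℝ) (w : Fin n → ℝ) : ℝ :=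
  (1/2) * (w ⬝ᵥ H.mulVec w) - ∑ j, Real.log (w j)

lemma F_line_hasDerivAt {n : ℕ} (H : Matrix (Fin n) (Fin n) ℝ)
    (hsymm : ∀ i j, H i j = H j i)
    (w : Fin n → ℝ) (hw : ∀ j, w j ≠ 0) (k : Fin n) :
    HasDerivAt (fun t : ℝ => Fq H (w + t • (Pi.single k 1 : Fin n → ℝ))) (H.mulVec w k - (w k)⁻¹) 0 := by
  have hv : ∀ (t : ℝ) (j : Fin n),
      H.mulVec (w + t • (Pi.single k 1 : Fin n → ℝ)) j = H.mulVec w j + t * H j k := by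
    intro t j
    simp [Matrix.mulVec_add, Matrix.mulVec_smul, Matrix.mulVec_single]
  have hq : (fun t : ℝ => Fq H (w + t • (Pi.single k 1 : Fin n → ℝ))) =
      fun t : ℝ => (1/2) * ∑ j, ((w j + t * (Pi.single k 1 : Fin n → ℝ) j) * (H.mulVec w j + t * H j k))
        - ∑ j, Real.log (w j + t * (Pi.single k 1 : Fin n → ℝ) j) := by
    funext t
    unfold Fq
    have ea : (w + t • (Pi.single k 1 : Fin n → ℝ)) ⬝ᵥ H.mulVec (w + t • (Pi.single k 1 : Fin n → ℝ))
        = ∑ j, ((w j + t * (Pi.single k 1 : Fin n → ℝ) j) * (H.mulVec w j + t * H j k)) := by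
      simp only [dotProduct]
      refine Finset.sum_congr rfl fun j _ => ?_
      rw [hv t j]
      simp
    have eb : ∀ j : Fin n, (w + t • (Pi.single k 1 : Fin n → ℝ)) j
        = w j + t * (Pi.single k 1 : Fin n → ℝ) j := by intro j; simp
    rw [ea]
    simp only [eb]
  rw [hq]
  have h1 : ∀ j : Fin n, HasDerivAt (fun t : ℝ => w j + t * (Pi.single k 1 : Fin n → ℝ) j)
      ((Pi.single k 1 : Fin n → ℝ) j) 0 := by
    intro j
    simpa using ((hasDerivAt_id (0:ℝ)).mul_const ((Pi.single k 1 : Fin n → ℝ) j)).const_add (w j)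
  have h2 : ∀ j : Fin n, HasDerivAt (fun t : ℝ => H.mulVec w j + t * H j k) (H j k) 0 := by
    intro j
    simpa using ((hasDerivAt_id (0:ℝ)).mul_const (H j k)).const_add (H.mulVec w j)
  have hsum1 : HasDerivAt
      (fun t : ℝ => ∑ j, ((w j + t * (Pi.single k 1 : Fin n → ℝ) j) * (H.mulVec w j + t * H j k)))
      (∑ j, ((Pi.single k 1 : Fin n → ℝ) j * (H.mulVec w j + 0 * H j k)
        + (w j + 0 * (Pi.single k 1 : Fin n → ℝ) j) * H j k)) 0 := by
    apply HasDerivAt.fun_sum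
    intro j _
    exact (h1 j).mul (h2 j)
  have hsum2 : HasDerivAt
      (fun t : ℝ => ∑ j, Real.log (w j + t * (Pi.single k 1 : Fin n → ℝ) j))
      (∑ j, ((Pi.single k 1 : Fin n → ℝ) j / (w j + 0 * (Pi.single k 1 : Fin n → ℝ) j))) 0 := by
    apply HasDerivAt.fun_sum
    intro j _
    exact (h1 j).log (by simpa using hw j)
  have := (hsum1.const_mul (1/2 : ℝ)).sub hsum2
  refine this.congr_deriv ?_
  have key : ∑ j, w j * H j k = H.mulVec w k := by
    simp only [Matrix.mulVec, dotProduct]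
    exact Finset.sum_congr rfl fun j _ => by rw [hsymm j k, mul_comm]
  simp only [zero_mul, add_zero, mul_zero]
  rw [Finset.sum_add_distrib]
  have e1 : ∑ j, (Pi.single k 1 : Fin n → ℝ) j * H.mulVec w j = H.mulVec w k := by
    simp [Pi.single_apply, ite_mul]
  have e2 : ∑ j, (Pi.single k 1 : Fin n → ℝ) j / w j = (w k)⁻¹ := by
    simp [Pi.single_apply, ite_div, div_eq_mul_inv]
  rw [e1, e2, key]
  ring

lemma exists_delta {n : ℕ} (hn : 0 < n) (H : Matrix (Fin n) (Fin n) ℝ) (hH : H.PosSemidef)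
    (hker : ∀ x : Fin n → ℝ, (∀ j, 0 ≤ x j) → H.mulVec x = 0 → x = 0) :
    ∃ δ : ℝ, 0 < δ ∧ ∀ w : Fin n → ℝ, (∀ j, 0 ≤ w j) → δ * ‖w‖^2 ≤ w ⬝ᵥ H.mulVec w := by
  haveI : Nonempty (Fin n) := ⟨⟨0, hn⟩⟩
  set S : Set (Fin n → ℝ) := {v | (∀ j, 0 ≤ v j) ∧ ‖v‖ = 1} with hS
  have hQcont : Continuous fun v : Fin n → ℝ => v ⬝ᵥ H.mulVec v := by
    simp only [dotProduct, Matrix.mulVec]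
    fun_prop
  have hclosed : IsClosed S := by
    have h1 : IsClosed {v : Fin n → ℝ | ∀ j, 0 ≤ v j} := by
      have he : {v : Fin n → ℝ | ∀ j, 0 ≤ v j} = ⋂ j, {v | 0 ≤ v j} := by
        ext v; simp [Set.mem_iInter]
      rw [he]
      exact isClosed_iInter fun j => isClosed_le continuous_const (continuous_apply j)
    have h2 : IsClosed {v : Fin n → ℝ | ‖v‖ = 1} := isClosed_eq continuous_norm continuous_const
    have : S = {v : Fin n → ℝ | ∀ j, 0 ≤ v j} ∩ {v : Fin n → ℝ | ‖v‖ = 1} := rfl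
    rw [this]; exact h1.inter h2
  have hScomp : IsCompact S := by
    apply (isCompact_closedBall (0 : Fin n → ℝ) 1).of_isClosed_subset hclosed
    intro v hv
    simp [Metric.mem_closedBall, dist_zero_right, hv.2]
  have hSne : S.Nonempty := by
    refine ⟨fun _ => 1, fun j => zero_le_one, ?_⟩
    exact (pi_norm_const (1:ℝ)).trans norm_one
  obtain ⟨v0, hv0S, hmin⟩ := hScomp.exists_isMinOn hSne hQcont.continuousOn
  have hv0pos : 0 < v0 ⬝ᵥ H.mulVec v0 := by
    rcases lt_or_eq_of_le (by simpa using hH.dotProduct_mulVec_nonneg v0) with h | h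
    · exact h
    · exfalso
      have h0 : H.mulVec v0 = 0 := (hH.dotProduct_mulVec_zero_iff v0).mp (by simpa using h.symm)
      have hv0eq := hker v0 hv0S.1 h0
      have hnorm1 : ‖v0‖ = 1 := hv0S.2
      rw [hv0eq] at hnorm1
      simp at hnorm1
  refine ⟨v0 ⬝ᵥ H.mulVec v0, hv0pos, ?_⟩
  intro w hw
  rcases eq_or_ne w 0 with rfl | hw0
  · simp
  · set s : ℝ := ‖w‖ with hs
    have hs0 : 0 < s := norm_pos_iff.mpr hw0
    set v : Fin n → ℝ := s⁻¹ • w with hv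
    have hvS : v ∈ S := by
      constructor
      · intro j
        exact mul_nonneg (inv_nonneg.mpr hs0.le) (hw j)
      · rw [hv, norm_smul, Real.norm_eq_abs, abs_of_pos (inv_pos.mpr hs0), ← hs]
        exact inv_mul_cancel₀ hs0.ne'
    have hwv : w = s • v := by rw [hv, smul_inv_smul₀ hs0.ne']
    have hscale : w ⬝ᵥ H.mulVec w = s^2 * (v ⬝ᵥ H.mulVec v) := by
      rw [hwv, Matrix.mulVec_smul, smul_dotProduct, dotProduct_smul]
      simp [smul_eq_mul]; ring
    rw [hscale]
    have hmin' := (isMinOn_iff.mp hmin) v hvS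
    calc (v0 ⬝ᵥ H.mulVec v0) * s^2 ≤ (v ⬝ᵥ H.mulVec v) * s^2 :=
          mul_le_mul_of_nonneg_right hmin' (sq_nonneg s)
      _ = s^2 * (v ⬝ᵥ H.mulVec v) := by ring

lemma exists_pos {n : ℕ} (hn : 0 < n) (H : Matrix (Fin n) (Fin n) ℝ) (hH : H.PosSemidef)
    (hker : ∀ x : Fin n → ℝ, (∀ j, 0 ≤ x j) → H.mulVec x = 0 → x = 0) :
    ∃ w : Fin n → ℝ, (∀ j, 0 < w j) ∧ ∀ j, H.mulVec w j = (w j)⁻¹ := by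
  haveI : Nonempty (Fin n) := ⟨⟨0, hn⟩⟩
  obtain ⟨δ, hδ, hQ⟩ := exists_delta hn H hH hker
  have hsymm : ∀ i j, H i j = H j i := by
    intro i j
    conv_lhs => rw [← hH.1]
    simp [Matrix.conjTranspose_apply]
  set c : ℝ := Fq H (fun _ => 1) with hc
  have hc0 : 0 ≤ c := by
    have hq1 : 0 ≤ (fun _ => (1:ℝ)) ⬝ᵥ H.mulVec (fun _ => 1) := by simpa using hH.dotProduct_mulVec_nonneg _
    rw [hc]; unfold Fq; simp [Real.log_one]; linarith
  set R : ℝ := max 1 (2 * (n + |c| + 1) / δ) with hR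
  have hR1 : (1:ℝ) ≤ R := le_max_left _ _
  have hR0 : (0:ℝ) < R := lt_of_lt_of_le one_pos hR1
  have hlogR : 0 ≤ Real.log R := Real.log_nonneg hR1
  set m : ℝ := Real.exp (-(c + n * Real.log R)) with hm
  have hm0 : 0 < m := Real.exp_pos _
  have hm1 : m ≤ 1 := by
    rw [hm, Real.exp_le_one_iff]
    have hn0 : (0:ℝ) ≤ n := Nat.cast_nonneg n
    nlinarith
  -- sublevel set bound
  have sub : ∀ w : Fin n → ℝ, (∀ j, 0 < w j) → Fq H w ≤ c →
      (∀ j, m ≤ w j) ∧ (∀ j, w j ≤ R) := by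
    intro w hw hFw
    have hwle : ∀ j, w j ≤ ‖w‖ := fun j =>
      le_trans (le_abs_self _) (by simpa [Real.norm_eq_abs] using norm_le_pi_norm w j)
    have hQw : δ * ‖w‖^2 ≤ w ⬝ᵥ H.mulVec w := hQ w (fun j => (hw j).le)
    have hnormR : ‖w‖ ≤ R := by
      by_contra hcon
      push_neg at hcon
      set t : ℝ := ‖w‖ with ht
      have ht1 : (1:ℝ) ≤ t := le_trans hR1 hcon.le
      have ht0 : (0:ℝ) < t := lt_of_lt_of_le one_pos ht1
      have hsumlog : ∑ j, Real.log (w j) ≤ n * t := by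
        calc ∑ j, Real.log (w j) ≤ ∑ _j : Fin n, t :=
              Finset.sum_le_sum fun j _ =>
                le_trans (Real.log_le_log (hw j) (hwle j)) (Real.log_le_self ht0.le)
          _ = n * t := by simp [Finset.sum_const, nsmul_eq_mul]
      have hFge : (1/2)*(δ*t^2) - n*t ≤ c := by
        unfold Fq at hFw
        nlinarith [hQw]
      have h2 : n + |c| + 1 ≤ (1/2)*δ*t := by
        have hlt : 2*(n + |c| + 1)/δ < t := lt_of_le_of_lt (le_max_right _ _) hcon
        have := (div_lt_iff₀ hδ).mp hlt
        nlinarith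
      nlinarith [le_abs_self c, abs_nonneg c]
    have hlow : ∀ k, m ≤ w k := by
      intro k
      have h0 : 0 ≤ w ⬝ᵥ H.mulVec w := by simpa using hH.dotProduct_mulVec_nonneg w
      have hsum_ge : -c ≤ ∑ j, Real.log (w j) := by
        unfold Fq at hFw; linarith
      have hrest : ∑ j ∈ Finset.univ.erase k, Real.log (w j) ≤ n * Real.log R := by
        calc ∑ j ∈ Finset.univ.erase k, Real.log (w j)
            ≤ ∑ _j ∈ Finset.univ.erase k, Real.log R :=
              Finset.sum_le_sum fun j _ => Real.log_le_log (hw j) ((hwle j).trans hnormR)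
          _ = ((Finset.univ.erase k).card : ℝ) * Real.log R := by
              rw [Finset.sum_const, nsmul_eq_mul]
          _ ≤ n * Real.log R := by
              apply mul_le_mul_of_nonneg_right _ hlogR
              have hcard : (Finset.univ.erase k).card ≤ n := by
                calc (Finset.univ.erase k).card ≤ (Finset.univ : Finset (Fin n)).card :=
                      Finset.card_erase_le
                  _ = n := by simp
              exact_mod_cast hcard
      have hsplit : Real.log (w k) + ∑ j ∈ Finset.univ.erase k, Real.log (w j)
          = ∑ j, Real.log (w j) := Finset.add_sum_erase _ (fun j => Real.log (w j)) (Finset.mem_univ k)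
      have hlk : -(c + n * Real.log R) ≤ Real.log (w k) := by linarith
      calc m = Real.exp (-(c + n*Real.log R)) := hm
        _ ≤ Real.exp (Real.log (w k)) := Real.exp_le_exp.mpr hlk
        _ = w k := Real.exp_log (hw k)
    exact ⟨hlow, fun j => (hwle j).trans hnormR⟩
  -- compact box
  set K : Set (Fin n → ℝ) := Set.Icc (fun _ => m/2) (fun _ => R + 1) with hK
  have hKcomp : IsCompact K := isCompact_Icc
  have hKlo : ∀ x ∈ K, ∀ j, m/2 ≤ x j := fun x hx j => hx.1 j
  have hKhi : ∀ x ∈ K, ∀ j, x j ≤ R + 1 := fun x hx j => hx.2 j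
  have hm20 : 0 < m/2 := half_pos hm0
  have hcontF : ContinuousOn (Fq H) K := by
    intro x hx
    apply ContinuousAt.continuousWithinAt
    have hx0 : ∀ j, x j ≠ 0 := fun j => ne_of_gt (lt_of_lt_of_le hm20 (hKlo x hx j))
    apply ContinuousAt.sub
    · apply ContinuousAt.mul continuousAt_const
      have hcQ : Continuous fun v : Fin n → ℝ => v ⬝ᵥ H.mulVec v := by
        simp only [dotProduct, Matrix.mulVec]
        fun_prop
      exact hcQ.continuousAt
    · have hc : ∀ j : Fin n, ContinuousAt (fun v : Fin n → ℝ => Real.log (v j)) x :=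
        fun j => ContinuousAt.log ((continuous_apply j).continuousAt) (hx0 j)
      exact tendsto_finset_sum _ fun j _ => hc j
  have h1K : (fun _ => (1:ℝ)) ∈ K := by
    constructor
    · intro j; simp; linarith
    · intro j; simp; linarith
  obtain ⟨w, hwK, hwmin⟩ := hKcomp.exists_isMinOn ⟨_, h1K⟩ hcontF
  have hwc : Fq H w ≤ c := (isMinOn_iff.mp hwmin) _ h1K
  have hwpos : ∀ j, 0 < w j := fun j => lt_of_lt_of_le hm20 (hKlo w hwK j)
  obtain ⟨hwm, hwR⟩ := sub w hwpos hwc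
  -- w is interior point, hence local min
  set U : Set (Fin n → ℝ) := Set.univ.pi (fun _ => Set.Ioo (m/2) (R+1)) with hU
  have hUopen : IsOpen U := isOpen_set_pi Set.finite_univ (fun _ _ => isOpen_Ioo)
  have hwU : w ∈ U := by
    intro j _
    constructor
    · exact lt_of_lt_of_le (half_lt_self hm0) (hwm j)
    · exact lt_of_le_of_lt (hwR j) (lt_add_one R)
  have hUK : U ⊆ K := by
    intro x hx
    constructor
    · intro j; exact (hx j (Set.mem_univ j)).1.le
    · intro j; exact (hx j (Set.mem_univ j)).2.le
  have hKnhds : K ∈ nhds w := mem_nhds_iff.mpr ⟨U, hUK, hUopen, hwU⟩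
  have hloc : IsLocalMin (Fq H) w := hwmin.isLocalMin hKnhds
  refine ⟨w, hwpos, fun k => ?_⟩
  have hline := F_line_hasDerivAt H hsymm w (fun j => (hwpos j).ne') k
  have hlocline : IsLocalMin (fun t : ℝ => Fq H (w + t • (Pi.single k 1 : Fin n → ℝ))) 0 := by
    have hcont : Continuous fun t : ℝ => w + t • (Pi.single k 1 : Fin n → ℝ) := by fun_prop
    have htend : Tendsto (fun t : ℝ => w + t • (Pi.single k 1 : Fin n → ℝ)) (nhds 0) (nhds w) := by
      have h := hcont.tendsto 0
      simpa using h
    have hev := htend.eventually hloc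
    refine hev.mono fun t ht => ?_
    simpa using ht
  have hzero := hlocline.hasDerivAt_eq_zero hline
  have : H.mulVec w k - (w k)⁻¹ = 0 := hzero
  linarith

end InvEigAux

theorem inverse_eigenvector_exists_iff (n : ℕ)
    (H : Matrix (Fin n) (Fin n) ℝ) (hH : H.PosSemidef)
    (ε : Fin n → ℝ) (hε : ∀ j, ε j = 1 ∨ ε j = -1) :
    (∃ w : Fin n → ℝ, (∀ j, 0 < ε j * w j) ∧ ∀ j, H.mulVec w j = (w j)⁻¹) ↔
      (∀ x : Fin n → ℝ, (∀ j, 0 ≤ ε j * x j) → H.mulVec x = 0 → x = 0) := by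
  have hsymm : ∀ i j, H i j = H j i := by
    intro i j
    conv_lhs => rw [← hH.1]
    simp [Matrix.conjTranspose_apply]
  have hε2 : ∀ j, ε j * ε j = 1 := by
    intro j; rcases hε j with h | h <;> rw [h] <;> norm_num
  have hεne : ∀ j, ε j ≠ 0 := by
    intro j; rcases hε j with h | h <;> rw [h] <;> norm_num
  constructor
  · rintro ⟨w, hw, heig⟩ x hx hHx
    have hwne : ∀ j, w j ≠ 0 := by
      intro j h
      have := hw j
      rw [h, mul_zero] at this
      exact lt_irrefl 0 this
    have hswap : x ⬝ᵥ H.mulVec w = H.mulVec x ⬝ᵥ w := by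
      simp only [dotProduct, Matrix.mulVec, Finset.mul_sum, Finset.sum_mul]
      rw [Finset.sum_comm]
      refine Finset.sum_congr rfl fun i _ => Finset.sum_congr rfl fun j _ => ?_
      rw [hsymm j i]; ring
    have hzero : ∑ j, x j * (w j)⁻¹ = 0 := by
      have h1 : ∑ j, x j * (w j)⁻¹ = x ⬝ᵥ H.mulVec w := by
        simp only [dotProduct]
        exact Finset.sum_congr rfl fun j _ => by rw [heig j]
      rw [h1, hswap, hHx]
      simp
    have hnonneg : ∀ j ∈ Finset.univ, 0 ≤ x j * (w j)⁻¹ := by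
      intro j _
      rcases hε j with h | h
      · have hxj : 0 ≤ x j := by have := hx j; rwa [h, one_mul] at this
        have hwj : 0 < w j := by have := hw j; rwa [h, one_mul] at this
        positivity
      · have hxj : x j ≤ 0 := by have := hx j; rw [h] at this; linarith
        have hwj : w j < 0 := by have := hw j; rw [h] at this; nlinarith
        have : (w j)⁻¹ < 0 := inv_lt_zero.mpr hwj
        nlinarith
    have hall := (Finset.sum_eq_zero_iff_of_nonneg hnonneg).mp hzero
    funext j
    have hj := hall j (Finset.mem_univ j)
    have : (w j)⁻¹ ≠ 0 := inv_ne_zero (hwne j)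
    rcases mul_eq_zero.mp hj with h | h
    · exact h
    · exact absurd h this
  · intro hker
    rcases Nat.eq_zero_or_pos n with rfl | hn
    · exact ⟨fun _ => 1, fun j => j.elim0, fun j => j.elim0⟩
    set H' : Matrix (Fin n) (Fin n) ℝ := Matrix.of (fun i j => ε i * H i j * ε j) with hH'
    have hmul : ∀ (x : Fin n → ℝ) (i : Fin n),
        H'.mulVec x i = ε i * H.mulVec (fun j => ε j * x j) i := by
      intro x i
      simp only [Matrix.mulVec, dotProduct, hH', Matrix.of_apply, Finset.mul_sum]
      exact Finset.sum_congr rfl fun j _ => by ring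
    have hH'psd : H'.PosSemidef := by
      refine Matrix.PosSemidef.of_dotProduct_mulVec_nonneg ?_ ?_
      · show H'.conjTranspose = H'
        ext i j
        simp only [Matrix.conjTranspose_apply, hH', Matrix.of_apply, star_trivial]
        rw [hsymm j i]; ring
      · intro x
        have hy := hH.dotProduct_mulVec_nonneg (fun j => ε j * x j)
        have he : star x ⬝ᵥ H'.mulVec x
            = star (fun j => ε j * x j) ⬝ᵥ H.mulVec (fun j => ε j * x j) := by
          simp only [dotProduct, star_trivial, Pi.star_apply]
          refine Finset.sum_congr rfl fun i _ => ?_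
          rw [hmul x i]; ring
        rw [he]; exact hy
    have hker' : ∀ x : Fin n → ℝ, (∀ j, 0 ≤ x j) → H'.mulVec x = 0 → x = 0 := by
      intro x hx hx0
      set y : Fin n → ℝ := fun j => ε j * x j with hy
      have hy0 : H.mulVec y = 0 := by
        funext i
        have := congrFun hx0 i
        rw [hmul x i] at this
        have hne := hεne i
        simp only [Pi.zero_apply] at this ⊢
        exact (mul_eq_zero.mp this).resolve_left hne
      have hysign : ∀ j, 0 ≤ ε j * y j := by
        intro j
        have : ε j * y j = x j := by rw [hy]; rw [← mul_assoc, hε2 j, one_mul]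
        rw [this]; exact hx j
      have := hker y hysign hy0
      funext j
      have hyj : y j = 0 := congrFun this j
      have : ε j * x j = 0 := hyj
      exact (mul_eq_zero.mp this).resolve_left (hεne j)
    obtain ⟨u, hu, heig⟩ := InvEigAux.exists_pos hn H' hH'psd hker'
    refine ⟨fun j => ε j * u j, ?_, ?_⟩
    · intro j
      have : ε j * (ε j * u j) = u j := by rw [← mul_assoc, hε2 j, one_mul]
      rw [this]; exact hu j
    · intro j
      have h1 := heig j
      rw [hmul u j] at h1
      have h2 : H.mulVec (fun i => ε i * u i) j = ε j * (u j)⁻¹ := by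
        have := congrArg (fun z => ε j * z) h1
        simpa [← mul_assoc, hε2 j] using this
      rw [h2]
      rw [mul_inv]
      congr 1
      rcases hε j with h | h <;> rw [h] <;> norm_num
end

section
/- Let H be an n×n real positive definite matrix with all diagonal entries equal to 1, and suppose w ∈ ℝⁿ is a local extremum of the function w ↦ ∏_{k=1}^n |w_k| restricted to the set {w : wᵀHw = n} with all coordinates of w nonzero. Then w is an inverse eigenvector of H, i.e., (Hw)_j = 1/w_j for all j. -/
open Matrix
theorem local_extremum_is_inverse_eigenvector (n : ℕ)
    (H : Matrix (Fin n) (Fin n) ℝ) (hH : H.PosDef) (hdiag : ∀ i, H i i = 1)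
    (w : Fin n → ℝ) (hw : ∀ j, w j ≠ 0)
    (hconstraint : w ⬝ᵥ H.mulVec w = n)
    (hext : IsLocalExtrOn (fun x : Fin n → ℝ => ∏ k, |x k|)
      {x : Fin n → ℝ | x ⬝ᵥ H.mulVec x = n} w) :
    ∀ j, H.mulVec w j = (w j)⁻¹ := by
  rcases Nat.eq_zero_or_pos n with hn | hn
  · subst hn; intro j; exact j.elim0
  classical
  obtain ⟨ε, hεw, hε1⟩ : ∃ ε : Fin n → ℝ,
      (∀ k, ε k * w k = |w k|) ∧ (∀ k, ε k * ε k = 1) := by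
    refine ⟨fun k => if 0 < w k then 1 else -1, fun k => ?_, fun k => ?_⟩
    · rcases lt_trichotomy (w k) 0 with h | h | h
      · simp [not_lt.mpr h.le, abs_of_neg h]
      · exact absurd h (hw k)
      · simp [h, abs_of_pos h]
    · by_cases h : 0 < w k <;> simp [h]
  -- eventual equality of objective with a smooth function
  have hU : ∀ᶠ x in nhds w, ∀ k, 0 < ε k * x k := by
    rw [Filter.eventually_all]
    intro k
    have hcont : Continuous fun x : Fin n → ℝ => ε k * x k :=
      continuous_const.mul (continuous_apply k)
    have hpos : 0 < ε k * w k := by rw [hεw k]; exact abs_pos.mpr (hw k)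
    have hopen : IsOpen {x : Fin n → ℝ | 0 < ε k * x k} := isOpen_Ioi.preimage hcont
    exact hopen.mem_nhds hpos
  have hev : (fun x : Fin n → ℝ => ∏ k, |x k|)
      =ᶠ[nhdsWithin w {x : Fin n → ℝ | x ⬝ᵥ H.mulVec x = n}]
      (fun x => ∏ k, ε k * x k) := by
    refine (hU.filter_mono nhdsWithin_le_nhds).mono fun x hx => ?_
    refine Finset.prod_congr rfl fun k _ => ?_
    have hxk := hx k
    rcases mul_self_eq_one_iff.mp (hε1 k) with h | h
    · rw [h, one_mul] at hxk ⊢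
      exact abs_of_pos hxk
    · rw [h] at hxk ⊢
      have : x k < 0 := by linarith [hxk]
      rw [abs_of_neg this]; ring
  have hfw : (∏ k, |w k|) = ∏ k, ε k * w k :=
    Finset.prod_congr rfl fun k _ => (hεw k).symm
  have hext2 : IsLocalExtrOn (fun x : Fin n → ℝ => ∏ k, ε k * x k)
      {x : Fin n → ℝ | x ⬝ᵥ H.mulVec x = n} w :=
    IsExtrFilter.congr hext hev hfw
  -- derivatives
  set pr : Fin n → ((Fin n → ℝ) →L[ℝ] ℝ) := fun i => ContinuousLinearMap.proj i with hpr
  set φ' : (Fin n → ℝ) →L[ℝ] ℝ :=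
    ∑ i, (∏ j ∈ Finset.univ.erase i, ε j * w j) • (ε i • pr i) with hφ'def
  have hproj : ∀ i : Fin n, HasStrictFDerivAt (fun x : Fin n → ℝ => x i) (pr i) w :=
    fun i => (pr i).hasStrictFDerivAt
  have hφ' : HasStrictFDerivAt (fun x : Fin n → ℝ => ∏ k, ε k * x k) φ' w :=
    HasStrictFDerivAt.finset_prod fun i _ => (hproj i).const_mul (ε i)
  set g' : (Fin n → ℝ) →L[ℝ] ℝ :=
    ∑ i, (w i • ∑ j, H i j • pr j + (∑ j, H i j * w j) • pr i) with hg'def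
  have hf' : HasStrictFDerivAt (fun x : Fin n → ℝ => x ⬝ᵥ H.mulVec x) g' w := by
    have heqf : (fun x : Fin n → ℝ => x ⬝ᵥ H.mulVec x)
        = fun x : Fin n → ℝ => ∑ i, x i * ∑ j, H i j * x j := by
      funext x; simp [dotProduct, Matrix.mulVec]
    rw [heqf]
    exact HasStrictFDerivAt.fun_sum fun i _ =>
      (hproj i).mul
        (HasStrictFDerivAt.fun_sum fun j _ => (hproj j).const_mul (H i j))
  -- Lagrange multipliers
  have hsets : {x : Fin n → ℝ | x ⬝ᵥ H.mulVec x = n}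
      = {x : Fin n → ℝ | x ⬝ᵥ H.mulVec x = w ⬝ᵥ H.mulVec w} := by
    rw [hconstraint]
  rw [hsets] at hext2
  obtain ⟨a, b, hab, heq0⟩ :=
    hext2.exists_multipliers_of_hasStrictFDerivAt_1d hf' hφ'
  -- evaluate at basis vectors
  have hHsymm : ∀ i j, H j i = H i j := fun i j => hH.isHermitian.apply i j
  have hg'val : ∀ m, g' (Pi.single m 1) = 2 * H.mulVec w m := by
    intro m
    have e1 : ∀ i : Fin n, (pr i) (Pi.single m 1 : Fin n → ℝ)
        = if i = m then 1 else 0 := by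
      intro i; simp [hpr, Pi.single_apply]
    rw [hg'def]
    simp only [ContinuousLinearMap.sum_apply, ContinuousLinearMap.add_apply,
      ContinuousLinearMap.smul_apply, smul_eq_mul, e1, mul_ite, mul_one, mul_zero]
    have e2 : ∀ i : Fin n, (∑ j, if j = m then H i j else 0) = H i m := by
      intro i; rw [Finset.sum_ite_eq' Finset.univ m (fun j => H i j)]; simp
    simp only [e2]
    rw [Finset.sum_add_distrib, Finset.sum_ite_eq' Finset.univ m
      (fun i => ∑ j, H i j * w j)]
    simp only [Finset.mem_univ, if_true]
    have h3 : ∑ i, w i * H i m = H.mulVec w m := by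
      simp only [Matrix.mulVec, dotProduct]
      exact Finset.sum_congr rfl fun i _ => by rw [hHsymm m i]; ring
    have h4 : ∑ j, H m j * w j = H.mulVec w m := by
      simp [Matrix.mulVec, dotProduct]
    rw [h3, h4]; ring
  set A : ℝ := ∏ k, |w k| with hA
  have hApos : 0 < A := Finset.prod_pos fun k _ => abs_pos.mpr (hw k)
  have hφ'val : ∀ m, φ' (Pi.single m 1) = A / w m := by
    intro m
    have e1 : ∀ i : Fin n, (pr i) (Pi.single m 1 : Fin n → ℝ)
        = if i = m then 1 else 0 := by
      intro i; simp [hpr, Pi.single_apply]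
    rw [hφ'def]
    simp only [ContinuousLinearMap.sum_apply, ContinuousLinearMap.smul_apply,
      smul_eq_mul, e1, mul_ite, mul_one, mul_zero]
    rw [Finset.sum_ite_eq' Finset.univ m
      (fun i => (∏ j ∈ Finset.univ.erase i, ε j * w j) * ε i)]
    simp only [Finset.mem_univ, if_true]
    have hAe : (ε m * w m) * ∏ j ∈ Finset.univ.erase m, ε j * w j = A := by
      rw [Finset.mul_prod_erase Finset.univ (fun j => ε j * w j) (Finset.mem_univ m)]
      exact hfw.symm
    rw [eq_div_iff (hw m), ← hAe]; ring
  have key : ∀ m, a * (2 * H.mulVec w m) + b * (A / w m) = 0 := by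
    intro m
    have h0 := ContinuousLinearMap.ext_iff.mp heq0 (Pi.single m 1)
    simp only [ContinuousLinearMap.add_apply, ContinuousLinearMap.smul_apply,
      ContinuousLinearMap.zero_apply, smul_eq_mul, hg'val m, hφ'val m] at h0
    exact h0
  have ha : a ≠ 0 := by
    intro ha0
    have hm := key ⟨0, hn⟩
    rw [ha0, zero_mul, zero_add] at hm
    have hb : b = 0 := by
      have hAw : A / w ⟨0, hn⟩ ≠ 0 := div_ne_zero hApos.ne' (hw _)
      exact (mul_eq_zero.mp hm).resolve_right hAw
    exact hab (by simp [ha0, hb, Prod.ext_iff])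
  set c : ℝ := -(b * A) / (2 * a) with hc
  have h2a : (2 : ℝ) * a ≠ 0 := mul_ne_zero two_ne_zero ha
  have hHwc : ∀ m, H.mulVec w m = c / w m := by
    intro m
    have hm := key m
    have hwm := hw m
    rw [hc]
    field_simp [hwm] at hm ⊢
    linear_combination hm
  have hn' : (n : ℝ) ≠ 0 := Nat.cast_ne_zero.mpr hn.ne'
  have hc1 : c = 1 := by
    have hsum : (n : ℝ) = ∑ m : Fin n, c := by
      rw [← hconstraint]
      rw [show w ⬝ᵥ H.mulVec w = ∑ m, w m * H.mulVec w m from rfl]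
      refine Finset.sum_congr rfl fun m _ => ?_
      rw [hHwc m, ← mul_div_assoc]
      exact mul_div_cancel_left₀ c (hw m)
    rw [Finset.sum_const, Finset.card_univ, Fintype.card_fin, nsmul_eq_mul] at hsum
    have h1 : (n : ℝ) * 1 = (n : ℝ) * c := by rw [mul_one]; exact hsum
    exact (mul_left_cancel₀ hn' h1).symm
  intro j
  rw [hHwc j, hc1, one_div]
end

section
/- Let v_1,...,v_n (n ≥ 2) be unit vectors in a real inner product space H. Then there exists a unit vector v ∈ H with |⟨v_k, v⟩| ≥ 1/√(1+(n−1)²) for all k. -/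
open Real

theorem improved_plank {H : Type*} [NormedAddCommGroup H] [InnerProductSpace ℝ H]
    (n : ℕ) (hn : 2 ≤ n) (v : Fin n → H) (hv : ∀ k, ‖v k‖ = 1) :
    ∃ u : H, ‖u‖ = 1 ∧
      ∀ k, |(inner ℝ (v k) u : ℝ)| ≥ 1 / Real.sqrt (1 + ((n : ℝ) - 1) ^ 2) := by
  classical
  obtain ⟨ε, hε⟩ : ∃ ε : Fin n → Bool, ∀ ε' : Fin n → Bool,
      ‖∑ k, (if ε' k then v k else -v k)‖ ≤ ‖∑ k, (if ε k then v k else -v k)‖ := by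
    obtain ⟨ε, -, h⟩ := Finset.exists_max_image Finset.univ
      (fun ε : Fin n → Bool => ‖∑ k, (if ε k then v k else -v k)‖)
      ⟨fun _ => true, Finset.mem_univ _⟩
    exact ⟨ε, fun ε' => h ε' (Finset.mem_univ _)⟩
  set w : Fin n → H := fun k => if ε k then v k else -v k with hw
  set s : H := ∑ k, w k with hs
  have hwn : ∀ k, ‖w k‖ = 1 := by
    intro k; simp only [hw]; split <;> simp [hv]
  -- key: for each j, ⟨w j, s⟩ ≥ 1
  have key : ∀ j, (1 : ℝ) ≤ inner ℝ (w j) s := by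
    intro j
    have hfun : (fun k => if Function.update ε j (!ε j) k then v k else -v k)
        = Function.update w j (-w j) := by
      funext k
      by_cases hk : k = j
      · subst hk
        simp only [Function.update_self, hw]
        cases hεk : ε k <;> simp [hεk]
      · simp [Function.update_of_ne hk, hw]
    have hflip : ∑ k, (if Function.update ε j (!ε j) k then v k else -v k)
        = s - (2 : ℝ) • w j := by
      rw [show (∑ k, (if Function.update ε j (!ε j) k then v k else -v k))
          = ∑ k, Function.update w j (-w j) k from by rw [hfun]]
      rw [Finset.sum_update_of_mem (Finset.mem_univ j)]
      have h4 : ∑ k ∈ Finset.univ.erase j, w k = s - w j := by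
        rw [hs, ← Finset.sum_erase_add Finset.univ w (Finset.mem_univ j)]
        abel
      rw [Finset.erase_eq] at h4
      rw [h4]
      module
    have hle := hε (Function.update ε j (!ε j))
    rw [hflip] at hle
    have h1 : ‖s - (2 : ℝ) • w j‖ ^ 2 ≤ ‖s‖ ^ 2 := by
      have := norm_nonneg (s - (2 : ℝ) • w j)
      nlinarith [norm_nonneg s]
    have hexp : ‖s - (2 : ℝ) • w j‖ ^ 2
        = ‖s‖ ^ 2 - 4 * inner ℝ (w j) s + 4 := by
      have h2 : ‖s - (2 : ℝ) • w j‖ ^ 2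
          = ‖s‖ ^ 2 - 2 * inner ℝ s ((2:ℝ) • w j) + ‖(2:ℝ) • w j‖ ^ 2 :=
        norm_sub_sq_real s ((2:ℝ) • w j)
      rw [h2, real_inner_smul_right, norm_smul, hwn j, real_inner_comm]
      simp
      ring
    nlinarith [h1, hexp]
  -- bound ‖s - w j‖ ≤ n - 1
  have hr : ∀ j, ‖s - w j‖ ≤ (n : ℝ) - 1 := by
    intro j
    have : s - w j = ∑ k ∈ Finset.univ.erase j, w k := by
      rw [hs, ← Finset.sum_erase_add Finset.univ w (Finset.mem_univ j)]
      abel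
    rw [this]
    calc ‖∑ k ∈ Finset.univ.erase j, w k‖ ≤ ∑ k ∈ Finset.univ.erase j, ‖w k‖ :=
          norm_sum_le _ _
      _ = (n : ℝ) - 1 := by
          simp [hwn, Finset.card_erase_of_mem]
          have : (1:ℕ) ≤ n := le_trans (by norm_num) hn
          push_cast [Nat.cast_sub this]
          ring
  -- M = ‖s‖ ≥ 1
  have hM1 : (1 : ℝ) ≤ ‖s‖ := by
    have hfn : 0 < n := by omega
    set j0 : Fin n := ⟨0, hfn⟩
    have h0 := key j0
    have hcs := real_inner_le_norm (w j0) s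
    rw [hwn j0] at hcs
    nlinarith
  have hMpos : (0 : ℝ) < ‖s‖ := lt_of_lt_of_le one_pos hM1
  set C : ℝ := 1 + ((n : ℝ) - 1) ^ 2 with hC
  have hn2 : (2 : ℝ) ≤ (n : ℝ) := by exact_mod_cast hn
  have hC2 : (2 : ℝ) ≤ C := by rw [hC]; nlinarith
  have hCpos : (0 : ℝ) < C := lt_of_lt_of_le two_pos hC2
  -- M^2 ≤ 2 a_j + C - 2, hence a_j^2 * C ≥ M^2
  have hkey2 : ∀ j, ‖s‖ ^ 2 ≤ (inner ℝ (w j) s : ℝ) ^ 2 * C := by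
    intro j
    have hexp : ‖s - w j‖ ^ 2 = ‖s‖ ^ 2 - 2 * inner ℝ (w j) s + 1 := by
      have h2 : ‖s - w j‖ ^ 2 = ‖s‖ ^ 2 - 2 * inner ℝ s (w j) + ‖w j‖ ^ 2 :=
        norm_sub_sq_real s (w j)
      rw [h2, hwn j, real_inner_comm]
      ring
    have hrj := hr j
    have hkj := key j
    have : ‖s - w j‖ ^ 2 ≤ ((n:ℝ) - 1) ^ 2 := by
      have := norm_nonneg (s - w j)
      nlinarith
    set a : ℝ := inner ℝ (w j) s with ha
    have hfac : 0 ≤ (a - 1) * ((a + 1) * C - 2) := by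
      apply mul_nonneg (by linarith)
      nlinarith
    nlinarith [hfac]
  refine ⟨‖s‖⁻¹ • s, ?_, ?_⟩
  · rw [norm_smul, norm_inv, norm_norm, inv_mul_cancel₀ (ne_of_gt hMpos)]
  · intro k
    have hwk : |(inner ℝ (v k) s : ℝ)| = inner ℝ (w k) s := by
      have h1 : (0:ℝ) ≤ inner ℝ (w k) s := le_trans zero_le_one (key k)
      cases hεk : ε k
      · have hwe : w k = -v k := by simp [hw, hεk]
        rw [hwe, inner_neg_left] at h1 ⊢
        rw [abs_of_nonpos (by linarith)]
      · have hwe : w k = v k := by simp [hw, hεk]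
        rw [hwe] at h1 ⊢
        rw [abs_of_nonneg h1]
    have hinner : (inner ℝ (v k) (‖s‖⁻¹ • s) : ℝ) = ‖s‖⁻¹ * inner ℝ (v k) s := by
      rw [real_inner_smul_right]
    rw [ge_iff_le, hinner, abs_mul, abs_of_nonneg (inv_nonneg.2 (norm_nonneg s)), hwk]
    have hsqrtpos : 0 < Real.sqrt C := Real.sqrt_pos.2 hCpos
    rw [div_le_iff₀ hsqrtpos, inv_mul_eq_div, div_mul_eq_mul_div,
      le_div_iff₀ hMpos, one_mul]
    have h2 : ‖s‖ ≤ inner ℝ (w k) s * Real.sqrt C := by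
      have : ‖s‖ = Real.sqrt (‖s‖ ^ 2) := by
        rw [Real.sqrt_sq (norm_nonneg s)]
      rw [this]
      have h3 : (inner ℝ (w k) s : ℝ) * Real.sqrt C
          = Real.sqrt ((inner ℝ (w k) s : ℝ) ^ 2 * C) := by
        rw [Real.sqrt_mul (sq_nonneg _), Real.sqrt_sq (le_trans zero_le_one (key k))]
      rw [h3]
      exact Real.sqrt_le_sqrt (hkey2 k)
    nlinarith [h2, hsqrtpos]
end

section
/- Let M be an n×n real symmetric positive definite matrix with M𝟏 = 𝟏 such that every b ∈ ℝⁿ with bᵀMb = n satisfies ∏_{j=1}^n |(Mb)_j| ≤ 1. Then for every v ∈ ℝⁿ with vᵀMv = n and ⟨v, 𝟏⟩ = 0, one has ‖Mv‖₂² ≤ n(n−1). -/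
open Finset Complex Real

noncomputable def om (n : ℕ) : ℂ := Complex.exp (Real.pi * Complex.I / n)

lemma om_ne_zero (n : ℕ) : om n ≠ 0 := Complex.exp_ne_zero _

lemma om_pow (n : ℕ) (e : ℤ) : om n ^ e = Complex.exp (e * (Real.pi * Complex.I / n)) := by
  rw [om, Complex.exp_int_mul]

lemma om_two_n (n : ℕ) (hn : n ≠ 0) : om n ^ (2 * (n:ℤ)) = 1 := by
  rw [om_pow]
  have hne : (n:ℂ) ≠ 0 := Nat.cast_ne_zero.mpr hn
  have : ((2 * (n:ℤ) : ℤ) : ℂ) * (Real.pi * Complex.I / n) = 2 * Real.pi * Complex.I := by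
    push_cast
    field_simp
  rw [this, Complex.exp_two_pi_mul_I]

lemma om_zpow_eq_one_iff (n : ℕ) (hn : n ≠ 0) (e : ℤ) :
    om n ^ e = 1 ↔ (2 * (n:ℤ)) ∣ e := by
  constructor
  · intro h
    rw [om_pow, Complex.exp_eq_one_iff] at h
    obtain ⟨t, ht⟩ := h
    have hne : (n:ℂ) ≠ 0 := Nat.cast_ne_zero.mpr hn
    have hpi : (Real.pi : ℂ) ≠ 0 := Complex.ofReal_ne_zero.mpr Real.pi_ne_zero
    have hI : Complex.I ≠ 0 := Complex.I_ne_zero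
    have h4 : (e : ℂ) = 2 * n * t := by
      field_simp at ht
      have h3 : (e:ℂ) * (Real.pi * Complex.I) = (2 * n * t) * (Real.pi * Complex.I) := by
        linear_combination ((Real.pi : ℂ) * Complex.I) * ht
      exact mul_right_cancel₀ (mul_ne_zero hpi hI) h3
    have h5 : e = 2 * n * t := by exact_mod_cast h4
    exact ⟨t, h5⟩
  · rintro ⟨t, rfl⟩
    rw [zpow_mul, om_two_n n hn, one_zpow]

lemma om_geom (n : ℕ) (hn : n ≠ 0) (e : ℤ) (h1 : 0 < e) (h2 : e < 2 * n) :
    ∑ k ∈ Finset.Ico 1 (2 * n), om n ^ ((k:ℤ) * e) = -1 := by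
  set x : ℂ := om n ^ e with hx
  have hxk : ∀ k : ℕ, om n ^ ((k:ℤ) * e) = x ^ k := by
    intro k
    rw [mul_comm, zpow_mul, hx, zpow_natCast]
  have hx1 : x ≠ 1 := by
    rw [hx, Ne, om_zpow_eq_one_iff n hn]
    intro hdvd
    have := Int.le_of_dvd h1 hdvd
    omega
  have hx2n : x ^ (2 * n) = 1 := by
    rw [hx, ← zpow_natCast, ← zpow_mul, mul_comm e, zpow_mul]
    push_cast
    rw [om_two_n n hn, one_zpow]
  have hgeom : ∑ k ∈ Finset.range (2 * n), x ^ k = 0 := by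
    rw [geom_sum_eq hx1, hx2n, sub_self, zero_div]
  have hsplit : ∑ k ∈ Finset.range (2 * n), x ^ k
      = x ^ 0 + ∑ k ∈ Finset.Ico 1 (2 * n), x ^ k := by
    rw [Finset.range_eq_Ico]
    exact (Finset.sum_eq_sum_Ico_succ_bot (by omega) _)
  simp only [Finset.sum_congr rfl (fun k _ => hxk k)]
  rw [hsplit] at hgeom
  simp only [pow_zero] at hgeom
  linear_combination hgeom

noncomputable def nu (n : ℕ) (k : ℕ) : ℝ := (-1)^(k+1) / (1 - Real.cos (k * Real.pi / n))

lemma cos_lt_one' (n : ℕ) (hn : n ≠ 0) (k : ℕ) (hk1 : 1 ≤ k) (hk2 : k < 2 * n) :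
    Real.cos (k * Real.pi / n) < 1 := by
  have hpi := Real.pi_pos
  have hn' : (0:ℝ) < n := by positivity
  have hx1 : (0:ℝ) < k * Real.pi / n := by
    have : (0:ℝ) < (k:ℝ) := by exact_mod_cast hk1
    positivity
  have hx2 : k * Real.pi / n < 2 * Real.pi := by
    rw [div_lt_iff₀ hn']
    have : (k:ℝ) < 2 * n := by exact_mod_cast hk2
    nlinarith
  rcases lt_or_eq_of_le (Real.cos_le_one (k * Real.pi / n)) with h | h
  · exact h
  · exfalso
    have := (Real.cos_eq_one_iff_of_lt_of_lt (by linarith) hx2).mp h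
    linarith
lemma om_k_exp (n : ℕ) (k : ℕ) : om n ^ (k:ℤ) = Complex.exp ((k * Real.pi / n : ℝ) * Complex.I) := by
  rw [om_pow]
  congr 1
  push_cast
  ring

lemma om_k_pow_n (n : ℕ) (hn : n ≠ 0) (k : ℕ) : (om n ^ (k:ℤ)) ^ n = (-1 : ℂ) ^ k := by
  rw [← zpow_natCast, ← zpow_mul, om_pow]
  have hne : (n:ℂ) ≠ 0 := Nat.cast_ne_zero.mpr hn
  have : (((k:ℤ) * (n:ℤ) : ℤ) : ℂ) * (Real.pi * Complex.I / n) = k * (Real.pi * Complex.I) := by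
    push_cast; field_simp
  rw [this]
  push_cast
  rw [Complex.exp_nat_mul, Complex.exp_pi_mul_I]

lemma om_inv_k (n : ℕ) (k : ℕ) :
    (om n ^ (k:ℤ))⁻¹ = Complex.exp (-((k * Real.pi / n : ℝ) * Complex.I)) := by
  rw [om_k_exp, ← Complex.exp_neg]

noncomputable def nuC (n : ℕ) (k : ℕ) : ℂ :=
  2 * om n ^ ((k:ℤ) * ((n:ℤ)+1)) / (om n ^ (k:ℤ) - 1)^2

lemma nu_cast (n : ℕ) (hn : n ≠ 0) (k : ℕ) (hk1 : 1 ≤ k) (hk2 : k < 2 * n) :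
    (nu n k : ℂ) = nuC n k := by
  set q : ℂ := om n ^ (k:ℤ) with hq
  have hq0 : q ≠ 0 := zpow_ne_zero _ (om_ne_zero n)
  have hq1 : q ≠ 1 := by
    rw [hq, Ne, om_zpow_eq_one_iff n hn]
    intro hdvd
    have h1 : (0:ℤ) < (k:ℤ) := by exact_mod_cast hk1
    have := Int.le_of_dvd h1 hdvd
    omega
  have hcos : q + q⁻¹ = 2 * (Real.cos (k * Real.pi / n) : ℂ) := by
    rw [hq, om_k_exp, ← Complex.exp_neg]
    rw [Complex.ofReal_cos, Complex.cos]
    ring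
  have hqn : q ^ n = (-1:ℂ)^k := om_k_pow_n n hn k
  have hcosne : (1:ℂ) - (Real.cos (k * Real.pi / n) : ℂ) ≠ 0 := by
    intro h
    have : (Real.cos (k * Real.pi / n) : ℂ) = 1 := by linear_combination -h
    have h2 : Real.cos (k * Real.pi / n) = 1 := by exact_mod_cast this
    have := cos_lt_one' n hn k hk1 hk2
    linarith
  have hsq : (q - 1)^2 = q * (2 * (Real.cos (k * Real.pi / n) : ℂ) - 2) := by
    have : (q-1)^2 = q * (q + q⁻¹ - 2) := by
      field_simp
      ring
    rw [this, hcos]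
  rw [nuC, ← hq]
  have hexp : om n ^ ((k:ℤ) * ((n:ℤ)+1)) = q ^ ((n:ℤ)+1) := by
    rw [zpow_mul, hq]
  rw [hexp]
  have hqn1 : q ^ ((n:ℤ)+1) = (-1:ℂ)^k * q := by
    rw [zpow_add₀ hq0, zpow_natCast, hqn, zpow_one]
  rw [hqn1, hsq]
  rw [nu]
  set r : ℝ := Real.cos ((k:ℝ) * Real.pi / n) with hr
  push_cast
  rw [div_eq_div_iff hcosne (by
    intro h
    rcases mul_eq_zero.mp h with h' | h'
    · exact hq0 h'
    · apply hcosne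
      linear_combination -h'/2)]
  ring

lemma perk (q : ℂ) (hq0 : q ≠ 0) (hq1 : q ≠ 1) (a b : ℕ) :
    (2 * q^(a+b+1) / (q-1)^2) * (2 - q^b - (q^b)⁻¹)
      = -2 * q^(a+1) * (∑ j ∈ Finset.range b, q^j)^2 := by
  have hg : (∑ j ∈ Finset.range b, q^j) * (q-1) = q^b - 1 := geom_sum_mul q b
  have hb0 : q^b ≠ 0 := pow_ne_zero _ hq0
  have hq1' : q - 1 ≠ 0 := sub_ne_zero.mpr hq1
  have h1 : 2 - q^b - (q^b)⁻¹ = -(q^b-1)^2 / q^b := by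
    field_simp
    ring
  rw [h1, ← hg, mul_pow]
  field_simp
  ring

lemma E2 (n : ℕ) (hn : n ≠ 0) (m : ℕ) (hm : m ≤ n) :
    ∑ k ∈ Finset.Ico 1 (2 * n), nuC n k *
      (2 - om n ^ ((k:ℤ) * (m:ℤ)) - (om n ^ ((k:ℤ) * (m:ℤ)))⁻¹) = 2 * (m:ℂ)^2 := by
  rcases Nat.eq_zero_or_pos m with hm0 | hmpos
  · subst hm0
    norm_num
  have hstep : ∀ k ∈ Finset.Ico 1 (2 * n), nuC n k *
      (2 - om n ^ ((k:ℤ) * (m:ℤ)) - (om n ^ ((k:ℤ) * (m:ℤ)))⁻¹)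
      = ∑ j ∈ Finset.range m, ∑ l ∈ Finset.range m,
          (-2) * om n ^ ((k:ℤ) * ((n:ℤ) - m + 1 + j + l)) := by
    intro k hk
    rw [Finset.mem_Ico] at hk
    set q : ℂ := om n ^ (k:ℤ) with hq
    have hq0 : q ≠ 0 := zpow_ne_zero _ (om_ne_zero n)
    have hq1 : q ≠ 1 := by
      rw [hq, Ne, om_zpow_eq_one_iff n hn]
      intro hdvd
      have h1 : (0:ℤ) < (k:ℤ) := by exact_mod_cast hk.1
      have := Int.le_of_dvd h1 hdvd
      omega
    have hpow : ∀ e : ℕ, om n ^ ((k:ℤ) * (e:ℤ)) = q ^ e := by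
      intro e
      rw [zpow_mul, hq, zpow_natCast]
    have hnuc : nuC n k = 2 * q ^ ((n - m) + m + 1) / (q - 1)^2 := by
      rw [nuC, ← hq, zpow_mul, hq]
      congr 1
      congr 1
      have : ((n:ℤ) + 1) = (((n - m) + m + 1 : ℕ) : ℤ) := by push_cast; omega
      rw [this, zpow_natCast]
    rw [hpow m, hnuc, perk q hq0 hq1 (n - m) m]
    rw [sq, Finset.sum_mul_sum]
    rw [Finset.mul_sum]
    apply Finset.sum_congr rfl
    intro j hj
    rw [Finset.mul_sum]
    apply Finset.sum_congr rfl
    intro l hl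
    have hexp : (k:ℤ) * ((n:ℤ) - m + 1 + j + l) = (k:ℤ) * (((n - m + 1 + j + l : ℕ)) : ℤ) := by
      push_cast
      have : ((n:ℤ) - m) = ((n - m : ℕ) : ℤ) := by omega
      rw [this]
    rw [hexp, hpow]
    have : n - m + 1 + j + l = (n - m + 1) + (j + l) := by omega
    rw [this, pow_add, pow_add]
    ring
  rw [Finset.sum_congr rfl hstep]
  rw [Finset.sum_comm]
  have hinner : ∀ j ∈ Finset.range m,
      ∑ k ∈ Finset.Ico 1 (2 * n), ∑ l ∈ Finset.range m,
        (-2) * om n ^ ((k:ℤ) * ((n:ℤ) - m + 1 + j + l)) = ∑ l ∈ Finset.range m, (2:ℂ) := by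
    intro j hj
    rw [Finset.sum_comm]
    apply Finset.sum_congr rfl
    intro l hl
    rw [← Finset.mul_sum]
    rw [Finset.mem_range] at hj hl
    rw [om_geom n hn _ (by omega) (by omega)]
    ring
  rw [Finset.sum_congr rfl hinner]
  rw [Finset.sum_const, Finset.sum_const, Finset.card_range]
  push_cast
  ring

lemma nu_symm (n : ℕ) (hn : n ≠ 0) (k : ℕ) (hk1 : 1 ≤ k) (hk2 : k < 2 * n) :
    nu n (2 * n - k) = nu n k := by
  rw [nu, nu]
  have hcast : ((2 * n - k : ℕ) : ℝ) = 2 * n - k := by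
    push_cast [Nat.cast_sub (by omega : k ≤ 2 * n)]
    ring
  have hn' : (n:ℝ) ≠ 0 := Nat.cast_ne_zero.mpr hn
  have harg : ((2 * n - k : ℕ) : ℝ) * Real.pi / n = 2 * Real.pi - k * Real.pi / n := by
    rw [hcast]
    field_simp
  rw [harg]
  have hcos : Real.cos (2 * Real.pi - (k:ℝ) * Real.pi / n) = Real.cos ((k:ℝ) * Real.pi / n) := by
    rw [Real.cos_sub]
    simp [Real.cos_two_pi, Real.sin_two_pi]
  rw [hcos]
  congr 1
  rw [neg_one_pow_eq_pow_mod_two, neg_one_pow_eq_pow_mod_two (n := k + 1)]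
  congr 1
  omega

lemma nuC_symm (n : ℕ) (hn : n ≠ 0) (k : ℕ) (hk1 : 1 ≤ k) (hk2 : k < 2 * n) :
    nuC n (2 * n - k) = nuC n k := by
  rw [← nu_cast n hn _ (by omega) (by omega), ← nu_cast n hn _ hk1 hk2, nu_symm n hn k hk1 hk2]

lemma om_sym_exp (n : ℕ) (hn : n ≠ 0) (k : ℕ) (hk2 : k ≤ 2 * n) (e : ℤ) :
    om n ^ (((2 * n - k : ℕ) : ℤ) * e) = om n ^ (-((k:ℤ) * e)) := by
  have hc : ((2 * n - k : ℕ) : ℤ) = 2 * n - k := by omega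
  rw [hc]
  have : (2 * (n:ℤ) - k) * e = -((k:ℤ) * e) + e * (2 * n) := by ring
  rw [this, zpow_add₀ (om_ne_zero n), mul_comm e (2 * (n:ℤ)), zpow_mul, om_two_n n hn, one_zpow, mul_one]

lemma SYM (n : ℕ) (hn : n ≠ 0) (e : ℤ) :
    ∑ k ∈ Finset.Ico 1 (2 * n), nuC n k * om n ^ ((k:ℤ) * e)
      = ∑ k ∈ Finset.Ico 1 (2 * n), nuC n k * om n ^ (-((k:ℤ) * e)) := by
  apply Finset.sum_nbij' (fun k => 2 * n - k) (fun k => 2 * n - k)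
  · intro a ha; rw [Finset.mem_Ico] at *; omega
  · intro a ha; rw [Finset.mem_Ico] at *; omega
  · intro a ha; rw [Finset.mem_Ico] at ha; omega
  · intro a ha; rw [Finset.mem_Ico] at ha; omega
  · intro a ha
    rw [Finset.mem_Ico] at ha
    congr 1
    · exact (nuC_symm n hn a ha.1 ha.2).symm
    · rw [zpow_neg, om_sym_exp n hn a (by omega) e, zpow_neg, inv_inv]

lemma Eprime (n : ℕ) (hn : n ≠ 0) (a : ℕ) (ha : a ≤ n) :
    ∑ k ∈ Finset.Ico 1 (2 * n), nuC n k * (1 - om n ^ ((k:ℤ) * (2 * (a:ℤ) - n)))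
      = (2 * (a:ℂ) - n)^2 := by
  set m : ℤ := 2 * (a:ℤ) - n with hm
  set m' : ℕ := m.natAbs with hm'
  have hm'n : m' ≤ n := by
    rw [hm', hm]
    omega
  have hdbl : ∑ k ∈ Finset.Ico 1 (2 * n), nuC n k * (2 - om n ^ ((k:ℤ) * m) - om n ^ (-((k:ℤ) * m)))
      = 2 * ∑ k ∈ Finset.Ico 1 (2 * n), nuC n k * (1 - om n ^ ((k:ℤ) * m)) := by
    have hsplit : ∀ b : ℂ, ∀ x y : ℂ, b * (2 - x - y) = b * (1 - x) + b * (1 - y) := by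
      intros; ring
    rw [Finset.sum_congr rfl (fun k _ => hsplit (nuC n k) (om n ^ ((k:ℤ) * m)) (om n ^ (-((k:ℤ) * m))))]
    rw [Finset.sum_add_distrib]
    have h1 : ∀ e : ℤ, ∑ k ∈ Finset.Ico 1 (2 * n), nuC n k * (1 - om n ^ ((k:ℤ) * e))
        = (∑ k ∈ Finset.Ico 1 (2 * n), nuC n k) - ∑ k ∈ Finset.Ico 1 (2 * n), nuC n k * om n ^ ((k:ℤ) * e) := by
      intro e
      rw [← Finset.sum_sub_distrib]
      apply Finset.sum_congr rfl
      intros; ring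
    have h2 : ∑ k ∈ Finset.Ico 1 (2 * n), nuC n k * (1 - om n ^ (-((k:ℤ) * m)))
        = ∑ k ∈ Finset.Ico 1 (2 * n), nuC n k * (1 - om n ^ ((k:ℤ) * m)) := by
      have h3 : ∑ k ∈ Finset.Ico 1 (2 * n), nuC n k * (1 - om n ^ (-((k:ℤ) * m)))
          = (∑ k ∈ Finset.Ico 1 (2 * n), nuC n k) - ∑ k ∈ Finset.Ico 1 (2 * n), nuC n k * om n ^ (-((k:ℤ) * m)) := by
        rw [← Finset.sum_sub_distrib]
        apply Finset.sum_congr rfl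
        intros; ring
      rw [h3, ← SYM n hn m, ← h1]
    rw [h2, ← two_mul]
  have hE2 := E2 n hn m' hm'n
  have hcase : ∑ k ∈ Finset.Ico 1 (2 * n), nuC n k * (2 - om n ^ ((k:ℤ) * m) - om n ^ (-((k:ℤ) * m)))
      = 2 * (m' : ℂ)^2 := by
    rw [← hE2]
    apply Finset.sum_congr rfl
    intro k hk
    congr 1
    rcases le_or_gt 0 m with hs | hs
    · have : m = (m' : ℤ) := by rw [hm']; omega
      rw [this, zpow_neg]
    · have : m = -(m' : ℤ) := by rw [hm']; omega
      rw [this]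
      rw [mul_neg, zpow_neg, neg_neg]
      ring
  rw [hcase] at hdbl
  have hfin : (∑ k ∈ Finset.Ico 1 (2 * n), nuC n k * (1 - om n ^ ((k:ℤ) * m))) = (m' : ℂ)^2 := by
    have h2 : (2:ℂ) ≠ 0 := two_ne_zero
    field_simp at hdbl
    exact hdbl.symm
  rw [hfin]
  have h1 : ((m' : ℤ))^2 = m^2 := Int.natAbs_sq m
  have h2 : ((m' : ℂ))^2 = ((m : ℤ) : ℂ)^2 := by exact_mod_cast h1
  rw [h2, hm]
  push_cast
  ring

noncomputable def uu (n : ℕ) (c : Fin n → ℝ) (j : Fin n) : ℂ := (1 - c j * Complex.I) / 2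
noncomputable def vv (n : ℕ) (c : Fin n → ℝ) (j : Fin n) : ℂ := (1 + c j * Complex.I) / 2
noncomputable def ww (n : ℕ) (c : Fin n → ℝ) (A : Finset (Fin n)) : ℂ :=
  (∏ j ∈ A, uu n c j) * ∏ j ∈ Finset.univ \ A, vv n c j

lemma uv_one (n : ℕ) (c : Fin n → ℝ) (j : Fin n) : uu n c j + vv n c j = 1 := by
  rw [uu, vv]; ring

lemma ww_sum (n : ℕ) (c : Fin n → ℝ) :
    ∑ A ∈ (Finset.univ : Finset (Fin n)).powerset, ww n c A = 1 := by
  have := (Finset.prod_add (uu n c) (vv n c) Finset.univ).symm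
  simp only [ww]
  rw [this]
  rw [Finset.prod_congr rfl (fun j _ => uv_one n c j)]
  simp

lemma prod_expand (n : ℕ) (hn : n ≠ 0) (c : Fin n → ℝ) (k : ℕ) :
    ((∏ j, (Real.cos ((k:ℝ) * Real.pi / n) + c j * Real.sin ((k:ℝ) * Real.pi / n)) : ℝ) : ℂ)
      = ∑ A ∈ (Finset.univ : Finset (Fin n)).powerset,
          ww n c A * om n ^ ((k:ℤ) * (2 * (A.card : ℤ) - n)) := by
  set σ : ℝ := (k:ℝ) * Real.pi / n with hσ
  set z : ℂ := om n ^ (k:ℤ) with hz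
  have hz0 : z ≠ 0 := zpow_ne_zero _ (om_ne_zero n)
  have hzexp : z = Complex.exp ((σ:ℂ) * Complex.I) := by
    rw [hz, om_k_exp]
  have hzinv : z⁻¹ = Complex.exp (-((σ:ℂ) * Complex.I)) := by
    rw [hzexp, ← Complex.exp_neg]
  have hfac : ∀ j : Fin n, ((Real.cos σ + c j * Real.sin σ : ℝ) : ℂ)
      = uu n c j * z + vv n c j * z⁻¹ := by
    intro j
    rw [hzinv, hzexp]
    push_cast
    rw [Complex.cos, Complex.sin, uu, vv]
    ring
  rw [Complex.ofReal_prod]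
  calc (∏ j, ((Real.cos σ + c j * Real.sin σ : ℝ) : ℂ))
      = ∏ j, (uu n c j * z + vv n c j * z⁻¹) := by
        apply Finset.prod_congr rfl
        intro j _
        rw [hfac j, hzexp]
    _ = ∑ A ∈ (Finset.univ : Finset (Fin n)).powerset,
          (∏ j ∈ A, (uu n c j * z)) * ∏ j ∈ Finset.univ \ A, (vv n c j * z⁻¹) :=
        Finset.prod_add _ _ _
    _ = ∑ A ∈ (Finset.univ : Finset (Fin n)).powerset,
          ww n c A * om n ^ ((k:ℤ) * (2 * (A.card : ℤ) - n)) := by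
        apply Finset.sum_congr rfl
        intro A hA
        rw [Finset.mem_powerset] at hA
        have hcard : A.card ≤ n := by
          have := Finset.card_le_card hA
          simpa using this
        rw [Finset.prod_mul_distrib, Finset.prod_mul_distrib, Finset.prod_const, Finset.prod_const]
        have hcard2 : (Finset.univ \ A).card = n - A.card := by
          rw [Finset.card_sdiff_of_subset hA]
          simp
        rw [hcard2, ww]
        have hzz : z ^ A.card * (z⁻¹) ^ (n - A.card) = om n ^ ((k:ℤ) * (2 * (A.card : ℤ) - n)) := by
          rw [inv_pow, ← zpow_natCast z, ← zpow_natCast z (n - A.card), ← zpow_neg, ← zpow_add₀ hz0]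
          rw [hz, ← zpow_mul]
          congr 1
          have : ((n - A.card : ℕ) : ℤ) = (n : ℤ) - A.card := by omega
          rw [this]
          ring
        rw [← hzz]
        ring

noncomputable def eps (n : ℕ) (A : Finset (Fin n)) (j : Fin n) : ℂ := if j ∈ A then 1 else -1

lemma eps_sum (n : ℕ) (A : Finset (Fin n)) :
    ∑ j, eps n A j = 2 * (A.card : ℂ) - n := by
  have h1 : ∀ j : Fin n, eps n A j = (if j ∈ A then (2:ℂ) else 0) - 1 := by
    intro j
    rw [eps]
    split_ifs <;> ring
  rw [Finset.sum_congr rfl (fun j _ => h1 j), Finset.sum_sub_distrib]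
  rw [Finset.sum_ite_mem, Finset.univ_inter, Finset.sum_const, Finset.sum_const]
  simp [mul_comm]

lemma inner_val (n : ℕ) (c : Fin n → ℝ) (j j' : Fin n) :
    ∑ A ∈ (Finset.univ : Finset (Fin n)).powerset, ww n c A * eps n A j * eps n A j'
      = if j = j' then 1 else -((c j : ℂ) * (c j' : ℂ)) := by
  by_cases hjj : j = j'
  · subst hjj
    simp only [if_pos rfl]
    have h1 : ∀ A : Finset (Fin n), ww n c A * eps n A j * eps n A j = ww n c A := by
      intro A
      rw [eps]
      split_ifs <;> ring
    rw [Finset.sum_congr rfl (fun A _ => h1 A), ww_sum]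
    simp
  · rw [if_neg hjj]
    have key : ∀ A ∈ (Finset.univ : Finset (Fin n)).powerset,
        ww n c A * eps n A j * eps n A j'
          = (∏ l ∈ A, uu n c l) * ∏ l ∈ Finset.univ \ A,
              (vv n c l * (if l = j ∨ l = j' then -1 else 1)) := by
      intro A _
      rw [Finset.prod_mul_distrib, ww]
      have h2 : ∀ l : Fin n, (if l = j ∨ l = j' then (-1:ℂ) else 1)
          = (if l = j then (-1:ℂ) else 1) * (if l = j' then (-1:ℂ) else 1) := by
        intro l
        by_cases h3 : l = j
        · subst h3
          simp [hjj]
        · have hji : j' ≠ j := fun h => hjj h.symm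
          by_cases h4 : l = j' <;> simp [h3, h4, hji]
      have h5 : ∏ l ∈ Finset.univ \ A, (if l = j ∨ l = j' then (-1:ℂ) else 1)
          = eps n A j * eps n A j' := by
        rw [Finset.prod_congr rfl (fun l _ => h2 l), Finset.prod_mul_distrib]
        rw [Finset.prod_ite_eq' (Finset.univ \ A) j (fun _ => (-1:ℂ)),
            Finset.prod_ite_eq' (Finset.univ \ A) j' (fun _ => (-1:ℂ))]
        rw [eps, eps]
        simp only [Finset.mem_sdiff, Finset.mem_univ, true_and]
        by_cases hj : j ∈ A <;> by_cases hj' : j' ∈ A <;> simp [hj, hj']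
      rw [h5]
      ring
    rw [Finset.sum_congr rfl key]
    rw [← Finset.prod_add]
    have h6 : ∀ l : Fin n, uu n c l + vv n c l * (if l = j ∨ l = j' then -1 else 1)
        = if l = j ∨ l = j' then -((c l : ℂ) * Complex.I) else 1 := by
      intro l
      by_cases h : l = j ∨ l = j'
      · rw [if_pos h, if_pos h, uu, vv]; ring
      · rw [if_neg h, if_neg h, uu, vv]; ring
    rw [Finset.prod_congr rfl (fun l _ => h6 l)]
    have h7 : ∀ l : Fin n, (if l = j ∨ l = j' then -((c l : ℂ) * Complex.I) else 1)
        = (if l = j then -((c l : ℂ) * Complex.I) else 1) *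
          (if l = j' then -((c l : ℂ) * Complex.I) else 1) := by
      intro l
      by_cases h3 : l = j
      · subst h3
        simp [hjj]
      · have hji : j' ≠ j := fun h => hjj h.symm
        by_cases h4 : l = j' <;> simp [h3, h4, hji]
    rw [Finset.prod_congr rfl (fun l _ => h7 l), Finset.prod_mul_distrib]
    rw [Finset.prod_ite_eq' Finset.univ j (fun l => -((c l : ℂ) * Complex.I)),
        Finset.prod_ite_eq' Finset.univ j' (fun l => -((c l : ℂ) * Complex.I))]
    simp only [Finset.mem_univ, if_pos]
    have : Complex.I * Complex.I = -1 := Complex.I_mul_I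
    ring_nf
    rw [Complex.I_sq]
    ring

lemma moment (n : ℕ) (c : Fin n → ℝ) :
    ∑ A ∈ (Finset.univ : Finset (Fin n)).powerset, ww n c A * (2 * (A.card : ℂ) - n)^2
      = n + (∑ j, (c j : ℂ)^2) - (∑ j, (c j : ℂ))^2 := by
  have h1 : ∀ A ∈ (Finset.univ : Finset (Fin n)).powerset,
      ww n c A * (2 * (A.card : ℂ) - n)^2
        = ∑ j, ∑ j', ww n c A * eps n A j * eps n A j' := by
    intro A _
    rw [← eps_sum, sq, Finset.sum_mul_sum, Finset.mul_sum]
    apply Finset.sum_congr rfl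
    intro j _
    rw [Finset.mul_sum]
    apply Finset.sum_congr rfl
    intro j' _
    ring
  rw [Finset.sum_congr rfl h1, Finset.sum_comm]
  have h2 : ∀ j : Fin n, ∑ A ∈ (Finset.univ : Finset (Fin n)).powerset,
      ∑ j', ww n c A * eps n A j * eps n A j'
      = ∑ j', (if j = j' then (1:ℂ) else -((c j : ℂ) * (c j' : ℂ))) := by
    intro j
    rw [Finset.sum_comm]
    exact Finset.sum_congr rfl (fun j' _ => inner_val n c j j')
  rw [Finset.sum_congr rfl (fun j _ => h2 j)]
  have h3 : ∀ j j' : Fin n, (if j = j' then (1:ℂ) else -((c j : ℂ) * (c j' : ℂ)))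
      = -((c j : ℂ) * (c j' : ℂ)) + (if j = j' then 1 + (c j : ℂ)^2 else 0) := by
    intro j j'
    by_cases h : j = j'
    · subst h; rw [if_pos rfl, if_pos rfl]; ring
    · rw [if_neg h, if_neg h]; ring
  calc ∑ j, ∑ j', (if j = j' then (1:ℂ) else -((c j : ℂ) * (c j' : ℂ)))
      = ∑ j : Fin n, (-((c j : ℂ) * ∑ j', (c j' : ℂ)) + (1 + (c j : ℂ)^2)) := by
        apply Finset.sum_congr rfl
        intro j _
        rw [Finset.sum_congr rfl (fun j' _ => h3 j j'), Finset.sum_add_distrib]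
        congr 1
        · rw [Finset.sum_neg_distrib, ← Finset.mul_sum]
        · rw [Finset.sum_ite_eq Finset.univ j (fun _ => 1 + (c j : ℂ)^2)]
          simp
    _ = n + (∑ j, (c j : ℂ)^2) - (∑ j, (c j : ℂ))^2 := by
        rw [Finset.sum_add_distrib, Finset.sum_add_distrib]
        have hs : ∑ x : Fin n, -((c x : ℂ) * ∑ j', (c j' : ℂ)) = -((∑ j', (c j' : ℂ))^2) := by
          rw [Finset.sum_neg_distrib, ← Finset.sum_mul]
          ring
        rw [hs]
        simp [Finset.card_univ]
        ring

lemma core (n : ℕ) (hn : n ≠ 0) (c : Fin n → ℝ) (hc0 : ∑ j, c j = 0)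
    (hT : ∀ θ : ℝ, |∏ j, (Real.cos θ + c j * Real.sin θ)| ≤ 1) :
    ∑ j, (c j)^2 ≤ n * ((n:ℝ) - 1) := by
  set Tk : ℕ → ℝ := fun k => ∏ j, (Real.cos ((k:ℝ) * Real.pi / n) + c j * Real.sin ((k:ℝ) * Real.pi / n)) with hTk
  -- complex key identity
  have KEYC : ∑ k ∈ Finset.Ico 1 (2 * n), (nu n k : ℂ) * (1 - (Tk k : ℂ))
      = n + (∑ j, (c j : ℂ)^2) - (∑ j, (c j : ℂ))^2 := by
    have hstep : ∀ k ∈ Finset.Ico 1 (2 * n), (nu n k : ℂ) * (1 - (Tk k : ℂ))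
        = ∑ A ∈ (Finset.univ : Finset (Fin n)).powerset,
            ww n c A * (nuC n k * (1 - om n ^ ((k:ℤ) * (2 * (A.card : ℤ) - n)))) := by
      intro k hk
      rw [Finset.mem_Ico] at hk
      rw [nu_cast n hn k hk.1 hk.2]
      rw [hTk]
      rw [prod_expand n hn c k]
      have h1 : (1:ℂ) = ∑ A ∈ (Finset.univ : Finset (Fin n)).powerset, ww n c A := (ww_sum n c).symm
      nth_rewrite 1 [h1]
      rw [← Finset.sum_sub_distrib, Finset.mul_sum]
      apply Finset.sum_congr rfl
      intro A _
      ring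
    rw [Finset.sum_congr rfl hstep, Finset.sum_comm]
    have h2 : ∀ A ∈ (Finset.univ : Finset (Fin n)).powerset,
        ∑ k ∈ Finset.Ico 1 (2 * n), ww n c A * (nuC n k * (1 - om n ^ ((k:ℤ) * (2 * (A.card : ℤ) - n))))
          = ww n c A * (2 * (A.card : ℂ) - n)^2 := by
      intro A hA
      rw [Finset.mem_powerset] at hA
      have hcard : A.card ≤ n := by
        have := Finset.card_le_card hA
        simpa using this
      rw [← Finset.mul_sum, Eprime n hn A.card hcard]
    rw [Finset.sum_congr rfl h2, moment n c]
  -- real key identity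
  have RKEY : ∑ k ∈ Finset.Ico 1 (2 * n), nu n k * (1 - Tk k) = n + ∑ j, (c j)^2 := by
    have hinj := Complex.ofReal_injective
    apply hinj
    push_cast
    rw [KEYC]
    have : (∑ j, (c j : ℂ)) = ((∑ j, c j : ℝ) : ℂ) := by push_cast; rfl
    rw [this, hc0]
    push_cast
    ring
  -- n² identity
  have NSQ : ∑ k ∈ Finset.Ico 1 (2 * n), nu n k * (1 - (-1:ℝ)^k) = (n:ℝ)^2 := by
    have hE := Eprime n hn n (le_refl n)
    have h3 : ∀ k ∈ Finset.Ico 1 (2 * n),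
        nuC n k * (1 - om n ^ ((k:ℤ) * (2 * (n:ℤ) - n))) = (nu n k : ℂ) * (1 - (-1:ℂ)^k) := by
      intro k hk
      rw [Finset.mem_Ico] at hk
      rw [nu_cast n hn k hk.1 hk.2]
      congr 2
      have h4 : (k:ℤ) * (2 * (n:ℤ) - n) = (k:ℤ) * n := by ring
      rw [h4, zpow_mul, zpow_natCast, om_k_pow_n n hn k]
    rw [Finset.sum_congr rfl h3] at hE
    have hinj := Complex.ofReal_injective
    apply hinj
    push_cast
    rw [hE]
    push_cast
    ring
  -- positivity of each defect term
  have hterm : ∀ k ∈ Finset.Ico 1 (2 * n), 0 ≤ nu n k * (Tk k - (-1:ℝ)^k) := by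
    intro k hk
    rw [Finset.mem_Ico] at hk
    have hTb : |Tk k| ≤ 1 := by
      rw [hTk]
      have := hT ((k:ℝ) * Real.pi / n)
      simpa using this
    rw [abs_le] at hTb
    have hcos := cos_lt_one' n hn k hk.1 hk.2
    have hden : 0 < 1 - Real.cos ((k:ℝ) * Real.pi / n) := by linarith
    rw [nu]
    rcases Nat.even_or_odd k with he | ho
    · rw [Even.neg_one_pow he]
      have h5 : (-1:ℝ)^(k+1) = -1 := by
        rw [Odd.neg_one_pow]
        exact Even.add_one he
      rw [h5]
      have : -1 / (1 - Real.cos ((k:ℝ) * Real.pi / n)) * (Tk k - 1)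
          = (1 - Tk k) / (1 - Real.cos ((k:ℝ) * Real.pi / n)) := by ring
      rw [this]
      apply div_nonneg (by linarith) (by linarith)
    · rw [Odd.neg_one_pow ho]
      have h5 : (-1:ℝ)^(k+1) = 1 := by
        rw [Even.neg_one_pow]
        exact Odd.add_one ho
      rw [h5]
      have : 1 / (1 - Real.cos ((k:ℝ) * Real.pi / n)) * (Tk k - (-1))
          = (Tk k + 1) / (1 - Real.cos ((k:ℝ) * Real.pi / n)) := by ring
      rw [this]
      apply div_nonneg (by linarith) (by linarith)
  have hsum : 0 ≤ ∑ k ∈ Finset.Ico 1 (2 * n), nu n k * (Tk k - (-1:ℝ)^k) :=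
    Finset.sum_nonneg hterm
  have hsplit : ∑ k ∈ Finset.Ico 1 (2 * n), nu n k * (Tk k - (-1:ℝ)^k)
      = (∑ k ∈ Finset.Ico 1 (2 * n), nu n k * (1 - (-1:ℝ)^k))
        - ∑ k ∈ Finset.Ico 1 (2 * n), nu n k * (1 - Tk k) := by
    rw [← Finset.sum_sub_distrib]
    apply Finset.sum_congr rfl
    intros; ring
  rw [hsplit, NSQ, RKEY] at hsum
  nlinarith [hsum]

open Matrix

theorem slice_norm_bound (n : ℕ) (hn : 2 ≤ n)
    (M : Matrix (Fin n) (Fin n) ℝ) (hM : M.PosDef)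
    (hones : M.mulVec (fun _ => 1) = fun _ => 1)
    (hb : ∀ b : Fin n → ℝ, b ⬝ᵥ M.mulVec b = n → ∏ j, |M.mulVec b j| ≤ 1) :
    ∀ v : Fin n → ℝ, v ⬝ᵥ M.mulVec v = n → ∑ j, v j = 0 →
      ∑ j, (M.mulVec v j) ^ 2 ≤ n * ((n : ℝ) - 1) := by
  intro v hv hvsum
  have hn0 : n ≠ 0 := by omega
  set c : Fin n → ℝ := M.mulVec v with hc
  have hsymm : Mᵀ = M := hM.1
  -- sum of c is zero
  have hc0 : ∑ j, c j = 0 := by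
    have h1 : ∑ j, c j = (fun _ => (1:ℝ)) ⬝ᵥ c := by
      rw [dotProduct]
      simp
    rw [h1, hc, dotProduct_mulVec, ← hsymm, vecMul_transpose, hones]
    rw [dotProduct]
    simpa using hvsum
  have hvc : v ⬝ᵥ c = n := hv
  -- the trigonometric product bound
  have hT : ∀ θ : ℝ, |∏ j, (Real.cos θ + c j * Real.sin θ)| ≤ 1 := by
    intro θ
    set b : Fin n → ℝ := fun i => Real.cos θ + Real.sin θ * v i with hbdef
    have hbsplit : b = Real.cos θ • (fun _ => (1:ℝ)) + Real.sin θ • v := by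
      funext i
      simp [hbdef]
    have hMb : M.mulVec b = fun i => Real.cos θ + Real.sin θ * c i := by
      rw [hbsplit, mulVec_add, mulVec_smul, mulVec_smul, hones, hc]
      funext i
      simp
    have hbMb : b ⬝ᵥ M.mulVec b = n := by
      rw [hMb, dotProduct]
      have h2 : ∀ i : Fin n, b i * (Real.cos θ + Real.sin θ * c i)
          = Real.cos θ ^ 2 * 1 + Real.cos θ * Real.sin θ * c i
            + Real.sin θ * Real.cos θ * v i + Real.sin θ ^ 2 * (v i * c i) := by
        intro i
        rw [hbdef]
        ring
      rw [Finset.sum_congr rfl (fun i _ => h2 i)]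
      rw [Finset.sum_add_distrib, Finset.sum_add_distrib, Finset.sum_add_distrib]
      rw [← Finset.mul_sum, ← Finset.mul_sum, ← Finset.mul_sum, ← Finset.mul_sum]
      rw [hc0, hvsum]
      have h3 : ∑ i, v i * c i = (n:ℝ) := hvc
      rw [h3]
      simp [Finset.card_univ]
      nlinarith [Real.sin_sq_add_cos_sq θ]
    have hple := hb b hbMb
    rw [hMb] at hple
    calc |∏ j, (Real.cos θ + c j * Real.sin θ)|
        = ∏ j, |Real.cos θ + Real.sin θ * c j| := by
          rw [Finset.abs_prod]
          apply Finset.prod_congr rfl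
          intros j _
          rw [mul_comm (c j)]
      _ ≤ 1 := hple
  have := core n hn0 c hc0 hT
  exact this
end

section
/- Let a_1,...,a_n be real numbers and T(θ) = ∏_{j=1}^n (cos θ + a_j sin θ). If |T(θ)| ≤ 1 for all θ ∈ [0, 2π], then n + Σ_j a_j² ≤ n², i.e., Σ_j a_j² ≤ n(n−1). -/
open Real

open Finset Complex

private theorem sum_Icc_int {M : Type*} [AddCommMonoid M] (a b : ℤ) (f : ℤ → M) :
    ∑ m ∈ Finset.Icc a b, f m = ∑ k ∈ Finset.range ((b+1-a).toNat), f (a + k) := by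
  apply Finset.sum_nbij' (fun m => (m - a).toNat) (fun k => a + (k:ℤ)) <;>
    intros x hx <;> simp at hx ⊢ <;> try omega
  congr 1; omega

private theorem w_ne_zero (n : ℕ) (hn : n ≠ 0) (w : ℂ) (h1 : w ^ (2*n) = 1) : w ≠ 0 := by
  intro h; rw [h] at h1
  rw [zero_pow (by omega : 2*n ≠ 0)] at h1
  exact zero_ne_one h1

private theorem w_pow_n_sq (n : ℕ) (hn : n ≠ 0) (w : ℂ) (h1 : w ^ (2*n) = 1) :
    w ^ (n:ℤ) * w ^ (n:ℤ) = 1 := by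
  have : w ^ (n:ℤ) * w ^ (n:ℤ) = w ^ (2*n : ℕ) := by
    rw [← zpow_natCast w (2*n)]
    rw [← zpow_add₀ (w_ne_zero n hn w h1)]
    congr 1; push_cast; ring
  rw [this, h1]

private theorem w_zpow_neg_n (n : ℕ) (hn : n ≠ 0) (w : ℂ) (h1 : w ^ (2*n) = 1) :
    w ^ (-(n:ℤ)) = w ^ (n:ℤ) := by
  rw [zpow_neg]
  exact inv_eq_of_mul_eq_one_left (w_pow_n_sq n hn w h1)

private theorem geo2 (n : ℕ) (hn : n ≠ 0) (w : ℂ) (h1 : w ^ (2*n) = 1) (h2 : w ≠ 1) :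
    ∑ m ∈ Finset.Icc (-(n:ℤ)+1) ((n:ℤ)-1), w ^ m = - w ^ (n:ℤ) := by
  have hw0 : w ≠ 0 := w_ne_zero n hn w h1
  rw [sum_Icc_int]
  have hsz : (((n:ℤ)-1)+1-(-(n:ℤ)+1)).toNat = 2*n-1 := by omega
  rw [hsz]
  have : ∀ k ∈ Finset.range (2*n-1), w ^ ((-(n:ℤ)+1) + (k:ℤ)) = w ^ (-(n:ℤ)+1) * w ^ (k:ℕ) := by
    intro k _
    rw [zpow_add₀ hw0]
    norm_cast
  rw [Finset.sum_congr rfl this, ← Finset.mul_sum, geom_sum_eq h2]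
  have h2n : w ^ (2*n-1 : ℕ) = w⁻¹ := by
    have h3 : w ^ (2*n-1 : ℕ) * w = 1 := by
      rw [← pow_succ]
      have : 2*n - 1 + 1 = 2*n := by omega
      rw [this, h1]
    field_simp
    linear_combination h3
  rw [h2n]
  have hq : (w⁻¹ - 1)/(w - 1) = -w⁻¹ := by
    rw [div_eq_iff (sub_ne_zero.mpr h2)]
    field_simp
    ring
  rw [hq]
  have key : w ^ (-(n:ℤ)+1) = w * w ^ (n:ℤ) := by
    rw [zpow_add₀ hw0, w_zpow_neg_n n hn w h1]; simp [mul_comm]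
  rw [key]
  field_simp

private def Bf (n : ℕ) : ℤ → ℂ := fun m => if -(n:ℤ) ≤ m ∧ m ≤ (n:ℤ) then (n:ℂ)^2 - (m:ℂ)^2 else 0

private theorem sum_icc_of_support (f : ℤ → ℂ) (lo hi a b : ℤ) (ha : a ≤ lo) (hb : hi ≤ b)
    (hs : ∀ m, m < lo ∨ hi < m → f m = 0) :
    ∑ m ∈ Finset.Icc a b, f m = ∑ m ∈ Finset.Icc lo hi, f m := by
  symm
  apply Finset.sum_subset (Finset.Icc_subset_Icc ha hb)
  intro m hm1 hm2
  apply hs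
  simp [Finset.mem_Icc] at hm1 hm2
  omega

private theorem shiftIcc (a b c : ℤ) (f : ℤ → ℂ) :
    ∑ m ∈ Finset.Icc a b, f (m + c) = ∑ m ∈ Finset.Icc (a+c) (b+c), f m := by
  rw [← Finset.map_add_right_Icc, Finset.sum_map]
  rfl

private theorem shiftIcc' (a b c : ℤ) (f : ℤ → ℂ) :
    ∑ m ∈ Finset.Icc a b, f (m - c) = ∑ m ∈ Finset.Icc (a-c) (b-c), f m := by
  have : ∀ m : ℤ, f (m - c) = f (m + (-c)) := by intro m; rw [sub_eq_add_neg]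
  rw [Finset.sum_congr rfl (fun m _ => this m), shiftIcc]
  congr 1 <;> ring

private theorem keyC (n : ℕ) (hn : n ≠ 0) (w : ℂ) (h1 : w ^ (2*n) = 1) (h2 : w ≠ 1) :
    (∑ m ∈ Finset.Icc (-(n:ℤ)) (n:ℤ), ((n:ℂ)^2 - (m:ℂ)^2) * w ^ (-m)) * (2 - w - w⁻¹)
      = -4 * n * w ^ (n:ℤ) := by
  have hw0 : w ≠ 0 := w_ne_zero n hn w h1
  have hwn := w_zpow_neg_n n hn w h1
  have hcore : ∑ m ∈ Finset.Icc (-(n:ℤ)) (n:ℤ), ((n:ℂ)^2 - (m:ℂ)^2) * w ^ (-m)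
      = ∑ m ∈ Finset.Icc (-(n:ℤ)-1) ((n:ℤ)+1), Bf n m * w ^ (-m) := by
    rw [sum_icc_of_support (fun m => Bf n m * w ^ (-m)) (-(n:ℤ)) (n:ℤ) _ _ (by omega) (by omega)
      (by intro m hm; simp only [Bf]; rw [if_neg (by omega), zero_mul])]
    apply Finset.sum_congr rfl
    intro m hm
    simp only [Finset.mem_Icc] at hm
    simp only [Bf]
    rw [if_pos (by omega)]
  rw [hcore]
  have e1 : ∀ m : ℤ, w ^ (-(m-1)) = w ^ (-m) * w := by
    intro m
    have : -(m-1) = -m + 1 := by ring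
    rw [this, zpow_add₀ hw0, zpow_one]
  have e2 : ∀ m : ℤ, w ^ (-(m+1)) = w ^ (-m) * w⁻¹ := by
    intro m
    have : -(m+1) = -m + (-1) := by ring
    rw [this, zpow_add₀ hw0, zpow_neg_one]
  have hS2 : ∑ m ∈ Finset.Icc (-(n:ℤ)-1) ((n:ℤ)+1), Bf n m * w ^ (-(m-1))
      = ∑ m ∈ Finset.Icc (-(n:ℤ)-1) ((n:ℤ)+1), Bf n (m+1) * w ^ (-m) := by
    have hpt : ∀ m : ℤ, Bf n m * w ^ (-(m-1)) = (fun m' => Bf n (m'+1) * w ^ (-m')) (m - 1) := by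
      intro m
      simp only []
      have h3 : m - 1 + 1 = m := by ring
      rw [h3]
    rw [Finset.sum_congr rfl (fun m _ => hpt m),
      shiftIcc' (-(n:ℤ)-1) ((n:ℤ)+1) 1 (fun m' => Bf n (m'+1) * w ^ (-m'))]
    rw [sum_icc_of_support (fun m' => Bf n (m'+1) * w ^ (-m')) (-(n:ℤ)-1) ((n:ℤ)-1) _ _
      (by omega) (by omega)
      (by intro m hm; simp only [Bf]; rw [if_neg (by omega), zero_mul])]
    rw [sum_icc_of_support (fun m' => Bf n (m'+1) * w ^ (-m')) (-(n:ℤ)-1) ((n:ℤ)-1)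
      (-(n:ℤ)-1) ((n:ℤ)+1) (by omega) (by omega)
      (by intro m hm; simp only [Bf]; rw [if_neg (by omega), zero_mul])]
  have hS3 : ∑ m ∈ Finset.Icc (-(n:ℤ)-1) ((n:ℤ)+1), Bf n m * w ^ (-(m+1))
      = ∑ m ∈ Finset.Icc (-(n:ℤ)-1) ((n:ℤ)+1), Bf n (m-1) * w ^ (-m) := by
    have hpt : ∀ m : ℤ, Bf n m * w ^ (-(m+1)) = (fun m' => Bf n (m'-1) * w ^ (-m')) (m + 1) := by
      intro m
      simp only []
      have h3 : m + 1 - 1 = m := by ring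
      rw [h3]
    rw [Finset.sum_congr rfl (fun m _ => hpt m),
      shiftIcc (-(n:ℤ)-1) ((n:ℤ)+1) 1 (fun m' => Bf n (m'-1) * w ^ (-m'))]
    rw [sum_icc_of_support (fun m' => Bf n (m'-1) * w ^ (-m')) (-(n:ℤ)+1) ((n:ℤ)+1) _ _
      (by omega) (by omega)
      (by intro m hm; simp only [Bf]; rw [if_neg (by omega), zero_mul])]
    rw [sum_icc_of_support (fun m' => Bf n (m'-1) * w ^ (-m')) (-(n:ℤ)+1) ((n:ℤ)+1)
      (-(n:ℤ)-1) ((n:ℤ)+1) (by omega) (by omega)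
      (by intro m hm; simp only [Bf]; rw [if_neg (by omega), zero_mul])]
  have expand : (∑ m ∈ Finset.Icc (-(n:ℤ)-1) ((n:ℤ)+1), Bf n m * w ^ (-m)) * (2 - w - w⁻¹)
      = ∑ m ∈ Finset.Icc (-(n:ℤ)-1) ((n:ℤ)+1),
          (2 * (Bf n m * w ^ (-m)) - Bf n m * w ^ (-(m-1)) - Bf n m * w ^ (-(m+1))) := by
    rw [Finset.sum_mul]
    apply Finset.sum_congr rfl
    intro m _
    rw [e1, e2]
    ring
  rw [expand, Finset.sum_sub_distrib, Finset.sum_sub_distrib, hS2, hS3,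
    ← Finset.sum_sub_distrib, ← Finset.sum_sub_distrib]
  -- now pointwise evaluation
  have hpsi : ∀ m ∈ Finset.Icc (-(n:ℤ)-1) ((n:ℤ)+1),
      2 * (Bf n m * w ^ (-m)) - Bf n (m+1) * w ^ (-m) - Bf n (m-1) * w ^ (-m)
        = (if -(n:ℤ)+1 ≤ m ∧ m ≤ (n:ℤ)-1 then 2 * w ^ (-m) else 0)
          + (if m = (n:ℤ) then -(2*(n:ℂ)-1) * w ^ (-m) else 0)
          + (if m = -(n:ℤ) then -(2*(n:ℂ)-1) * w ^ (-m) else 0) := by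
    intro m hm
    simp only [Finset.mem_Icc] at hm
    have hcase : m = -(n:ℤ)-1 ∨ m = -(n:ℤ) ∨ (-(n:ℤ)+1 ≤ m ∧ m ≤ (n:ℤ)-1) ∨ m = (n:ℤ)
        ∨ m = (n:ℤ)+1 := by omega
    simp only [Bf]
    rcases hcase with h | h | h | h | h <;> try subst h
    all_goals split_ifs <;> try omega
    all_goals (push_cast; ring)
  rw [Finset.sum_congr rfl hpsi]
  rw [Finset.sum_add_distrib, Finset.sum_add_distrib]
  have t2 : ∑ m ∈ Finset.Icc (-(n:ℤ)-1) ((n:ℤ)+1),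
      (if m = (n:ℤ) then -(2*(n:ℂ)-1) * w ^ (-m) else 0) = -(2*(n:ℂ)-1) * w ^ (n:ℤ) := by
    rw [Finset.sum_ite_eq' (Finset.Icc (-(n:ℤ)-1) ((n:ℤ)+1)) ((n:ℤ)) (fun m => -(2*(n:ℂ)-1) * w ^ (-m))]
    rw [if_pos (by simp [Finset.mem_Icc]; omega)]
    rw [hwn]
  have t3 : ∑ m ∈ Finset.Icc (-(n:ℤ)-1) ((n:ℤ)+1),
      (if m = -(n:ℤ) then -(2*(n:ℂ)-1) * w ^ (-m) else 0) = -(2*(n:ℂ)-1) * w ^ (n:ℤ) := by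
    rw [Finset.sum_ite_eq' (Finset.Icc (-(n:ℤ)-1) ((n:ℤ)+1)) (-(n:ℤ)) (fun m => -(2*(n:ℂ)-1) * w ^ (-m))]
    rw [if_pos (by simp [Finset.mem_Icc]; omega)]
    norm_num
  have t1 : ∑ m ∈ Finset.Icc (-(n:ℤ)-1) ((n:ℤ)+1),
      (if -(n:ℤ)+1 ≤ m ∧ m ≤ (n:ℤ)-1 then 2 * w ^ (-m) else 0) = 2 * (- w ^ (n:ℤ)) := by
    have : ∀ m : ℤ, (if -(n:ℤ)+1 ≤ m ∧ m ≤ (n:ℤ)-1 then 2 * w ^ (-m) else 0)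
        = (if m ∈ Finset.Icc (-(n:ℤ)+1) ((n:ℤ)-1) then 2 * w ^ (-m) else 0) := by
      intro m; simp [Finset.mem_Icc]
    rw [Finset.sum_congr rfl (fun m _ => this m), Finset.sum_ite_mem]
    rw [Finset.inter_eq_right.mpr (Finset.Icc_subset_Icc (by omega) (by omega))]
    rw [← Finset.mul_sum]
    congr 1
    have hinv : ∀ m : ℤ, w ^ (-m) = (w⁻¹) ^ m := by
      intro m; rw [zpow_neg, inv_zpow]
    rw [Finset.sum_congr rfl (fun m _ => hinv m)]
    rw [geo2 n hn w⁻¹ (by rw [inv_pow, h1, inv_one]) (by simpa using h2)]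
    rw [inv_zpow, ← zpow_neg, hwn]
  rw [t1, t2, t3]
  ring

noncomputable def zetaC (n : ℕ) : ℂ := Complex.exp (Real.pi * Complex.I / n)

private theorem zeta_prim (n : ℕ) (hn : n ≠ 0) : IsPrimitiveRoot (zetaC n) (2*n) := by
  have h := Complex.isPrimitiveRoot_exp (2*n) (by positivity)
  have hne : (n:ℂ) ≠ 0 := by exact_mod_cast hn
  have : (2:ℂ) * Real.pi * I / ((2*n:ℕ):ℂ) = Real.pi * I / n := by
    push_cast
    field_simp
  rwa [this] at h

private theorem zeta_ne_zero (n : ℕ) : zetaC n ≠ 0 := Complex.exp_ne_zero _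

noncomputable def Cc (n : ℕ) (k : ℕ) : ℂ :=
  (2*(n:ℂ))⁻¹ * ∑ m ∈ Finset.Icc (-(n:ℤ)) (n:ℤ), ((n:ℂ)^2 - (m:ℂ)^2) * (zetaC n) ^ (-(k:ℤ)*m)

private theorem orth (n : ℕ) (hn : n ≠ 0) (m : ℤ) (hm : -(n:ℤ) ≤ m ∧ m ≤ n) :
    ∑ k ∈ Finset.range (2*n), Cc n k * (zetaC n) ^ ((k:ℤ)*m) = (n:ℂ)^2 - (m:ℂ)^2 := by
  have hz0 := zeta_ne_zero n
  have hprim := zeta_prim n hn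
  have hstep : ∀ k ∈ Finset.range (2*n), Cc n k * (zetaC n) ^ ((k:ℤ)*m)
      = (2*(n:ℂ))⁻¹ * ∑ m' ∈ Finset.Icc (-(n:ℤ)) (n:ℤ),
          ((n:ℂ)^2 - (m':ℂ)^2) * ((zetaC n) ^ (m - m')) ^ (k:ℕ) := by
    intro k _
    simp only [Cc]
    rw [mul_assoc]
    congr 1
    rw [Finset.sum_mul]
    apply Finset.sum_congr rfl
    intro m' _
    rw [mul_assoc]
    congr 1
    rw [← zpow_natCast ((zetaC n) ^ (m - m')) k, ← zpow_mul, ← zpow_add₀ hz0]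
    congr 1
    ring
  rw [Finset.sum_congr rfl hstep, ← Finset.mul_sum, Finset.sum_comm]
  have inner : ∀ m' ∈ Finset.Icc (-(n:ℤ)) (n:ℤ),
      ∑ k ∈ Finset.range (2*n), ((n:ℂ)^2 - (m':ℂ)^2) * ((zetaC n) ^ (m - m')) ^ (k:ℕ)
        = if m' = m then (2*(n:ℂ)) * ((n:ℂ)^2 - (m:ℂ)^2) else 0 := by
    intro m' hm'
    simp only [Finset.mem_Icc] at hm'
    rw [← Finset.mul_sum]
    by_cases he : m' = m
    · subst he
      rw [if_pos rfl]
      simp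
      ring
    · rw [if_neg he]
      by_cases hdvd : ((2*n : ℕ):ℤ) ∣ (m - m')
      · -- then m' = ±n and m = ∓n, so coefficient is 0
        have hn1 : (1:ℤ) ≤ (n:ℤ) := by exact_mod_cast Nat.one_le_iff_ne_zero.mpr hn
        have : m' = (n:ℤ) ∨ m' = -(n:ℤ) := by
          rcases hdvd with ⟨c, hc⟩
          push_cast at hc
          have hc' : c = 1 ∨ c = -1 := by
            by_contra hcon
            push_neg at hcon
            have h0 : c ≠ 0 := by
              rintro rfl
              simp at hc
              omega
            have hcc : c ≤ -2 ∨ 2 ≤ c := by omega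
            rcases hcc with h | h <;> nlinarith [hm.1, hm.2, hm'.1, hm'.2]
          rcases hc' with h | h <;> (subst h; omega)
        have hb : (n:ℂ)^2 - (m':ℂ)^2 = 0 := by
          rcases this with h | h <;> (subst h; push_cast; ring)
        rw [hb, zero_mul]
      · have hne1 : (zetaC n) ^ (m - m') ≠ 1 := by
          intro hcontra
          exact hdvd ((hprim.zpow_eq_one_iff_dvd _).mp hcontra)
        rw [geom_sum_eq hne1]
        have : ((zetaC n) ^ (m - m')) ^ (2*n) = 1 := by
          rw [← zpow_natCast ((zetaC n)^(m-m')) (2*n), ← zpow_mul, mul_comm, zpow_mul, zpow_natCast,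
            hprim.pow_eq_one, one_zpow]
        rw [this]
        simp
  rw [Finset.sum_congr rfl inner, Finset.sum_ite_eq' (Finset.Icc (-(n:ℤ)) (n:ℤ)) m]
  rw [if_pos (by simp [Finset.mem_Icc]; omega)]
  rw [← mul_assoc]
  have h2n : (2*(n:ℂ)) ≠ 0 := by
    simp
    omega
  rw [inv_mul_cancel₀ h2n, one_mul]

open Finset in
private theorem prodExpand (n : ℕ) (u v : Fin n → ℂ) (z : ℂ) (hz : z ≠ 0) :
    ∏ j, (u j * z + v j * z⁻¹)
      = ∑ t ∈ (Finset.univ : Finset (Fin n)).powerset,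
          ((∏ j ∈ t, u j) * (∏ j ∈ Finset.univ \ t, v j)) * z ^ (2*(t.card:ℤ) - n) := by
  rw [Finset.prod_add]
  apply Finset.sum_congr rfl
  intro t ht
  simp only [Finset.mem_powerset] at ht
  have hcard : t.card ≤ n := by
    have := Finset.card_le_card ht
    simpa using this
  rw [Finset.prod_mul_distrib, Finset.prod_mul_distrib, Finset.prod_const, Finset.prod_const]
  have hcs : (Finset.univ \ t).card = n - t.card := by
    rw [Finset.card_sdiff_of_subset ht]
    simp
  rw [hcs]
  have hzp : z ^ t.card * (z⁻¹) ^ (n - t.card) = z ^ (2*(t.card:ℤ) - n) := by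
    rw [inv_pow, ← zpow_natCast z t.card, ← zpow_natCast z (n - t.card), ← zpow_neg,
      ← zpow_add₀ hz]
    congr 1
    have : ((n - t.card : ℕ) : ℤ) = (n:ℤ) - t.card := by omega
    rw [this]
    ring
  rw [← hzp]
  ring

open Finset in
private theorem innerA (n : ℕ) (u v : Fin n → ℂ) (huv : ∀ j, u j + v j = 1) (j l : Fin n) :
    ∑ t ∈ (Finset.univ : Finset (Fin n)).powerset,
        ((∏ i ∈ t, u i) * (∏ i ∈ Finset.univ \ t, v i))
          * ((if j ∈ t then (1:ℂ) else 0) * (if l ∈ t then (0:ℂ) else 1))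
      = if j = l then 0 else u j * v l := by
  classical
  set u' : Fin n → ℂ := fun i => if i = l then 0 else u i with hu'
  set v' : Fin n → ℂ := fun i => if i = j then 0 else v i with hv'
  have key : ∀ t ∈ (Finset.univ : Finset (Fin n)).powerset,
      ((∏ i ∈ t, u i) * (∏ i ∈ Finset.univ \ t, v i))
          * ((if j ∈ t then (1:ℂ) else 0) * (if l ∈ t then (0:ℂ) else 1))
        = (∏ i ∈ t, u' i) * (∏ i ∈ Finset.univ \ t, v' i) := by
    intro t _
    have h1 : (∏ i ∈ t, u' i) = (∏ i ∈ t, u i) * (if l ∈ t then 0 else 1) := by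
      by_cases hl : l ∈ t
      · rw [if_pos hl, Finset.prod_eq_zero hl (by simp [hu'])]
        ring
      · rw [if_neg hl, Finset.prod_congr rfl (fun i hi => by
          simp only [hu']
          rw [if_neg (by rintro rfl; exact hl hi)])]
        ring
    have h2 : (∏ i ∈ Finset.univ \ t, v' i) = (∏ i ∈ Finset.univ \ t, v i) * (if j ∈ t then 1 else 0) := by
      by_cases hj : j ∈ t
      · rw [if_pos hj, Finset.prod_congr rfl (fun i hi => by
          simp only [hv']
          rw [if_neg (by rintro rfl; simp [hj] at hi)])]
        ring
      · have hj' : j ∈ Finset.univ \ t := by simp [hj]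
        rw [if_neg hj, Finset.prod_eq_zero hj' (by simp [hv'])]
        ring
    rw [h1, h2]
    ring
  rw [Finset.sum_congr rfl key, ← Finset.prod_add]
  by_cases hjl : j = l
  · subst hjl
    rw [if_pos rfl]
    apply Finset.prod_eq_zero (Finset.mem_univ j)
    simp [hu', hv']
  · rw [if_neg hjl]
    have hfj : u' j + v' j = u j := by simp [hu', hv', hjl]
    have hfl : u' l + v' l = v l := by
      simp only [hu', hv']
      rw [if_pos trivial, if_neg (fun h => hjl h.symm)]
      ring
    rw [← Finset.mul_prod_erase Finset.univ _ (Finset.mem_univ j)]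
    have hlmem : l ∈ Finset.univ.erase j := by
      simp [Finset.mem_erase]
      exact fun h => hjl h.symm
    rw [← Finset.mul_prod_erase _ _ hlmem]
    have hrest : ∏ i ∈ (Finset.univ.erase j).erase l, (u' i + v' i) = 1 := by
      apply Finset.prod_eq_one
      intro i hi
      simp only [Finset.mem_erase] at hi
      simp only [hu', hv']
      rw [if_neg hi.1, if_neg hi.2.1]
      exact huv i
    rw [hrest, hfj, hfl]
    ring

open Finset in
private theorem pairSum (n : ℕ) (u v : Fin n → ℂ) (huv : ∀ j, u j + v j = 1) :
    ∑ t ∈ (Finset.univ : Finset (Fin n)).powerset,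
        ((∏ i ∈ t, u i) * (∏ i ∈ Finset.univ \ t, v i)) * ((t.card:ℂ) * ((n:ℂ) - t.card))
      = (∑ j, u j) * (∑ l, v l) - ∑ j, u j * v j := by
  classical
  have hrw : ∀ t ∈ (Finset.univ : Finset (Fin n)).powerset,
      ((∏ i ∈ t, u i) * (∏ i ∈ Finset.univ \ t, v i)) * ((t.card:ℂ) * ((n:ℂ) - t.card))
        = ∑ j, ∑ l, ((∏ i ∈ t, u i) * (∏ i ∈ Finset.univ \ t, v i))
            * ((if j ∈ t then (1:ℂ) else 0) * (if l ∈ t then (0:ℂ) else 1)) := by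
    intro t _
    have hc1 : ((t.card:ℂ)) = ∑ j, if j ∈ t then (1:ℂ) else 0 := by
      rw [Finset.sum_ite_mem, Finset.univ_inter, Finset.sum_const, nsmul_eq_mul, mul_one]
    have hc2 : ((n:ℂ) - t.card) = ∑ l, if l ∈ t then (0:ℂ) else 1 := by
      have hpt : ∀ l : Fin n, (if l ∈ t then (0:ℂ) else 1) = 1 - (if l ∈ t then 1 else 0) := by
        intro l; split_ifs <;> ring
      rw [Finset.sum_congr rfl (fun l _ => hpt l), Finset.sum_sub_distrib, ← hc1]
      simp
    rw [hc2, hc1, Finset.sum_mul_sum]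
    rw [Finset.mul_sum]
    apply Finset.sum_congr rfl
    intro j _
    rw [Finset.mul_sum]
  rw [Finset.sum_congr rfl hrw, Finset.sum_comm]
  have hswap : ∀ j : Fin n,
      ∑ t ∈ (Finset.univ : Finset (Fin n)).powerset, ∑ l,
          ((∏ i ∈ t, u i) * (∏ i ∈ Finset.univ \ t, v i))
            * ((if j ∈ t then (1:ℂ) else 0) * (if l ∈ t then (0:ℂ) else 1))
        = ∑ l, (if j = l then (0:ℂ) else u j * v l) := by
    intro j
    rw [Finset.sum_comm]
    exact Finset.sum_congr rfl (fun l _ => innerA n u v huv j l)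
  rw [Finset.sum_congr rfl (fun j _ => hswap j)]
  have hlast : ∀ j : Fin n, ∑ l, (if j = l then (0:ℂ) else u j * v l)
      = u j * (∑ l, v l) - u j * v j := by
    intro j
    have hpt : ∀ l : Fin n, (if j = l then (0:ℂ) else u j * v l)
        = u j * v l - (if l = j then u j * v l else 0) := by
      intro l
      by_cases h : j = l
      · subst h; rw [if_pos rfl, if_pos rfl]; ring
      · rw [if_neg h, if_neg (fun hh => h hh.symm)]; ring
    rw [Finset.sum_congr rfl (fun l _ => hpt l), Finset.sum_sub_distrib,
      Finset.sum_ite_eq' Finset.univ j, if_pos (Finset.mem_univ j), ← Finset.mul_sum]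
  rw [Finset.sum_congr rfl (fun j _ => hlast j), Finset.sum_sub_distrib, ← Finset.sum_mul]

open Finset in
private theorem main_id (n : ℕ) (hn : n ≠ 0) (a : Fin n → ℝ) (hsum : ∑ j, a j = 0)
    (T : ℝ → ℝ) (hT : ∀ θ, T θ = ∏ j, (Real.cos θ + a j * Real.sin θ)) :
    ∑ k ∈ Finset.range (2*n), Cc n k * ((T ((k:ℝ) * Real.pi / n) : ℝ) : ℂ)
      = (n:ℂ)^2 - n - ∑ j, ((a j : ℂ))^2 := by
  classical
  have hz0 := zeta_ne_zero n
  have hnC : (n:ℂ) ≠ 0 := by exact_mod_cast hn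
  set u : Fin n → ℂ := fun j => (1 - Complex.I * (a j : ℂ))/2 with hu
  set v : Fin n → ℂ := fun j => (1 + Complex.I * (a j : ℂ))/2 with hv
  have huv : ∀ j, u j + v j = 1 := by intro j; simp only [hu, hv]; ring
  -- expansion of T at the sample points
  have hTk : ∀ k : ℕ, ((T ((k:ℝ) * Real.pi / n) : ℝ) : ℂ)
      = ∑ t ∈ (Finset.univ : Finset (Fin n)).powerset,
          ((∏ i ∈ t, u i) * (∏ i ∈ Finset.univ \ t, v i))
            * (zetaC n) ^ ((k:ℤ) * (2*(t.card:ℤ) - n)) := by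
    intro k
    set x : ℝ := (k:ℝ) * Real.pi / n with hx
    have hzx : Complex.exp ((x:ℂ) * Complex.I) = (zetaC n) ^ k := by
      rw [zetaC, ← Complex.exp_nat_mul]
      congr 1
      rw [hx]
      push_cast
      field_simp
    have hzxinv : Complex.exp (-(x:ℂ) * Complex.I) = ((zetaC n) ^ k)⁻¹ := by
      rw [← hzx, ← Complex.exp_neg]
      congr 1
      ring
    have hfac : ∀ j, Complex.cos (x:ℂ) + (a j : ℂ) * Complex.sin (x:ℂ)
        = u j * ((zetaC n) ^ k) + v j * ((zetaC n) ^ k)⁻¹ := by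
      intro j
      rw [Complex.cos, Complex.sin, hzx, hzxinv]
      simp only [hu, hv]
      ring
    have hcast : ((T x : ℝ) : ℂ) = ∏ j, (Complex.cos (x:ℂ) + (a j : ℂ) * Complex.sin (x:ℂ)) := by
      rw [hT]
      push_cast
      ring
    rw [hcast, Finset.prod_congr rfl (fun j _ => hfac j),
      prodExpand n u v ((zetaC n)^k) (pow_ne_zero k hz0)]
    apply Finset.sum_congr rfl
    intro t _
    congr 1
    rw [← zpow_natCast (zetaC n) k, ← zpow_mul]
  -- swap sums and use orthogonality
  have hswap : ∑ k ∈ Finset.range (2*n), Cc n k * ((T ((k:ℝ) * Real.pi / n) : ℝ) : ℂ)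
      = ∑ t ∈ (Finset.univ : Finset (Fin n)).powerset,
          ((∏ i ∈ t, u i) * (∏ i ∈ Finset.univ \ t, v i))
            * ((n:ℂ)^2 - (2*(t.card:ℂ) - n)^2) := by
    have h1 : ∀ k ∈ Finset.range (2*n), Cc n k * ((T ((k:ℝ) * Real.pi / n) : ℝ) : ℂ)
        = ∑ t ∈ (Finset.univ : Finset (Fin n)).powerset,
            ((∏ i ∈ t, u i) * (∏ i ∈ Finset.univ \ t, v i))
              * (Cc n k * (zetaC n) ^ ((k:ℤ) * (2*(t.card:ℤ) - n))) := by
      intro k _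
      rw [hTk k, Finset.mul_sum]
      apply Finset.sum_congr rfl
      intro t _
      ring
    rw [Finset.sum_congr rfl h1, Finset.sum_comm]
    apply Finset.sum_congr rfl
    intro t ht
    rw [← Finset.mul_sum]
    congr 1
    have hcard : t.card ≤ n := by
      simp only [Finset.mem_powerset] at ht
      have := Finset.card_le_card ht
      simpa using this
    rw [orth n hn (2*(t.card:ℤ) - n) (by omega)]
    push_cast
    ring
  rw [hswap]
  -- algebraic evaluation
  have hw : ∀ t ∈ (Finset.univ : Finset (Fin n)).powerset,
      ((∏ i ∈ t, u i) * (∏ i ∈ Finset.univ \ t, v i)) * ((n:ℂ)^2 - (2*(t.card:ℂ) - n)^2)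
        = 4 * (((∏ i ∈ t, u i) * (∏ i ∈ Finset.univ \ t, v i))
            * ((t.card:ℂ) * ((n:ℂ) - t.card))) := by
    intro t _
    ring
  rw [Finset.sum_congr rfl hw, ← Finset.mul_sum, pairSum n u v huv]
  have hA : ∑ j, ((a j : ℝ) : ℂ) = 0 := by exact_mod_cast hsum
  have hsu : ∑ j, u j = (n:ℂ)/2 := by
    simp only [hu]
    rw [← Finset.sum_div]
    rw [Finset.sum_sub_distrib, ← Finset.mul_sum, hA]
    simp
  have hsv : ∑ j, v j = (n:ℂ)/2 := by
    simp only [hv]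
    rw [← Finset.sum_div]
    rw [Finset.sum_add_distrib, ← Finset.mul_sum, hA]
    simp
  have huvj : ∑ j, u j * v j = ((n:ℂ) + ∑ j, ((a j:ℂ))^2)/4 := by
    have hpt : ∀ j : Fin n, u j * v j = (1 + ((a j:ℂ))^2)/4 := by
      intro j
      simp only [hu, hv]
      linear_combination (-((a j:ℂ))^2/4) * Complex.I_sq
    rw [Finset.sum_congr rfl (fun j _ => hpt j), ← Finset.sum_div, Finset.sum_add_distrib]
    simp
  rw [hsu, hsv, huvj]
  ring

private theorem cos_ne_one (n : ℕ) (hn : n ≠ 0) (k : ℕ) (hk1 : 1 ≤ k) (hk2 : k < 2*n) :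
    Real.cos ((k:ℝ) * Real.pi / n) ≠ 1 := by
  intro hc
  rw [Real.cos_eq_one_iff] at hc
  obtain ⟨m, hm⟩ := hc
  have hpi := Real.pi_ne_zero
  have hnR : (n:ℝ) ≠ 0 := by exact_mod_cast hn
  have hk : (k:ℝ) = 2*(m:ℝ)*n := by
    field_simp at hm
    apply mul_right_cancel₀ hpi
    rw [← hm]; ring
  have hkz : (k:ℤ) = 2*m*(n:ℤ) := by exact_mod_cast hk
  have hn1 : (1:ℤ) ≤ (n:ℤ) := by exact_mod_cast Nat.one_le_iff_ne_zero.mpr hn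
  have hk1' : (1:ℤ) ≤ (k:ℤ) := by exact_mod_cast hk1
  have hk2' : (k:ℤ) < 2*(n:ℤ) := by exact_mod_cast hk2
  have hm1 : 1 ≤ m ∨ m ≤ 0 := by omega
  rcases hm1 with h | h <;> nlinarith

private theorem zeta_pow_n (n : ℕ) (hn : n ≠ 0) : (zetaC n) ^ n = -1 := by
  have hnC : (n:ℂ) ≠ 0 := by exact_mod_cast hn
  rw [zetaC, ← Complex.exp_nat_mul]
  rw [show (n:ℂ) * (Real.pi * Complex.I / n) = Real.pi * Complex.I by field_simp]
  exact Complex.exp_pi_mul_I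

private theorem Cc_closed (n : ℕ) (hn : n ≠ 0) (k : ℕ) (hk1 : 1 ≤ k) (hk2 : k < 2*n) :
    Cc n k = (((-1:ℝ))^(k+1) / (1 - Real.cos ((k:ℝ) * Real.pi / n)) : ℝ) := by
  have hz0 := zeta_ne_zero n
  have hprim := zeta_prim n hn
  have hnC : (n:ℂ) ≠ 0 := by exact_mod_cast hn
  set w : ℂ := (zetaC n) ^ k with hw
  have hw2n : w ^ (2*n) = 1 := by
    rw [hw, ← pow_mul, mul_comm k (2*n), pow_mul, hprim.pow_eq_one, one_pow]
  have hwne1 : w ≠ 1 := by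
    rw [hw]
    intro hcon
    rw [hprim.pow_eq_one_iff_dvd] at hcon
    have := Nat.le_of_dvd (by omega) hcon
    omega
  have hwn : w ^ (n:ℤ) = (-1:ℂ)^k := by
    rw [hw, zpow_natCast, ← pow_mul, mul_comm, pow_mul, zeta_pow_n n hn]
  -- rewrite Cc in terms of w
  have hCc : Cc n k = (2*(n:ℂ))⁻¹ * ∑ m ∈ Finset.Icc (-(n:ℤ)) (n:ℤ), ((n:ℂ)^2 - (m:ℂ)^2) * w ^ (-m) := by
    simp only [Cc]
    congr 1
    apply Finset.sum_congr rfl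
    intro m _
    congr 1
    rw [hw, ← zpow_natCast (zetaC n) k, ← zpow_mul]
    congr 1
    ring
  have hkey := keyC n hn w hw2n hwne1
  have hmain : Cc n k * (2 - w - w⁻¹) = -2 * (-1:ℂ)^k := by
    rw [hCc, mul_assoc, hkey, hwn]
    field_simp
    ring
  -- identify 2 - w - w⁻¹ with 2 - 2cos
  set x : ℝ := (k:ℝ) * Real.pi / n with hx
  have hzx : Complex.exp ((x:ℂ) * Complex.I) = w := by
    rw [hw, zetaC, ← Complex.exp_nat_mul]
    congr 1
    rw [hx]
    push_cast
    field_simp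
  have hcos : ((Real.cos x : ℝ) : ℂ) = (w + w⁻¹)/2 := by
    rw [Complex.ofReal_cos, Complex.cos, hzx]
    rw [show -(x:ℂ) * Complex.I = -((x:ℂ) * Complex.I) by ring, Complex.exp_neg, hzx]
  have hwsum : 2 - w - w⁻¹ = 2 - 2*((Real.cos x : ℝ) : ℂ) := by
    rw [hcos]
    ring
  have hcne : (1:ℝ) - Real.cos x ≠ 0 := by
    have := cos_ne_one n hn k hk1 hk2
    rw [← hx] at this
    intro hcon
    apply this
    linarith [hcon]
  have hcast2 : ((2 - 2*Real.cos x : ℝ) : ℂ) = 2 - 2*((Real.cos x : ℝ) : ℂ) := by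
    push_cast
    ring
  have hcneC : (2:ℂ) - 2*((Real.cos x : ℝ) : ℂ) ≠ 0 := by
    intro hcon
    rw [← hcast2] at hcon
    have h2 : (2 - 2*Real.cos x : ℝ) = 0 := by exact_mod_cast hcon
    exact hcne (by linarith)
  have h1c : (1:ℂ) - ((Real.cos x : ℝ) : ℂ) ≠ 0 := by
    intro hcon
    apply hcneC
    linear_combination 2 * hcon
  rw [hwsum] at hmain
  apply mul_right_cancel₀ hcneC
  rw [hmain]
  rw [Complex.ofReal_div, Complex.ofReal_sub, Complex.ofReal_one, Complex.ofReal_pow,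
    Complex.ofReal_neg, Complex.ofReal_one]
  rw [div_mul_eq_mul_div, eq_div_iff h1c]
  ring

private theorem alt_sum_zero (n : ℕ) (hn : n ≠ 0) :
    ∑ k ∈ Finset.range (2*n), Cc n k * (-1:ℂ)^k = 0 := by
  have horth := orth n hn (n:ℤ) (by omega)
  have hpt : ∀ k ∈ Finset.range (2*n), Cc n k * (zetaC n) ^ ((k:ℤ)*(n:ℤ))
      = Cc n k * (-1:ℂ)^k := by
    intro k _
    congr 1
    rw [mul_comm ((k:ℤ)) ((n:ℤ)), zpow_mul, zpow_natCast, zpow_natCast, zeta_pow_n n hn]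
  rw [← Finset.sum_congr rfl hpt, horth]
  push_cast
  ring

open Finset in
theorem trig_poly_bound' (n : ℕ) (hn : n ≠ 0) (a : Fin n → ℝ) (hsum : ∑ j, a j = 0)
    (T : ℝ → ℝ) (hT : ∀ θ, T θ = ∏ j, (Real.cos θ + a j * Real.sin θ))
    (hbd : ∀ θ ∈ Set.Icc (0 : ℝ) (2 * Real.pi), |T θ| ≤ 1) :
    ∑ j, (a j) ^ 2 ≤ n * ((n : ℝ) - 1) := by
  have hnR : (0:ℝ) < n := by exact_mod_cast Nat.pos_of_ne_zero hn
  have hpi := Real.pi_pos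
  have hid : (((n:ℝ)^2 - n - ∑ j, (a j)^2 : ℝ) : ℂ) =
      ∑ k ∈ Finset.Ico 1 (2*n),
        ((((-1:ℝ))^(k+1) / (1 - Real.cos ((k:ℝ) * Real.pi / n))
          * (T ((k:ℝ) * Real.pi / n) - (-1:ℝ)^k) : ℝ) : ℂ) := by
    have hmain := main_id n hn a hsum T hT
    have halt := alt_sum_zero n hn
    have hsplit : ∑ k ∈ Finset.range (2*n),
        Cc n k * (((T ((k:ℝ) * Real.pi / n) : ℝ) : ℂ) - (-1:ℂ)^k)
        = (n:ℂ)^2 - n - ∑ j, ((a j : ℂ))^2 := by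
      have hd : ∀ k ∈ Finset.range (2*n),
          Cc n k * (((T ((k:ℝ) * Real.pi / n) : ℝ) : ℂ) - (-1:ℂ)^k)
          = Cc n k * ((T ((k:ℝ) * Real.pi / n) : ℝ) : ℂ) - Cc n k * (-1:ℂ)^k := by
        intro k _; ring
      rw [Finset.sum_congr rfl hd, Finset.sum_sub_distrib, hmain, halt]
      ring
    have hins : Finset.range (2*n) = insert 0 (Finset.Ico 1 (2*n)) := by
      ext x; simp [Finset.mem_range, Finset.mem_Ico]; omega
    rw [hins, Finset.sum_insert (by simp)] at hsplit
    have h00 : ((0:ℕ):ℝ) * Real.pi / n = 0 := by norm_num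
    have hT0 : T 0 = 1 := by rw [hT 0]; simp
    rw [h00, hT0] at hsplit
    norm_num at hsplit
    have hcc : ∀ k ∈ Finset.Ico 1 (2*n),
        Cc n k * (((T ((k:ℝ) * Real.pi / n) : ℝ) : ℂ) - (-1:ℂ)^k)
          = ((((-1:ℝ))^(k+1) / (1 - Real.cos ((k:ℝ) * Real.pi / n))
              * (T ((k:ℝ) * Real.pi / n) - (-1:ℝ)^k) : ℝ) : ℂ) := by
      intro k hk
      simp only [Finset.mem_Ico] at hk
      rw [Cc_closed n hn k hk.1 hk.2]
      push_cast
      ring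
    rw [Finset.sum_congr rfl hcc] at hsplit
    rw [hsplit]
    push_cast
    try ring
  have hreal : ((n:ℝ)^2 - n - ∑ j, (a j)^2 : ℝ) =
      ∑ k ∈ Finset.Ico 1 (2*n),
        (((-1:ℝ))^(k+1) / (1 - Real.cos ((k:ℝ) * Real.pi / n))
          * (T ((k:ℝ) * Real.pi / n) - (-1:ℝ)^k)) := by
    apply Complex.ofReal_injective
    rw [hid]
    push_cast
    try ring
  have hnonneg : ∀ k ∈ Finset.Ico 1 (2*n),
      0 ≤ ((-1:ℝ))^(k+1) / (1 - Real.cos ((k:ℝ) * Real.pi / n))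
          * (T ((k:ℝ) * Real.pi / n) - (-1:ℝ)^k) := by
    intro k hk
    simp only [Finset.mem_Ico] at hk
    set x : ℝ := (k:ℝ) * Real.pi / n with hx
    have hxmem : x ∈ Set.Icc (0:ℝ) (2*Real.pi) := by
      constructor
      · positivity
      · rw [hx, div_le_iff₀ hnR]
        have : (k:ℝ) ≤ 2*n := by
          have : (k:ℝ) < 2*n := by exact_mod_cast hk.2
          linarith
        nlinarith
    have habs := abs_le.mp (hbd x hxmem)
    have hcos1 : Real.cos x ≤ 1 := Real.cos_le_one x
    have hcne : Real.cos x ≠ 1 := by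
      rw [hx]; exact cos_ne_one n hn k hk.1 hk.2
    have hcpos : 0 < 1 - Real.cos x := by
      rcases lt_or_eq_of_le hcos1 with h | h
      · linarith
      · exact absurd h hcne
    rcases Nat.even_or_odd k with he | ho
    · have h1 : ((-1:ℝ))^k = 1 := he.neg_one_pow
      have h2 : ((-1:ℝ))^(k+1) = -1 := by
        rw [pow_succ, h1]; ring
      rw [h1, h2]
      have : -1 / (1 - Real.cos x) * (T x - 1) = (1 - T x) / (1 - Real.cos x) := by
        field_simp
        ring
      rw [this]
      apply div_nonneg _ (le_of_lt hcpos)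
      linarith [habs.2]
    · have h1 : ((-1:ℝ))^k = -1 := ho.neg_one_pow
      have h2 : ((-1:ℝ))^(k+1) = 1 := by
        rw [pow_succ, h1]; ring
      rw [h1, h2]
      have : 1 / (1 - Real.cos x) * (T x - (-1)) = (T x + 1) / (1 - Real.cos x) := by
        field_simp
        try ring
      rw [this]
      apply div_nonneg _ (le_of_lt hcpos)
      linarith [habs.1]
  have hge : 0 ≤ (n:ℝ)^2 - n - ∑ j, (a j)^2 := by
    rw [hreal]
    exact Finset.sum_nonneg hnonneg
  nlinarith [hge]

theorem trig_poly_bound (n : ℕ) (a : Fin n → ℝ) (hsum : ∑ j, a j = 0)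
    (T : ℝ → ℝ) (hT : ∀ θ, T θ = ∏ j, (Real.cos θ + a j * Real.sin θ))
    (hbd : ∀ θ ∈ Set.Icc (0 : ℝ) (2 * π), |T θ| ≤ 1) :
    ∑ j, (a j) ^ 2 ≤ n * ((n : ℝ) - 1) := by
  by_cases hn : n = 0
  · subst hn
    simp
  · exact trig_poly_bound' n hn a hsum T hT hbd
end
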